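/- arXiv:0808.3392 — 9 statements merged into one kernel-verified Lean document; each statement's English description precedes it below -/
import Mathlib

section
/- Let K be a commutative ring, let A, B, d ∈ K, and let G be a looped graph on n ≥ 2 vertices with two distinct vertices a and b that are adjacent and both unlooped (i.e. the Boolean adjacency matrix M of G satisfies M_{ab} = 1 and M_{aa} = M_{bb} = 0). Then [G](A,B,d) = A²·[G^{ab}−a−b](A,B,d) + A·B·[(G^{ab})^a−a−b](A,B,d) + B·[G^a−a](A,B,d). -/
open Matrix BigOperators


section RankLemmas
variable {F : Type*} [Field F]

private lemma finrank_submodule_prod {M N : Type*}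
    [AddCommGroup M] [Module F M] [AddCommGroup N] [Module F N]
    [FiniteDimensional F M] [FiniteDimensional F N]
    (p : Submodule F M) (q : Submodule F N) :
    Module.finrank F (p.prod q) = Module.finrank F p + Module.finrank F q := by
  let e : (p.prod q) ≃ₗ[F] p × q :=
    { toFun := fun x => (⟨x.1.1, x.2.1⟩, ⟨x.1.2, x.2.2⟩)
      invFun := fun x => ⟨(x.1.1, x.2.1), x.1.2, x.2.2⟩
      map_add' := fun _ _ => rfl
      map_smul' := fun _ _ => rfl
      left_inv := fun _ => rfl
      right_inv := fun _ => rfl }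
  rw [e.finrank_eq, Module.finrank_prod]

private lemma rank_fromBlocks_diag {m n : Type*} [Fintype m] [Fintype n]
    [DecidableEq m] [DecidableEq n] (A : Matrix m m F) (D : Matrix n n F) :
    (fromBlocks A 0 0 D).rank = A.rank + D.rank := by
  classical
  let e := LinearEquiv.sumArrowLequivProdArrow m n F F
  have key : (fromBlocks A 0 0 D).mulVecLin
      = e.symm.toLinearMap ∘ₗ (A.mulVecLin.prodMap D.mulVecLin) ∘ₗ e.toLinearMap := by
    apply LinearMap.ext; intro v
    funext i
    simp only [LinearMap.coe_comp, LinearEquiv.coe_coe, Function.comp_apply,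
      Matrix.mulVecLin_apply, fromBlocks_mulVec, LinearMap.prodMap_apply]
    cases i with
    | inl i =>
      simp [e, Matrix.zero_mulVec]; rfl
    | inr i =>
      simp [e, Matrix.zero_mulVec]; rfl
  have hr : LinearMap.range (A.mulVecLin.prodMap D.mulVecLin)
      = (LinearMap.range A.mulVecLin).prod (LinearMap.range D.mulVecLin) := by
    ext x
    simp only [LinearMap.mem_range, LinearMap.prodMap_apply, Submodule.mem_prod, Prod.ext_iff]
    exact ⟨fun ⟨y, h1, h2⟩ => ⟨⟨y.1, h1⟩, ⟨y.2, h2⟩⟩,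
      fun ⟨⟨y1, h1⟩, ⟨y2, h2⟩⟩ => ⟨(y1, y2), h1, h2⟩⟩
  rw [Matrix.rank, key, LinearMap.range_comp, LinearMap.range_comp, LinearEquiv.range,
    Submodule.map_top, LinearEquiv.finrank_map_eq, hr, finrank_submodule_prod]
  rfl

end RankLemmas

section RankLemmas2
variable {F : Type*} [Field F]

private lemma rank_fromBlocks_inv₂₂ {l s : Type*} [Fintype l] [Fintype s]
    [DecidableEq l] [DecidableEq s]
    (A : Matrix l l F) (B : Matrix l s F) (C : Matrix s l F) (D D' : Matrix s s F)
    (h1 : D * D' = 1) (h2 : D' * D = 1) :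
    (fromBlocks A B C D).rank = Fintype.card s + (A - B * D' * C).rank := by
  letI : Invertible D := ⟨D', h2, h1⟩
  have hD' : ⅟ D = D' := rfl
  have key := fromBlocks_eq_of_invertible₂₂ A B C D
  rw [hD'] at key
  have hdetL : IsUnit (fromBlocks (1 : Matrix l l F) (B * D') 0 1).det := by
    rw [det_fromBlocks_zero₂₁, det_one, det_one, one_mul]; exact isUnit_one
  have hdetR : IsUnit (fromBlocks (1 : Matrix l l F) 0 (D' * C) 1).det := by
    rw [det_fromBlocks_zero₁₂, det_one, det_one, one_mul]; exact isUnit_one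
  rw [key, Matrix.rank_mul_eq_left_of_isUnit_det _ _ hdetR,
    Matrix.rank_mul_eq_right_of_isUnit_det _ _ hdetL, rank_fromBlocks_diag,
    Matrix.rank_of_isUnit D ⟨⟨D, D', h1, h2⟩, rfl⟩, add_comm]

end RankLemmas2

section Pivot
variable {F : Type*} [Field F] {V : Type*} [Fintype V] [DecidableEq V]

private def eqvNe (a : V) : ({z : V // z ≠ a} ⊕ Unit) ≃ V where
  toFun := Sum.elim Subtype.val fun _ => a
  invFun z := if h : z = a then Sum.inr () else Sum.inl ⟨z, h⟩
  left_inv := by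
    rintro (⟨z, hz⟩ | ⟨⟩)
    · simp [hz]
    · simp
  right_inv z := by by_cases h : z = a <;> simp [h]

private def eqvNe2 (a b : V) (hab : a ≠ b) : ({z : V // z ≠ a ∧ z ≠ b} ⊕ Bool) ≃ V where
  toFun := Sum.elim Subtype.val fun u => cond u b a
  invFun z := if h1 : z = a then Sum.inr false else
    if h2 : z = b then Sum.inr true else Sum.inl ⟨z, h1, h2⟩
  left_inv := by
    rintro (⟨z, h1, h2⟩ | u)
    · simp [h1, h2]
    · cases u
      · simp
      · simp only [Sum.elim_inr, cond_true]
        refine (dif_neg hab.symm).trans ?_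
        simp
  right_inv z := by
    by_cases h1 : z = a
    · simp [h1]
    · by_cases h2 : z = b
      · dsimp only
        rw [dif_neg h1, dif_pos h2]
        simp [h2]
      · dsimp only
        rw [dif_neg h1, dif_neg h2]
        simp

private def eqvNeNe (a b : V) (hab : a ≠ b) :
    ({z : V // z ≠ a ∧ z ≠ b} ⊕ Unit) ≃ {z : V // z ≠ a} where
  toFun := Sum.elim (fun w => ⟨w.1, w.2.1⟩) fun _ => ⟨b, hab.symm⟩
  invFun z' := if h : z'.1 = b then Sum.inr () else Sum.inl ⟨z'.1, z'.2, h⟩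
  left_inv := by
    rintro (⟨z, h1, h2⟩ | ⟨⟩)
    · simp [h2]
    · simp
  right_inv z' := by
    by_cases h : z'.1 = b
    · simp only [dif_pos h, Sum.elim_inr]
      exact Subtype.ext h.symm
    · simp [h]

private lemma rank_pivot_one (P : Matrix V V F) (a : V) (ha : P a a = 1) :
    P.rank = 1 + (Matrix.of fun x y : {z : V // z ≠ a} => P x.1 y.1 - P x.1 a * P a y.1).rank := by
  rw [← Matrix.rank_submatrix P (eqvNe a) (eqvNe a)]
  have hsub : P.submatrix (eqvNe a) (eqvNe a) =
      fromBlocks (Matrix.of fun x y : {z : V // z ≠ a} => P x.1 y.1)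
        (Matrix.of fun (x : {z : V // z ≠ a}) (_ : Unit) => P x.1 a)
        (Matrix.of fun (_ : Unit) (y : {z : V // z ≠ a}) => P a y.1)
        1 := by
    ext i j
    rcases i with x | ⟨⟩ <;> rcases j with y | ⟨⟩ <;>
      simp [eqvNe, ha, Matrix.one_apply]
  rw [hsub, rank_fromBlocks_inv₂₂ _ _ _ 1 1 (by simp) (by simp), Matrix.mul_one]
  have hS : (Matrix.of fun x y : {z : V // z ≠ a} => P x.1 y.1) -
      (Matrix.of fun (x : {z : V // z ≠ a}) (_ : Unit) => P x.1 a) *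
      (Matrix.of fun (_ : Unit) (y : {z : V // z ≠ a}) => P a y.1) =
      Matrix.of fun x y : {z : V // z ≠ a} => P x.1 y.1 - P x.1 a * P a y.1 := by
    ext x y
    simp [Matrix.mul_apply]
  rw [hS]
  simp

private lemma rank_pivot_two (P : Matrix V V F) (a b : V) (hab : a ≠ b)
    (haa : P a a = 0) (hab1 : P a b = 1) (hba1 : P b a = 1) :
    P.rank = 2 + (Matrix.of fun x y : {z : V // z ≠ a ∧ z ≠ b} =>
      P x.1 y.1 - (P x.1 a * P b y.1 + P x.1 b * P a y.1
        - P b b * (P x.1 a * P a y.1))).rank := by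
  rw [← Matrix.rank_submatrix P (eqvNe2 a b hab) (eqvNe2 a b hab)]
  have hsub : P.submatrix (eqvNe2 a b hab) (eqvNe2 a b hab) =
      fromBlocks (Matrix.of fun x y : {z : V // z ≠ a ∧ z ≠ b} => P x.1 y.1)
        (Matrix.of fun (x : {z : V // z ≠ a ∧ z ≠ b}) (u : Bool) => P x.1 (cond u b a))
        (Matrix.of fun (u : Bool) (y : {z : V // z ≠ a ∧ z ≠ b}) => P (cond u b a) y.1)
        (Matrix.of fun (u v : Bool) => P (cond u b a) (cond v b a)) := by
    ext i j
    rcases i with x | u <;> rcases j with y | v <;> simp [eqvNe2]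
  have hDD' : (Matrix.of fun (u v : Bool) => P (cond u b a) (cond v b a)) *
      (Matrix.of fun (u v : Bool) =>
        if u then (if v then 0 else 1) else (if v then 1 else -P b b)) = 1 := by
    ext u v
    cases u <;> cases v <;>
      simp [Matrix.mul_apply, Fintype.sum_bool, haa, hab1, hba1, Matrix.one_apply] <;> ring
  have hD'D : (Matrix.of fun (u v : Bool) =>
        if u then (if v then 0 else 1) else (if v then 1 else -P b b)) *
      (Matrix.of fun (u v : Bool) => P (cond u b a) (cond v b a)) = 1 := by
    ext u v
    cases u <;> cases v <;>
      simp [Matrix.mul_apply, Fintype.sum_bool, haa, hab1, hba1, Matrix.one_apply] <;> ring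
  rw [hsub, rank_fromBlocks_inv₂₂ _ _ _ _ _ hDD' hD'D]
  have hS : (Matrix.of fun x y : {z : V // z ≠ a ∧ z ≠ b} => P x.1 y.1) -
      (Matrix.of fun (x : {z : V // z ≠ a ∧ z ≠ b}) (u : Bool) => P x.1 (cond u b a)) *
      (Matrix.of fun (u v : Bool) =>
        if u then (if v then 0 else 1) else (if v then 1 else -P b b)) *
      (Matrix.of fun (u : Bool) (y : {z : V // z ≠ a ∧ z ≠ b}) => P (cond u b a) y.1) =
      Matrix.of fun x y : {z : V // z ≠ a ∧ z ≠ b} =>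
        P x.1 y.1 - (P x.1 a * P b y.1 + P x.1 b * P a y.1
          - P b b * (P x.1 a * P a y.1)) := by
    ext x y
    simp [Matrix.mul_apply, Fintype.sum_bool]
    ring
  rw [hS]
  simp

end Pivot

section Split
variable {V : Type*} [Fintype V] [DecidableEq V]

private def splitEqv (a : V) : (V → ZMod 2) ≃ ZMod 2 × ({z : V // z ≠ a} → ZMod 2) where
  toFun f := (f a, fun j => f j.1)
  invFun p z := if h : z = a then p.1 else p.2 ⟨z, h⟩
  left_inv f := by
    funext z
    by_cases h : z = a <;> simp [h]
  right_inv p := by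
    refine Prod.ext (by simp) ?_
    funext j
    dsimp only
    rw [dif_neg j.2]

private lemma splitEqv_symm_ne (a : V) (c : ZMod 2) (g : {z : V // z ≠ a} → ZMod 2)
    (z : V) (h : z ≠ a) : (splitEqv a).symm (c, g) z = g ⟨z, h⟩ := dif_neg h

private lemma splitEqv_symm_eq (a : V) (c : ZMod 2) (g : {z : V // z ≠ a} → ZMod 2) :
    (splitEqv a).symm (c, g) a = c := dif_pos rfl

private def splitEqv2 (a b : V) (hab : a ≠ b) :
    ({z : V // z ≠ a} → ZMod 2) ≃ ZMod 2 × ({z : V // z ≠ a ∧ z ≠ b} → ZMod 2) where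
  toFun g := (g ⟨b, hab.symm⟩, fun w => g ⟨w.1, w.2.1⟩)
  invFun p z' := if h : z'.1 = b then p.1 else p.2 ⟨z'.1, z'.2, h⟩
  left_inv g := by
    funext z'
    by_cases h : z'.1 = b
    · dsimp only
      rw [dif_pos h]
      exact congrArg g (Subtype.ext h.symm)
    · dsimp only
      rw [dif_neg h]
  right_inv p := by
    refine Prod.ext (by simp) ?_
    funext w
    dsimp only
    rw [dif_neg w.2.2]

private lemma splitEqv2_symm_ne (a b : V) (hab : a ≠ b) (c : ZMod 2)
    (h : {z : V // z ≠ a ∧ z ≠ b} → ZMod 2) (z : {z : V // z ≠ a}) (hz : z.1 ≠ b) :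
    (splitEqv2 a b hab).symm (c, h) z = h ⟨z.1, z.2, hz⟩ := dif_neg hz

private lemma splitEqv2_symm_eq (a b : V) (hab : a ≠ b) (c : ZMod 2)
    (h : {z : V // z ≠ a ∧ z ≠ b} → ZMod 2) (z : {z : V // z ≠ a}) (hz : z.1 = b) :
    (splitEqv2 a b hab).symm (c, h) z = c := dif_pos hz

private lemma card_support_split {α β : Type*} [Fintype α] [Fintype β]
    [DecidableEq α] [DecidableEq β] (e : β ⊕ Unit ≃ α) (f : α → ZMod 2) :
    Fintype.card {i : α // f i ≠ 0}
      = Fintype.card {j : β // f (e (Sum.inl j)) ≠ 0}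
        + if f (e (Sum.inr ())) ≠ 0 then 1 else 0 := by
  rw [Fintype.card_subtype, Fintype.card_subtype, Finset.card_filter, Finset.card_filter,
    ← Equiv.sum_comp e (fun i => if f i ≠ 0 then 1 else 0), Fintype.sum_sum_type]
  simp

private lemma card_ne (a : V) : Fintype.card {z : V // z ≠ a} = Fintype.card V - 1 := by
  have h := Fintype.card_congr (eqvNe a)
  rw [Fintype.card_sum] at h
  simp only [Fintype.card_unit] at h
  omega

private lemma card_ne2 (a b : V) (hab : a ≠ b) :
    Fintype.card {z : V // z ≠ a ∧ z ≠ b} = Fintype.card V - 2 := by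
  have h := Fintype.card_congr (eqvNe2 a b hab)
  rw [Fintype.card_sum] at h
  simp only [Fintype.card_bool] at h
  omega

private lemma sum_zmod2 {M : Type*} [AddCommMonoid M] (h : ZMod 2 → M) :
    ∑ c : ZMod 2, h c = h 0 + h 1 := by
  rw [show (Finset.univ : Finset (ZMod 2)) = {0, 1} from by decide,
    Finset.sum_insert (by decide), Finset.sum_singleton]

end Split

section Ranks
variable {V : Type*} [Fintype V] [DecidableEq V]

private lemma rank_diag_split (a : V) (c : ZMod 2) (g : {z : V // z ≠ a} → ZMod 2) :
    (Matrix.diagonal ((splitEqv a).symm (c, g))).rank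
      = (Matrix.diagonal g).rank + if c ≠ 0 then 1 else 0 := by
  rw [Matrix.rank_diagonal, Matrix.rank_diagonal,
    card_support_split (eqvNe a) ((splitEqv a).symm (c, g))]
  congr 1
  · apply Fintype.card_congr
    apply Equiv.subtypeEquivRight
    intro j
    rw [show (eqvNe a) (Sum.inl j) = j.1 from rfl, splitEqv_symm_ne a c g j.1 j.2,
      Subtype.coe_eta]
  · rw [show (eqvNe a) (Sum.inr ()) = a from rfl, splitEqv_symm_eq]

private lemma rank_diag_split2 (a b : V) (hab : a ≠ b) (c : ZMod 2)
    (h : {z : V // z ≠ a ∧ z ≠ b} → ZMod 2) :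
    (Matrix.diagonal ((splitEqv2 a b hab).symm (c, h))).rank
      = (Matrix.diagonal h).rank + if c ≠ 0 then 1 else 0 := by
  rw [Matrix.rank_diagonal, Matrix.rank_diagonal,
    card_support_split (eqvNeNe a b hab) ((splitEqv2 a b hab).symm (c, h))]
  congr 1
  · apply Fintype.card_congr
    apply Equiv.subtypeEquivRight
    intro w
    rw [show (eqvNeNe a b hab) (Sum.inl w) = ⟨w.1, w.2.1⟩ from rfl,
      splitEqv2_symm_ne a b hab c h ⟨w.1, w.2.1⟩ w.2.2]
  · rw [show (eqvNeNe a b hab) (Sum.inr ()) = ⟨b, hab.symm⟩ from rfl,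
      splitEqv2_symm_eq a b hab c h ⟨b, hab.symm⟩ rfl]

private lemma rank_M_diag_one (M : Matrix V V (ZMod 2)) (hsym : M.IsSymm) (a : V)
    (hMaa : M a a = 0) (g : {z : V // z ≠ a} → ZMod 2) :
    (M + Matrix.diagonal ((splitEqv a).symm (1, g))).rank
      = 1 + ((Matrix.of fun x y : {z : V // z ≠ a} => M x.1 y.1 + M x.1 a * M y.1 a)
          + Matrix.diagonal g).rank := by
  set f := (splitEqv a).symm (1, g) with hf
  have hPaa : (M + Matrix.diagonal f) a a = 1 := by
    rw [Matrix.add_apply, Matrix.diagonal_apply_eq, hf, splitEqv_symm_eq, hMaa, zero_add]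
  rw [rank_pivot_one (M + Matrix.diagonal f) a hPaa]
  congr 1
  apply congrArg Matrix.rank
  ext x y
  simp only [Matrix.of_apply, Matrix.add_apply]
  rw [Matrix.diagonal_apply_ne f x.2, Matrix.diagonal_apply_ne f (Ne.symm y.2),
    hsym.apply y.1 a, add_zero, add_zero, CharTwo.sub_eq_add, Matrix.diagonal_apply,
    Matrix.diagonal_apply, hf, splitEqv_symm_ne a 1 g x.1 x.2, Subtype.coe_eta]
  by_cases hxy : x = y
  · rw [if_pos (congrArg Subtype.val hxy), if_pos hxy]
    ring
  · rw [if_neg (fun hc => hxy (Subtype.ext hc)), if_neg hxy]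
    ring

private lemma rank_M_diag_two (M : Matrix V V (ZMod 2)) (hsym : M.IsSymm) (a b : V)
    (hab : a ≠ b) (hMab : M a b = 1) (hMaa : M a a = 0) (hMbb : M b b = 0)
    (c : ZMod 2) (h : {z : V // z ≠ a ∧ z ≠ b} → ZMod 2) :
    (M + Matrix.diagonal ((splitEqv a).symm (0, (splitEqv2 a b hab).symm (c, h)))).rank
      = 2 + ((Matrix.of fun x y : {z : V // z ≠ a ∧ z ≠ b} =>
          M x.1 y.1 + M x.1 a * M y.1 b + M x.1 b * M y.1 a + c * (M x.1 a * M y.1 a))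
          + Matrix.diagonal h).rank := by
  set f := (splitEqv a).symm (0, (splitEqv2 a b hab).symm (c, h)) with hf
  have hfa : f a = 0 := by rw [hf, splitEqv_symm_eq]
  have hfb : f b = c := by
    rw [hf, splitEqv_symm_ne a _ _ b hab.symm,
      splitEqv2_symm_eq a b hab c h ⟨b, hab.symm⟩ rfl]
  have hfz : ∀ (z : V) (h1 : z ≠ a) (h2 : z ≠ b), f z = h ⟨z, h1, h2⟩ := by
    intro z h1 h2
    rw [hf, splitEqv_symm_ne a _ _ z h1, splitEqv2_symm_ne a b hab c h ⟨z, h1⟩ h2]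
  have hPaa : (M + Matrix.diagonal f) a a = 0 := by
    rw [Matrix.add_apply, Matrix.diagonal_apply_eq, hfa, hMaa, add_zero]
  have hPab : (M + Matrix.diagonal f) a b = 1 := by
    rw [Matrix.add_apply, Matrix.diagonal_apply_ne _ hab, hMab, add_zero]
  have hPba : (M + Matrix.diagonal f) b a = 1 := by
    rw [Matrix.add_apply, Matrix.diagonal_apply_ne _ hab.symm, hsym.apply, hMab, add_zero]
  have hPbb : (M + Matrix.diagonal f) b b = c := by
    rw [Matrix.add_apply, Matrix.diagonal_apply_eq, hfb, hMbb, zero_add]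
  rw [rank_pivot_two (M + Matrix.diagonal f) a b hab hPaa hPab hPba]
  congr 1
  apply congrArg Matrix.rank
  ext x y
  simp only [Matrix.of_apply, Matrix.add_apply]
  rw [Matrix.diagonal_apply_ne f x.2.1, Matrix.diagonal_apply_ne f x.2.2,
    Matrix.diagonal_apply_ne f (Ne.symm y.2.1), Matrix.diagonal_apply_ne f (Ne.symm y.2.2),
    Matrix.diagonal_apply_eq f b, hfb, hsym.apply y.1 a, hsym.apply y.1 b, hMbb,
    add_zero, add_zero, add_zero, add_zero, zero_add,
    CharTwo.sub_eq_add, CharTwo.sub_eq_add, Matrix.diagonal_apply, Matrix.diagonal_apply,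
    hfz x.1 x.2.1 x.2.2]
  by_cases hxy : x = y
  · rw [if_pos (congrArg Subtype.val hxy), if_pos hxy, Subtype.coe_eta]
    ring
  · rw [if_neg (fun hc => hxy (Subtype.ext hc)), if_neg hxy]
    ring

end Ranks

/-- The graph bracket polynomial of a looped graph specified by its Boolean
adjacency matrix `M` over `GF(2)`:
`[G](A,B,d) = ∑_Δ A^{ν(Δ)} B^{ρ(Δ)} d^{ν(M+Δ)}`, the sum over all diagonal
matrices `Δ` over `GF(2)` (encoded by their diagonal functions `f`). -/
noncomputable def gBracket {V : Type*} [Fintype V] [DecidableEq V] {K : Type*} [CommRing K]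
    (M : Matrix V V (ZMod 2)) (A B d : K) : K :=
  ∑ f : V → ZMod 2,
    A ^ (Fintype.card V - (Matrix.diagonal f).rank)
      * B ^ (Matrix.diagonal f).rank
      * d ^ (Fintype.card V - (M + Matrix.diagonal f).rank)

/-- Theorem 1(ii): pivot reduction formula for the graph bracket.
If `a ≠ b` are adjacent unlooped vertices then
`[G] = A²[G^{ab}-a-b] + AB[(G^{ab})ᵃ-a-b] + B[Gᵃ-a]`. -/
theorem graphBracket_pivot_reduction {K : Type*} [CommRing K] (A B d : K)
    (n : ℕ) (hn : 2 ≤ n) (M : Matrix (Fin n) (Fin n) (ZMod 2)) (hsym : M.IsSymm)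
    (a b : Fin n) (hab : a ≠ b) (hMab : M a b = 1) (hMaa : M a a = 0) (hMbb : M b b = 0) :
    gBracket M A B d =
      A ^ 2 *
        gBracket (Matrix.of fun x y : {z : Fin n // z ≠ a ∧ z ≠ b} =>
          M x.1 y.1 + M x.1 a * M y.1 b + M x.1 b * M y.1 a) A B d
      + A * B *
        gBracket (Matrix.of fun x y : {z : Fin n // z ≠ a ∧ z ≠ b} =>
          M x.1 y.1 + M x.1 a * M y.1 b + M x.1 b * M y.1 a + M x.1 a * M y.1 a) A B d
      + B *
        gBracket (Matrix.of fun x y : {z : Fin n // z ≠ a} =>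
          M x.1 y.1 + M x.1 a * M y.1 a) A B d := by
  
  classical
  have hcard : Fintype.card (Fin n) = n := Fintype.card_fin n
  have hcard1 : Fintype.card {z : Fin n // z ≠ a} = n - 1 := by rw [card_ne a, hcard]
  have hcard2 : Fintype.card {z : Fin n // z ≠ a ∧ z ≠ b} = n - 2 := by
    rw [card_ne2 a b hab, hcard]
  set Tf : (Fin n → ZMod 2) → K := fun f =>
    A ^ (Fintype.card (Fin n) - (Matrix.diagonal f).rank)
      * B ^ (Matrix.diagonal f).rank
      * d ^ (Fintype.card (Fin n) - (M + Matrix.diagonal f).rank) with hTf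
  -- branch c = 1 : single pivot at a
  have hS1 : (∑ g : {z : Fin n // z ≠ a} → ZMod 2, Tf ((splitEqv a).symm (1, g)))
      = B * gBracket (Matrix.of fun x y : {z : Fin n // z ≠ a} =>
          M x.1 y.1 + M x.1 a * M y.1 a) A B d := by
    rw [gBracket, Finset.mul_sum]
    apply Finset.sum_congr rfl
    intro g _
    rw [hTf]
    dsimp only
    rw [rank_diag_split a 1 g, rank_M_diag_one M hsym a hMaa g,
      if_pos (one_ne_zero : (1 : ZMod 2) ≠ 0), hcard, hcard1]
    generalize (Matrix.diagonal g).rank = r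
    generalize ((Matrix.of fun x y : {z : Fin n // z ≠ a} =>
      M x.1 y.1 + M x.1 a * M y.1 a) + Matrix.diagonal g).rank = s
    rw [show n - (r + 1) = n - 1 - r by omega, show n - (1 + s) = n - 1 - s by omega, pow_succ]
    ring
  -- branch c = 0 : double pivot at a, b
  have hbound : ∀ h : {z : Fin n // z ≠ a ∧ z ≠ b} → ZMod 2,
      (Matrix.diagonal h).rank ≤ n - 2 := by
    intro h
    have := Matrix.rank_le_card_width (Matrix.diagonal h)
    rwa [hcard2] at this
  have hS00 : (∑ h : {z : Fin n // z ≠ a ∧ z ≠ b} → ZMod 2,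
        Tf ((splitEqv a).symm (0, (splitEqv2 a b hab).symm (0, h))))
      = A ^ 2 * gBracket (Matrix.of fun x y : {z : Fin n // z ≠ a ∧ z ≠ b} =>
          M x.1 y.1 + M x.1 a * M y.1 b + M x.1 b * M y.1 a) A B d := by
    rw [gBracket, Finset.mul_sum]
    apply Finset.sum_congr rfl
    intro h _
    rw [hTf]
    dsimp only
    have hmat : (Matrix.of fun x y : {z : Fin n // z ≠ a ∧ z ≠ b} =>
        M x.1 y.1 + M x.1 a * M y.1 b + M x.1 b * M y.1 a
          + (0 : ZMod 2) * (M x.1 a * M y.1 a))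
        = Matrix.of fun x y : {z : Fin n // z ≠ a ∧ z ≠ b} =>
          M x.1 y.1 + M x.1 a * M y.1 b + M x.1 b * M y.1 a := by
      ext x y
      simp
    rw [rank_diag_split a 0 _, rank_diag_split2 a b hab 0 h,
      rank_M_diag_two M hsym a b hab hMab hMaa hMbb 0 h, hmat,
      if_neg (by simp : ¬(0 : ZMod 2) ≠ 0), add_zero, add_zero, hcard, hcard2]
    have hr := hbound h
    generalize hR : (Matrix.diagonal h).rank = r at hr
    generalize ((Matrix.of fun x y : {z : Fin n // z ≠ a ∧ z ≠ b} =>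
      M x.1 y.1 + M x.1 a * M y.1 b + M x.1 b * M y.1 a) + Matrix.diagonal h).rank = s
    rw [show n - r = 2 + (n - 2 - r) by omega, show n - (2 + s) = n - 2 - s by omega, pow_add]
    ring
  have hS01 : (∑ h : {z : Fin n // z ≠ a ∧ z ≠ b} → ZMod 2,
        Tf ((splitEqv a).symm (0, (splitEqv2 a b hab).symm (1, h))))
      = A * B * gBracket (Matrix.of fun x y : {z : Fin n // z ≠ a ∧ z ≠ b} =>
          M x.1 y.1 + M x.1 a * M y.1 b + M x.1 b * M y.1 a + M x.1 a * M y.1 a) A B d := by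
    rw [gBracket, Finset.mul_sum]
    apply Finset.sum_congr rfl
    intro h _
    rw [hTf]
    dsimp only
    have hmat : (Matrix.of fun x y : {z : Fin n // z ≠ a ∧ z ≠ b} =>
        M x.1 y.1 + M x.1 a * M y.1 b + M x.1 b * M y.1 a
          + (1 : ZMod 2) * (M x.1 a * M y.1 a))
        = Matrix.of fun x y : {z : Fin n // z ≠ a ∧ z ≠ b} =>
          M x.1 y.1 + M x.1 a * M y.1 b + M x.1 b * M y.1 a + M x.1 a * M y.1 a := by
      ext x y
      simp
    rw [rank_diag_split a 0 _, rank_diag_split2 a b hab 1 h,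
      rank_M_diag_two M hsym a b hab hMab hMaa hMbb 1 h, hmat,
      if_neg (by simp : ¬(0 : ZMod 2) ≠ 0), add_zero,
      if_pos (one_ne_zero : (1 : ZMod 2) ≠ 0), hcard, hcard2]
    have hr := hbound h
    generalize hR : (Matrix.diagonal h).rank = r at hr
    generalize ((Matrix.of fun x y : {z : Fin n // z ≠ a ∧ z ≠ b} =>
      M x.1 y.1 + M x.1 a * M y.1 b + M x.1 b * M y.1 a + M x.1 a * M y.1 a)
        + Matrix.diagonal h).rank = s
    rw [show n - (r + 1) = 1 + (n - 2 - r) by omega,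
      show n - (2 + s) = n - 2 - s by omega, pow_add, pow_succ]
    ring
  have hS0 : (∑ g : {z : Fin n // z ≠ a} → ZMod 2, Tf ((splitEqv a).symm (0, g)))
      = A ^ 2 * gBracket (Matrix.of fun x y : {z : Fin n // z ≠ a ∧ z ≠ b} =>
          M x.1 y.1 + M x.1 a * M y.1 b + M x.1 b * M y.1 a) A B d
        + A * B * gBracket (Matrix.of fun x y : {z : Fin n // z ≠ a ∧ z ≠ b} =>
          M x.1 y.1 + M x.1 a * M y.1 b + M x.1 b * M y.1 a + M x.1 a * M y.1 a) A B d := by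
    calc (∑ g : {z : Fin n // z ≠ a} → ZMod 2, Tf ((splitEqv a).symm (0, g)))
        = ∑ q : ZMod 2 × ({z : Fin n // z ≠ a ∧ z ≠ b} → ZMod 2),
            Tf ((splitEqv a).symm (0, (splitEqv2 a b hab).symm q)) :=
          (Equiv.sum_comp (splitEqv2 a b hab).symm
            (fun g => Tf ((splitEqv a).symm (0, g)))).symm
      _ = ∑ c : ZMod 2, ∑ h : {z : Fin n // z ≠ a ∧ z ≠ b} → ZMod 2,
            Tf ((splitEqv a).symm (0, (splitEqv2 a b hab).symm (c, h))) :=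
          Fintype.sum_prod_type _
      _ = _ := by rw [sum_zmod2, hS00, hS01]
  calc gBracket M A B d
      = ∑ p : ZMod 2 × ({z : Fin n // z ≠ a} → ZMod 2), Tf ((splitEqv a).symm p) :=
        (Equiv.sum_comp (splitEqv a).symm Tf).symm
    _ = ∑ c : ZMod 2, ∑ g : {z : Fin n // z ≠ a} → ZMod 2, Tf ((splitEqv a).symm (c, g)) :=
        Fintype.sum_prod_type _
    _ = _ := by
        rw [sum_zmod2, hS0, hS1]
end

section
/- Let K be a commutative ring and A, B, d ∈ K. If the looped graph G is the union of two disjoint subgraphs G₁ and G₂ (i.e. its Boolean adjacency matrix is the block-diagonal sum of the Boolean adjacency matrices of G₁ and G₂), then [G](A,B,d) = [G₁](A,B,d) · [G₂](A,B,d). -/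
open Matrix BigOperators

section Aux

variable {F : Type*} [Field F]

lemma range_prodMap' {M M₂ M₃ M₄ : Type*} [AddCommGroup M] [AddCommGroup M₂]
    [AddCommGroup M₃] [AddCommGroup M₄] [Module F M] [Module F M₂] [Module F M₃] [Module F M₄]
    (f : M →ₗ[F] M₂) (g : M₃ →ₗ[F] M₄) :
    LinearMap.range (f.prodMap g) = (LinearMap.range f).prod (LinearMap.range g) := by
  ext ⟨x, y⟩
  simp only [LinearMap.mem_range, Submodule.mem_prod, Prod.ext_iff, LinearMap.prodMap_apply,
    Prod.exists]
  constructor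
  · rintro ⟨a, b, h1, h2⟩
    exact ⟨⟨a, h1⟩, ⟨b, h2⟩⟩
  · rintro ⟨⟨a, h1⟩, ⟨b, h2⟩⟩
    exact ⟨a, b, h1, h2⟩

/-- the submodule `p.prod q` is linearly equivalent to `p × q`. -/
def prodSubEquiv {M M' : Type*} [AddCommGroup M] [AddCommGroup M'] [Module F M] [Module F M']
    (p : Submodule F M) (q : Submodule F M') :
    (p.prod q) ≃ₗ[F] p × q where
  toFun x := (⟨x.1.1, x.2.1⟩, ⟨x.1.2, x.2.2⟩)
  invFun x := ⟨(x.1.1, x.2.1), ⟨x.1.2, x.2.2⟩⟩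
  left_inv x := rfl
  right_inv x := rfl
  map_add' x y := rfl
  map_smul' c x := rfl

lemma finrank_prod_sub {M M' : Type*} [AddCommGroup M] [AddCommGroup M'] [Module F M]
    [Module F M'] (p : Submodule F M) (q : Submodule F M')
    [Module.Finite F p] [Module.Finite F q] :
    Module.finrank F (p.prod q) = Module.finrank F p + Module.finrank F q := by
  rw [(prodSubEquiv p q).finrank_eq, Module.finrank_prod]

lemma rank_fromBlocks_zero {a b : Type*} [Fintype a] [Fintype b] [DecidableEq a] [DecidableEq b]
    (A : Matrix a a F) (B : Matrix b b F) :
    (Matrix.fromBlocks A 0 0 B).rank = A.rank + B.rank := by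
  classical
  let e : ((a ⊕ b) → F) ≃ₗ[F] (a → F) × (b → F) :=
    LinearEquiv.sumArrowLequivProdArrow a b F F
  have hcomp : (Matrix.fromBlocks A 0 0 B).mulVecLin =
      (e.symm.toLinearMap ∘ₗ (A.mulVecLin.prodMap B.mulVecLin)) ∘ₗ e.toLinearMap := by
    apply LinearMap.ext; intro v; funext i
    cases i <;>
      simp [e, Matrix.fromBlocks_mulVec, LinearEquiv.sumArrowLequivProdArrow,
        Equiv.sumArrowEquivProdArrow, Matrix.mulVecLin_apply]
  unfold Matrix.rank
  rw [hcomp, LinearMap.range_comp, LinearEquiv.range, Submodule.map_top, LinearMap.range_comp,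
    range_prodMap']
  rw [LinearEquiv.finrank_map_eq, finrank_prod_sub]

lemma rank_le_card_sq {a : Type*} [Fintype a] (A : Matrix a a F) :
    A.rank ≤ Fintype.card a :=
  A.rank_le_card_width

end Aux

/-- Proposition 1: the graph bracket is multiplicative over disjoint unions:
if `G` is the disjoint union of `G₁` and `G₂` then `[G] = [G₁]·[G₂]`. -/
theorem graphBracket_disjoint_union {K : Type*} [CommRing K] (A B d : K)
    {n m : ℕ} (M₁ : Matrix (Fin n) (Fin n) (ZMod 2)) (hsym₁ : M₁.IsSymm)
    (M₂ : Matrix (Fin m) (Fin m) (ZMod 2)) (hsym₂ : M₂.IsSymm) :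
    gBracket (Matrix.fromBlocks M₁ 0 0 M₂) A B d =
      gBracket M₁ A B d * gBracket M₂ A B d := by
  classical
  unfold gBracket
  have key : ∀ f : Fin n ⊕ Fin m → ZMod 2,
      A ^ (Fintype.card (Fin n ⊕ Fin m) - (Matrix.diagonal f).rank)
        * B ^ (Matrix.diagonal f).rank
        * d ^ (Fintype.card (Fin n ⊕ Fin m) - (Matrix.fromBlocks M₁ 0 0 M₂ + Matrix.diagonal f).rank)
      = (A ^ (n - (Matrix.diagonal (f ∘ Sum.inl)).rank) * B ^ (Matrix.diagonal (f ∘ Sum.inl)).rank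
          * d ^ (n - (M₁ + Matrix.diagonal (f ∘ Sum.inl)).rank))
        * (A ^ (m - (Matrix.diagonal (f ∘ Sum.inr)).rank) * B ^ (Matrix.diagonal (f ∘ Sum.inr)).rank
          * d ^ (m - (M₂ + Matrix.diagonal (f ∘ Sum.inr)).rank)) := by
    intro f
    set f₁ : Fin n → ZMod 2 := f ∘ Sum.inl
    set f₂ : Fin m → ZMod 2 := f ∘ Sum.inr
    have hf : f = Sum.elim f₁ f₂ := by funext x; cases x <;> rfl
    have hdiag : (Matrix.diagonal f) = Matrix.fromBlocks (Matrix.diagonal f₁) 0 0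
        (Matrix.diagonal f₂) := by rw [hf, Matrix.fromBlocks_diagonal]
    have hsum : (Matrix.fromBlocks M₁ 0 0 M₂ + Matrix.diagonal f) =
        Matrix.fromBlocks (M₁ + Matrix.diagonal f₁) 0 0 (M₂ + Matrix.diagonal f₂) := by
      rw [hdiag, Matrix.fromBlocks_add]; simp
    have hrd : (Matrix.diagonal f).rank =
        (Matrix.diagonal f₁).rank + (Matrix.diagonal f₂).rank := by
      rw [hdiag, rank_fromBlocks_zero]
    have hrs : (Matrix.fromBlocks M₁ 0 0 M₂ + Matrix.diagonal f).rank =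
        (M₁ + Matrix.diagonal f₁).rank + (M₂ + Matrix.diagonal f₂).rank := by
      rw [hsum, rank_fromBlocks_zero]
    have hcard : Fintype.card (Fin n ⊕ Fin m) = n + m := by simp
    have h1 : (Matrix.diagonal f₁).rank ≤ n := by
      simpa using rank_le_card_sq (Matrix.diagonal f₁)
    have h2 : (Matrix.diagonal f₂).rank ≤ m := by
      simpa using rank_le_card_sq (Matrix.diagonal f₂)
    have h3 : (M₁ + Matrix.diagonal f₁).rank ≤ n := by
      simpa using rank_le_card_sq (M₁ + Matrix.diagonal f₁)
    have h4 : (M₂ + Matrix.diagonal f₂).rank ≤ m := by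
      simpa using rank_le_card_sq (M₂ + Matrix.diagonal f₂)
    rw [hrd, hrs, hcard,
      show n + m - ((Matrix.diagonal f₁).rank + (Matrix.diagonal f₂).rank)
        = (n - (Matrix.diagonal f₁).rank) + (m - (Matrix.diagonal f₂).rank) by omega,
      show n + m - ((M₁ + Matrix.diagonal f₁).rank + (M₂ + Matrix.diagonal f₂).rank)
        = (n - (M₁ + Matrix.diagonal f₁).rank) + (m - (M₂ + Matrix.diagonal f₂).rank) by omega,
      pow_add, pow_add, pow_add]
    ring
  calc (∑ f : Fin n ⊕ Fin m → ZMod 2,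
        A ^ (Fintype.card (Fin n ⊕ Fin m) - (Matrix.diagonal f).rank)
          * B ^ (Matrix.diagonal f).rank
          * d ^ (Fintype.card (Fin n ⊕ Fin m) - (Matrix.fromBlocks M₁ 0 0 M₂ + Matrix.diagonal f).rank))
      = ∑ p : (Fin n → ZMod 2) × (Fin m → ZMod 2),
          (A ^ (n - (Matrix.diagonal p.1).rank) * B ^ (Matrix.diagonal p.1).rank
            * d ^ (n - (M₁ + Matrix.diagonal p.1).rank))
          * (A ^ (m - (Matrix.diagonal p.2).rank) * B ^ (Matrix.diagonal p.2).rank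
            * d ^ (m - (M₂ + Matrix.diagonal p.2).rank)) := by
        apply Fintype.sum_equiv (Equiv.sumArrowEquivProdArrow (Fin n) (Fin m) (ZMod 2))
        intro f
        exact key f
    _ = _ := by
        rw [Fintype.sum_prod_type, Finset.sum_mul_sum]
        simp
end

section
/- Let K be a commutative ring and A, B, d ∈ K. Let G be a looped graph with Boolean adjacency matrix M and let G+I be the looped graph with Boolean adjacency matrix M+I, obtained by toggling the loop at every vertex of G (G+I has a loop at a vertex precisely when G does not). Then [G+I](A,B,d) = [G](B,A,d). -/
open Matrix BigOperators

lemma rank_diagonal_add_one {n : ℕ} (f : Fin n → ZMod 2) :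
    (Matrix.diagonal (f + 1)).rank = n - (Matrix.diagonal f).rank := by
  rw [Matrix.rank_diagonal, Matrix.rank_diagonal]
  have h1 : Fintype.card {i // f i ≠ 0} + Fintype.card {i // (f + 1) i ≠ 0}
      = n := by
    rw [Fintype.card_subtype, Fintype.card_subtype]
    rw [← Finset.card_union_of_disjoint]
    · have : (Finset.filter (fun i => f i ≠ 0) Finset.univ ∪
        Finset.filter (fun i => (f + 1) i ≠ 0) Finset.univ) = Finset.univ := by
        ext i
        simp only [Finset.mem_union, Finset.mem_filter, Finset.mem_univ, true_and,
          Pi.add_apply, Pi.one_apply, iff_true]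
        by_cases h : f i = 0
        · right; rw [h]; decide
        · left; exact h
      rw [this, Finset.card_univ, Fintype.card_fin]
    · rw [Finset.disjoint_filter]
      intro i _ h1 h2
      apply h2
      have : f i = 1 := by
        revert h1; generalize f i = x; revert x; decide
      simp [Pi.add_apply, this]
      decide
  omega

lemma rank_diagonal_le {n : ℕ} (f : Fin n → ZMod 2) :
    (Matrix.diagonal f).rank ≤ n := by
  have := Matrix.rank_le_card_width (Matrix.diagonal f)
  simpa using this

/-- Proposition 2: toggling all loops swaps the roles of `A` and `B`:
`[G + I](A,B,d) = [G](B,A,d)`. -/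
theorem graphBracket_loop_toggle {K : Type*} [CommRing K] (A B d : K)
    {n : ℕ} (M : Matrix (Fin n) (Fin n) (ZMod 2)) (hsym : M.IsSymm) :
    gBracket (M + 1) A B d = gBracket M B A d := by
  unfold gBracket
  rw [← (Equiv.addRight (1 : Fin n → ZMod 2)).sum_comp]
  apply Finset.sum_congr rfl
  intro f _
  have hM : M + 1 + Matrix.diagonal (f + 1) = M + Matrix.diagonal f := by
    ext i j
    by_cases h : i = j
    · subst h
      simp only [Matrix.add_apply, Matrix.one_apply_eq, Matrix.diagonal_apply_eq,
        Pi.add_apply, Pi.one_apply]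
      have : M i i + 1 + (f i + 1) = M i i + f i + (1 + 1) := by ring
      rw [this, show (1 : ZMod 2) + 1 = 0 from by decide, add_zero]
    · simp [Matrix.add_apply, Matrix.one_apply_ne h, Matrix.diagonal_apply_ne _ h]
  have hr : (Matrix.diagonal (f + 1)).rank = n - (Matrix.diagonal f).rank :=
    rank_diagonal_add_one f
  have hle := rank_diagonal_le f
  simp only [Equiv.coe_addRight, Fintype.card_fin, hM]
  rw [hr, Nat.sub_sub_self hle]
  ring
  · exact fun x _ => Finset.mem_coe.mpr (Finset.mem_univ x)
end

section
/- For every looped graph G on n vertices, the reduced graph bracket satisfies ⟨G⟩(1) = (−1)^n; equivalently, ∑_Δ (−2)^{ν(M+Δ)} = (−1)^n, where the sum ranges over all 2^n diagonal n×n matrices Δ over GF(2). (This is the identity underlying V_G(1) = 1.) -/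
open Matrix BigOperators

section Aux
open Matrix Module LinearMap

namespace GBR
variable {m : Type*} [Fintype m] [DecidableEq m]

lemma zmod2_cases : ∀ a : ZMod 2, a = 0 ∨ a = 1 := by decide
lemma zmod2_add_self (a : ZMod 2) : a + a = 0 := by revert a; decide
lemma zmod2_eq_of_add_eq_zero : ∀ a b : ZMod 2, a + b = 0 → a = b := by decide
lemma zmod2_ne_zero : ∀ a : ZMod 2, a ≠ 0 → a = 1 := by decide
lemma zmod2_ne_one : ∀ a : ZMod 2, a ≠ 1 → a = 0 := by decide

lemma fun_add_self {α : Type*} (x : α → ZMod 2) : x + x = 0 := by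
  ext i; exact zmod2_add_self _

lemma add_add_cancel {α : Type*} (x y : α → ZMod 2) : x + y + y = x := by
  rw [add_assoc, fun_add_self, add_zero]


lemma rank_add_ker {n : Type*} [Fintype n] (A : Matrix m n (ZMod 2)) :
    A.rank + Module.finrank (ZMod 2) (LinearMap.ker A.mulVecLin) = Fintype.card n := by
  have h := LinearMap.finrank_range_add_finrank_ker A.mulVecLin
  rw [Module.finrank_pi] at h
  exact h

lemma mem_range_of_orth (A : Matrix m m (ZMod 2)) (hA : A.IsSymm) (b : m → ZMod 2)
    (h : ∀ z, A.mulVec z = 0 → b ⬝ᵥ z = 0) :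
    ∃ x, A.mulVec x = b := by
  classical
  set B : Matrix (m ⊕ Unit) m (ZMod 2) := Matrix.of (Sum.elim A fun _ => b) with hB
  have hBmul : ∀ z, B.mulVec z = Sum.elim (A.mulVec z) (fun _ => b ⬝ᵥ z) := by
    intro z; ext i; cases i <;> rfl
  have hker : LinearMap.ker B.mulVecLin = LinearMap.ker A.mulVecLin := by
    ext z
    simp only [LinearMap.mem_ker, mulVecLin_apply, hBmul]
    constructor
    · intro hz
      ext i
      have := congrFun hz (Sum.inl i)
      simpa using this
    · intro hz
      ext i
      cases i with
      | inl i => simpa using congrFun hz i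
      | inr u => simpa using h z hz
  have hrank : B.rank = A.rank := by
    have h1 := rank_add_ker A
    have h2 := rank_add_ker B
    rw [hker] at h2
    omega
  -- range of Bᵀ
  have hle : LinearMap.range A.mulVecLin ⊔
      Submodule.span (ZMod 2) {b} ≤ LinearMap.range Bᵀ.mulVecLin := by
    apply sup_le
    · rintro _ ⟨y, rfl⟩
      refine ⟨Sum.elim y 0, ?_⟩
      rw [mulVecLin_apply, mulVec_transpose]
      ext j
      simp only [vecMul, dotProduct, mulVec, hB, Matrix.of_apply, Fintype.sum_sum_type,
        Sum.elim_inl, Sum.elim_inr, Pi.zero_apply, zero_mul, Finset.sum_const,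
        Finset.univ_unique, smul_eq_mul, mul_zero, add_zero, smul_zero]
      exact Finset.sum_congr rfl fun i _ => by show y i * A i j = A j i * y i; rw [hA.apply i j, mul_comm]
    · rw [Submodule.span_singleton_le_iff_mem]
      refine ⟨Sum.elim 0 1, ?_⟩
      rw [mulVecLin_apply, mulVec_transpose]
      ext j
      simp [vecMul, dotProduct, hB]; rfl
  have hfin : Module.finrank (ZMod 2) (LinearMap.range Bᵀ.mulVecLin) ≤
      Module.finrank (ZMod 2) (LinearMap.range A.mulVecLin) := by
    have : Bᵀ.rank = A.rank := by rw [Matrix.rank_transpose]; exact hrank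
    exact le_of_eq this
  have heq : LinearMap.range A.mulVecLin =
      LinearMap.range A.mulVecLin ⊔ Submodule.span (ZMod 2) {b} :=
    Submodule.eq_of_le_of_finrank_le le_sup_left
      (le_trans (Submodule.finrank_mono hle) hfin)
  have : b ∈ LinearMap.range A.mulVecLin := by
    rw [heq]
    exact Submodule.mem_sup_right (Submodule.mem_span_singleton_self b)
  obtain ⟨x, hx⟩ := this
  exact ⟨x, hx⟩

def NB (A : Matrix m m (ZMod 2)) (b : m → ZMod 2) (c : ZMod 2) :
    Matrix (m ⊕ Unit) (m ⊕ Unit) (ZMod 2) :=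
  Matrix.fromBlocks A (Matrix.replicateCol Unit b) (Matrix.replicateRow Unit b) (Matrix.of fun _ _ => c)

lemma NB_mulVec_eq_zero {A : Matrix m m (ZMod 2)} {b : m → ZMod 2} {c : ZMod 2}
    (v : m ⊕ Unit → ZMod 2) :
    (NB A b c).mulVec v = 0 ↔
      A.mulVec (v ∘ Sum.inl) + v (Sum.inr ()) • b = 0 ∧
        b ⬝ᵥ (v ∘ Sum.inl) + c * v (Sum.inr ()) = 0 := by
  rw [NB, fromBlocks_mulVec]
  have h1 : Matrix.replicateCol Unit b *ᵥ (v ∘ Sum.inr) = v (Sum.inr ()) • b := by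
    ext i
    simp [Matrix.mulVec, dotProduct, Matrix.replicateCol, mul_comm]
  have h2 : Matrix.replicateRow Unit b *ᵥ (v ∘ Sum.inl) = fun _ => b ⬝ᵥ (v ∘ Sum.inl) := by
    ext u
    simp [Matrix.mulVec, dotProduct, Matrix.replicateRow]
  have h3 : (Matrix.of fun _ _ => c : Matrix Unit Unit (ZMod 2)) *ᵥ (v ∘ Sum.inr)
      = fun _ => c * v (Sum.inr ()) := by
    ext u
    simp [Matrix.mulVec, dotProduct]
  rw [h1, h2, h3]
  constructor
  · intro hv
    refine ⟨funext fun i => congrFun hv (Sum.inl i), ?_⟩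
    have := congrFun hv (Sum.inr ())
    simpa using this
  · rintro ⟨hA, hb⟩
    ext i
    cases i with
    | inl i => exact congrFun hA i
    | inr u => simpa using hb

lemma orth_of_mem_range {A : Matrix m m (ZMod 2)} (hA : A.IsSymm) {x0 b z : m → ZMod 2}
    (hx0 : A.mulVec x0 = b) (hz : A.mulVec z = 0) : b ⬝ᵥ z = 0 := by
  rw [← hx0, dotProduct_comm, dotProduct_mulVec, ← Matrix.mulVec_transpose, hA, hz,
    zero_dotProduct]

/-- case `b ∈ range A`, `c = ε`: kernel is bigger by one dimension. -/
def kerEquivPos1 {A : Matrix m m (ZMod 2)} (hA : A.IsSymm) {b x0 : m → ZMod 2}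
    (hx0 : A.mulVec x0 = b) :
    {v : m ⊕ Unit → ZMod 2 // (NB A b (b ⬝ᵥ x0)).mulVec v = 0}
      ≃ {z : m → ZMod 2 // A.mulVec z = 0} × ZMod 2 where
  toFun v := by
    refine ⟨⟨v.1 ∘ Sum.inl + v.1 (Sum.inr ()) • x0, ?_⟩, v.1 (Sum.inr ())⟩
    have hv := (NB_mulVec_eq_zero v.1).1 v.2
    rw [Matrix.mulVec_add, Matrix.mulVec_smul, hx0]
    exact hv.1
  invFun zt := by
    refine ⟨Sum.elim (zt.1.1 + zt.2 • x0) (fun _ => zt.2), ?_⟩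
    rw [NB_mulVec_eq_zero]
    constructor
    · rw [Sum.elim_comp_inl]
      show A.mulVec _ + zt.2 • b = 0
      rw [Matrix.mulVec_add, Matrix.mulVec_smul, hx0, zt.1.2, zero_add, ← add_smul,
        zmod2_add_self, zero_smul]
    · rw [Sum.elim_comp_inl]
      show b ⬝ᵥ (zt.1.1 + zt.2 • x0) + (b ⬝ᵥ x0) * zt.2 = 0
      rw [dotProduct_add, orth_of_mem_range hA hx0 zt.1.2, zero_add, dotProduct_smul,
        smul_eq_mul, mul_comm, ← add_mul, zmod2_add_self, zero_mul]
  left_inv v := by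
    apply Subtype.ext
    funext i
    cases i with
    | inl i =>
      show (v.1 ∘ Sum.inl) i + v.1 (Sum.inr ()) • x0 i + v.1 (Sum.inr ()) • x0 i = v.1 (Sum.inl i)
      rw [add_assoc, zmod2_add_self, add_zero]
      rfl
    | inr u => cases u; rfl
  right_inv zt := by
    refine Prod.ext (Subtype.ext ?_) rfl
    show (Sum.elim (zt.1.1 + zt.2 • x0) (fun _ => zt.2)) ∘ Sum.inl + zt.2 • x0 = zt.1.1
    rw [Sum.elim_comp_inl, add_add_cancel]

end GBR

namespace GBR
variable {m : Type*} [Fintype m] [DecidableEq m]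

lemma zmod2_aux1 : ∀ x y e : ZMod 2, x + y * e = 0 → x + (e + 1) * y = 0 → y = 0 := by decide

lemma t_eq_zero_pos {A : Matrix m m (ZMod 2)} (hA : A.IsSymm) {b x0 : m → ZMod 2}
    (hx0 : A.mulVec x0 = b) {v : m ⊕ Unit → ZMod 2}
    (hv : (NB A b (b ⬝ᵥ x0 + 1)).mulVec v = 0) : v (Sum.inr ()) = 0 := by
  obtain ⟨hv1, hv2⟩ := (NB_mulVec_eq_zero v).1 hv
  have hz : A.mulVec (v ∘ Sum.inl + v (Sum.inr ()) • x0) = 0 := by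
    rw [Matrix.mulVec_add, Matrix.mulVec_smul, hx0]; exact hv1
  have hbz : b ⬝ᵥ (v ∘ Sum.inl) + v (Sum.inr ()) * (b ⬝ᵥ x0) = 0 := by
    have := orth_of_mem_range hA hx0 hz
    rwa [dotProduct_add, dotProduct_smul, smul_eq_mul] at this
  exact zmod2_aux1 _ _ _ hbz hv2

def kerEquivPos2 {A : Matrix m m (ZMod 2)} (hA : A.IsSymm) {b x0 : m → ZMod 2}
    (hx0 : A.mulVec x0 = b) :
    {v : m ⊕ Unit → ZMod 2 // (NB A b (b ⬝ᵥ x0 + 1)).mulVec v = 0}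
      ≃ {z : m → ZMod 2 // A.mulVec z = 0} where
  toFun v := ⟨v.1 ∘ Sum.inl, by
    have hv := ((NB_mulVec_eq_zero v.1).1 v.2).1
    rwa [t_eq_zero_pos hA hx0 v.2, zero_smul, add_zero] at hv⟩
  invFun z := ⟨Sum.elim z.1 0, by
    rw [NB_mulVec_eq_zero]
    constructor
    · rw [Sum.elim_comp_inl]
      show A.mulVec z.1 + (0 : ZMod 2) • b = 0
      rw [zero_smul, add_zero]; exact z.2
    · rw [Sum.elim_comp_inl]
      show b ⬝ᵥ z.1 + _ * (0 : ZMod 2) = 0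
      rw [mul_zero, add_zero]; exact orth_of_mem_range hA hx0 z.2⟩
  left_inv v := Subtype.ext (funext fun i => by
    cases i with
    | inl i => rfl
    | inr u => cases u; exact (t_eq_zero_pos hA hx0 v.2).symm)
  right_inv z := Subtype.ext (funext fun i => rfl)

lemma exists_z1 {A : Matrix m m (ZMod 2)} (hA : A.IsSymm) {b : m → ZMod 2}
    (hb : ¬ ∃ x0, A.mulVec x0 = b) : ∃ z1, A.mulVec z1 = 0 ∧ b ⬝ᵥ z1 = 1 := by
  by_contra h
  push_neg at h
  exact hb (mem_range_of_orth A hA b fun z hz => by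
    by_contra hne
    exact h z hz (zmod2_ne_zero _ hne) |>.elim)

lemma t_eq_zero_neg {A : Matrix m m (ZMod 2)} {b : m → ZMod 2}
    (hb : ¬ ∃ x0, A.mulVec x0 = b) {c : ZMod 2} {v : m ⊕ Unit → ZMod 2}
    (hv : (NB A b c).mulVec v = 0) : v (Sum.inr ()) = 0 := by
  obtain ⟨hv1, _⟩ := (NB_mulVec_eq_zero v).1 hv
  rcases zmod2_cases (v (Sum.inr ())) with h | h
  · exact h
  · exfalso
    rw [h, one_smul] at hv1
    exact hb ⟨v ∘ Sum.inl, funext fun i => zmod2_eq_of_add_eq_zero _ _ (congrFun hv1 i)⟩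

def kerEquivNeg {A : Matrix m m (ZMod 2)} {b : m → ZMod 2}
    (hb : ¬ ∃ x0, A.mulVec x0 = b) (c : ZMod 2) :
    {v : m ⊕ Unit → ZMod 2 // (NB A b c).mulVec v = 0}
      ≃ {z : m → ZMod 2 // A.mulVec z = 0 ∧ b ⬝ᵥ z = 0} where
  toFun v := ⟨v.1 ∘ Sum.inl, by
    obtain ⟨hv1, hv2⟩ := (NB_mulVec_eq_zero v.1).1 v.2
    have ht := t_eq_zero_neg hb v.2
    rw [ht, zero_smul, add_zero] at hv1
    rw [ht, mul_zero, add_zero] at hv2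
    exact ⟨hv1, hv2⟩⟩
  invFun z := ⟨Sum.elim z.1 0, by
    rw [NB_mulVec_eq_zero]
    constructor
    · rw [Sum.elim_comp_inl]
      show A.mulVec z.1 + (0 : ZMod 2) • b = 0
      rw [zero_smul, add_zero]; exact z.2.1
    · rw [Sum.elim_comp_inl]
      show b ⬝ᵥ z.1 + _ * (0 : ZMod 2) = 0
      rw [mul_zero, add_zero]; exact z.2.2⟩
  left_inv v := Subtype.ext (funext fun i => by
    cases i with
    | inl i => rfl
    | inr u => cases u; exact (t_eq_zero_neg hb v.2).symm)
  right_inv z := Subtype.ext (funext fun i => rfl)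

def flipEquiv {A : Matrix m m (ZMod 2)} {b z1 : m → ZMod 2}
    (h1 : A.mulVec z1 = 0) (h2 : b ⬝ᵥ z1 = 1) :
    {x : {z : m → ZMod 2 // A.mulVec z = 0} // ¬ (b ⬝ᵥ x.1 = 0)}
      ≃ {x : {z : m → ZMod 2 // A.mulVec z = 0} // b ⬝ᵥ x.1 = 0} where
  toFun x := ⟨⟨x.1.1 + z1, by rw [Matrix.mulVec_add, x.1.2, h1, add_zero]⟩, by
    show b ⬝ᵥ (x.1.1 + z1) = 0
    rw [dotProduct_add, h2, zmod2_ne_zero _ x.2]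
    decide⟩
  invFun x := ⟨⟨x.1.1 + z1, by rw [Matrix.mulVec_add, x.1.2, h1, add_zero]⟩, by
    show ¬ (b ⬝ᵥ (x.1.1 + z1) = 0)
    rw [dotProduct_add, h2, x.2, zero_add]
    decide⟩
  left_inv x := Subtype.ext (Subtype.ext (add_add_cancel _ _))
  right_inv x := Subtype.ext (Subtype.ext (add_add_cancel _ _))

end GBR

namespace GBR
variable {m : Type*} [Fintype m] [DecidableEq m]

noncomputable def nud {V : Type*} [Fintype V] (N : Matrix V V (ZMod 2)) : ℕ :=
  Module.finrank (ZMod 2) (LinearMap.ker N.mulVecLin)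

lemma rank_add_nud {V : Type*} [Fintype V] (N : Matrix V V (ZMod 2)) :
    N.rank + nud N = Fintype.card V := by
  have h := LinearMap.finrank_range_add_finrank_ker N.mulVecLin
  rw [Module.finrank_pi] at h
  exact h

lemma card_ker_eq {V : Type*} [Fintype V] [DecidableEq V] (N : Matrix V V (ZMod 2)) :
    Nat.card {v : V → ZMod 2 // N.mulVec v = 0} = 2 ^ nud N := by
  have e : {v : V → ZMod 2 // N.mulVec v = 0} ≃ LinearMap.ker N.mulVecLin :=
    Equiv.subtypeEquivRight fun v => by simp [LinearMap.mem_ker]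
  haveI : Fintype (LinearMap.ker N.mulVecLin) := Fintype.ofFinite _
  rw [Nat.card_congr e, Nat.card_eq_fintype_card,
    card_eq_pow_finrank (K := ZMod 2), ZMod.card]
  rfl

lemma sum_zmod2 (g : ZMod 2 → ℝ) : ∑ c : ZMod 2, g c = g 0 + g 1 := by
  rw [show (Finset.univ : Finset (ZMod 2)) = {0, 1} from by decide,
    Finset.sum_insert (by decide), Finset.sum_singleton]

lemma key (A : Matrix m m (ZMod 2)) (hA : A.IsSymm) (b : m → ZMod 2) :
    ∑ c : ZMod 2, (-2 : ℝ) ^ nud (NB A b c) = -(-2 : ℝ) ^ nud A := by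
  rw [sum_zmod2]
  have pinj : Function.Injective (fun k : ℕ => 2 ^ k) := Nat.pow_right_injective (le_refl 2)
  by_cases hb : ∃ x0, A.mulVec x0 = b
  · obtain ⟨x0, hx0⟩ := hb
    have h1 : nud (NB A b (b ⬝ᵥ x0)) = nud A + 1 := by
      apply pinj
      show 2 ^ _ = 2 ^ _
      rw [← card_ker_eq, Nat.card_congr (kerEquivPos1 hA hx0), Nat.card_prod, card_ker_eq,
        Nat.card_eq_fintype_card, ZMod.card, pow_succ]
    have h2 : nud (NB A b (b ⬝ᵥ x0 + 1)) = nud A := by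
      apply pinj
      show 2 ^ _ = 2 ^ _
      rw [← card_ker_eq, Nat.card_congr (kerEquivPos2 hA hx0), card_ker_eq]
    rcases zmod2_cases (b ⬝ᵥ x0) with h | h
    · rw [h] at h1 h2
      rw [zero_add] at h2
      rw [h1, h2, pow_succ]
      ring
    · rw [h] at h1 h2
      rw [show (1 : ZMod 2) + 1 = 0 from by decide] at h2
      rw [h1, h2, pow_succ]
      ring
  · obtain ⟨z1, hz1, hz2⟩ := exists_z1 hA hb
    have hL : ∀ c : ZMod 2, 2 ^ nud A = 2 * 2 ^ nud (NB A b c) := by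
      intro c
      rw [← card_ker_eq, ← card_ker_eq, Nat.card_congr (kerEquivNeg hb c),
        ← Nat.card_congr (Equiv.sumCompl fun x : {z : m → ZMod 2 // A.mulVec z = 0} =>
          b ⬝ᵥ x.1 = 0), Nat.card_sum, Nat.card_congr (flipEquiv hz1 hz2),
        Nat.card_congr (Equiv.subtypeSubtypeEquivSubtypeInter
          (fun z : m → ZMod 2 => A.mulVec z = 0) (fun z => b ⬝ᵥ z = 0))]
      omega
    have e1 : nud A = nud (NB A b 0) + 1 := by
      apply pinj
      show 2 ^ _ = 2 ^ _
      rw [hL 0, pow_succ]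
      ring
    have e2 : nud A = nud (NB A b 1) + 1 := by
      apply pinj
      show 2 ^ _ = 2 ^ _
      rw [hL 1, pow_succ]
      ring
    rw [show nud (NB A b 1) = nud (NB A b 0) from by omega, e1, pow_succ]
    ring

end GBR

namespace GBR
variable {m : Type*} [Fintype m] [DecidableEq m]

lemma nud_reindex {V W : Type*} [Fintype V] [DecidableEq V] [Fintype W] [DecidableEq W]
    (e : V ≃ W) (N : Matrix V V (ZMod 2)) : nud (Matrix.reindex e e N) = nud N := by
  have h1 := rank_add_nud N
  have h2 := rank_add_nud (Matrix.reindex e e N)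
  rw [Matrix.rank_reindex] at h2
  rw [Fintype.card_congr e] at h1
  omega

def prodFunEquiv (n : ℕ) : ((Fin n → ZMod 2) × ZMod 2) ≃ (Fin n ⊕ Unit → ZMod 2) where
  toFun p := Sum.elim p.1 fun _ => p.2
  invFun g := (g ∘ Sum.inl, g (Sum.inr ()))
  left_inv p := rfl
  right_inv g := by
    funext i
    cases i with
    | inl i => rfl
    | inr u => cases u; rfl

lemma main : ∀ (n : ℕ) (M : Matrix (Fin n) (Fin n) (ZMod 2)), M.IsSymm →
    ∑ f : Fin n → ZMod 2, (-2 : ℝ) ^ nud (M + Matrix.diagonal f) = (-1 : ℝ) ^ n := by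
  intro n
  induction n with
  | zero =>
    intro M _
    have hz : ∀ N : Matrix (Fin 0) (Fin 0) (ZMod 2), nud N = 0 := fun N => by
      have := rank_add_nud N
      simp only [Fintype.card_fin] at this
      omega
    rw [Fintype.sum_unique, hz, pow_zero, pow_zero]
  | succ n ih =>
    intro M hM
    set e : Fin (n + 1) ≃ (Fin n ⊕ Unit) :=
      finSuccEquivLast.trans (Equiv.optionEquivSumPUnit _) with he
    set M₀ : Matrix (Fin n ⊕ Unit) (Fin n ⊕ Unit) (ZMod 2) := Matrix.reindex e e M with hM₀def
    have hM₀ : M₀.IsSymm := hM.submatrix _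
    set A : Matrix (Fin n) (Fin n) (ZMod 2) := Matrix.of fun i j => M₀ (Sum.inl i) (Sum.inl j)
      with hAdef
    have hA : A.IsSymm := Matrix.IsSymm.ext fun i j => hM₀.apply (Sum.inl i) (Sum.inl j)
    set b : Fin n → ZMod 2 := fun i => M₀ (Sum.inl i) (Sum.inr ()) with hbdef
    set c0 : ZMod 2 := M₀ (Sum.inr ()) (Sum.inr ()) with hc0def
    have hblocks : ∀ (f' : Fin n → ZMod 2) (t : ZMod 2),
        M₀ + Matrix.diagonal (Sum.elim f' fun _ => t)
          = NB (A + Matrix.diagonal f') b (c0 + t) := by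
      intro f' t
      ext i j
      rcases i with i | u <;> rcases j with j | u'
      · simp [NB, Matrix.fromBlocks, Matrix.diagonal, hAdef]
      · cases u'
        simp [NB, Matrix.fromBlocks, Matrix.diagonal, hbdef]
      · cases u
        simp [NB, Matrix.fromBlocks, Matrix.diagonal, hbdef]
        exact hM₀.apply (Sum.inr ()) (Sum.inl j) ▸ rfl
      · cases u; cases u'
        simp [NB, Matrix.fromBlocks, Matrix.diagonal, hc0def]
    -- step 1: reindex the sum
    have step1 : ∑ f : Fin (n + 1) → ZMod 2, (-2 : ℝ) ^ nud (M + Matrix.diagonal f)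
        = ∑ g : Fin n ⊕ Unit → ZMod 2, (-2 : ℝ) ^ nud (M₀ + Matrix.diagonal g) := by
      apply Fintype.sum_equiv (Equiv.arrowCongr e (Equiv.refl (ZMod 2)))
      intro f
      have : M₀ + Matrix.diagonal (f ∘ e.symm) = Matrix.reindex e e (M + Matrix.diagonal f) := by
        ext i j
        simp only [Matrix.add_apply, Matrix.reindex_apply, Matrix.submatrix_apply, hM₀def]
        congr 1
        by_cases hij : i = j
        · subst hij; simp
        · rw [Matrix.diagonal_apply_ne _ hij,
            Matrix.diagonal_apply_ne _ fun h => hij (e.symm.injective h)]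
      rw [show (Equiv.arrowCongr e (Equiv.refl (ZMod 2))) f = f ∘ e.symm from rfl,
        this, nud_reindex]
    rw [step1]
    rw [← Equiv.sum_comp (prodFunEquiv n) (fun g => (-2 : ℝ) ^ nud (M₀ + Matrix.diagonal g))]
    rw [Fintype.sum_prod_type]
    have inner : ∀ f' : Fin n → ZMod 2,
        ∑ t : ZMod 2, (-2 : ℝ) ^ nud (M₀ + Matrix.diagonal (prodFunEquiv n (f', t)))
          = -(-2 : ℝ) ^ nud (A + Matrix.diagonal f') := by
      intro f'
      have : ∀ t : ZMod 2, M₀ + Matrix.diagonal (prodFunEquiv n (f', t))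
          = NB (A + Matrix.diagonal f') b (c0 + t) := fun t => hblocks f' t
      simp only [this]
      rw [Fintype.sum_equiv (Equiv.addLeft c0)
        (fun t => (-2 : ℝ) ^ nud (NB (A + Matrix.diagonal f') b (c0 + t)))
        (fun c => (-2 : ℝ) ^ nud (NB (A + Matrix.diagonal f') b c)) (fun t => rfl)]
      exact key _ (hA.add (Matrix.isSymm_diagonal f')) b
    simp only [inner]
    rw [Finset.sum_neg_distrib, ih A hA, pow_succ]
    ring
end GBR

end Aux

/-- The reduced graph bracket `⟨G⟩(A) = [G](A, A⁻¹, -A² - A⁻²)`. -/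
noncomputable def gBracketR {V : Type*} [Fintype V] [DecidableEq V]
    (M : Matrix V V (ZMod 2)) (A : ℝ) : ℝ :=
  gBracket M A A⁻¹ (-A ^ 2 - A⁻¹ ^ 2)

/-- The reduced graph bracket satisfies `⟨G⟩(1) = (-1)^n`; equivalently,
`∑_Δ (-2)^{ν(M+Δ)} = (-1)^n`.  (This underlies `V_G(1) = 1`.) -/
theorem reducedBracket_at_one {n : ℕ} (M : Matrix (Fin n) (Fin n) (ZMod 2))
    (hsym : M.IsSymm) :
    gBracketR M 1 = (-1 : ℝ) ^ n ∧
    ∑ f : Fin n → ZMod 2,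
        (-2 : ℝ) ^ (n - (M + Matrix.diagonal f).rank) = (-1 : ℝ) ^ n := by
  have hmain := GBR.main n M hsym
  have hterm : ∀ f : Fin n → ZMod 2,
      n - (M + Matrix.diagonal f).rank = GBR.nud (M + Matrix.diagonal f) := by
    intro f
    have := GBR.rank_add_nud (M + Matrix.diagonal f)
    simp only [Fintype.card_fin] at this
    omega
  have h2 : ∑ f : Fin n → ZMod 2,
      (-2 : ℝ) ^ (n - (M + Matrix.diagonal f).rank) = (-1 : ℝ) ^ n := by
    rw [← hmain]
    exact Finset.sum_congr rfl fun f _ => by rw [hterm f]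
  refine ⟨?_, h2⟩
  rw [gBracketR, gBracket]
  simp only [one_pow, inv_one, one_mul, Fintype.card_fin]
  rw [show (-1 - 1 : ℝ) = -2 by norm_num]
  exact h2
end

section
/- Let G be a looped graph on n vertices with exactly ℓ loops (ℓ is the number of indices i with M_{ii} = 1). Then the real function A ↦ ⟨G⟩(A), defined for nonzero real A, is differentiable at A = 1 with derivative (−1)^n·(3n − 6ℓ). (This is the identity underlying V_G′(1) = 0 and the formula ℓ = n/2 − ((−1)^n/6)·(d⟨G⟩/dA)(1), showing that the graph bracket determines the number of loops.) -/
open Matrix BigOperators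

open Matrix BigOperators Module

namespace GBaux

abbrev F2 := ZMod 2

lemma two_cases (a : F2) : a = 0 ∨ a = 1 := by revert a; decide

lemma add_self_f2 (a : F2) : a + a = 0 := by revert a; decide

lemma eq_of_add_eq_zero_f2 {a b : F2} (h : a + b = 0) : a = b := by revert h; revert a b; decide

/-- nullity -/
noncomputable def nu {l : ℕ} (N : Matrix (Fin l) (Fin l) F2) : ℕ :=
  finrank F2 (LinearMap.ker N.mulVecLin)

lemma rank_add_nu {l : ℕ} (N : Matrix (Fin l) (Fin l) F2) : N.rank + nu N = l := by
  have := LinearMap.finrank_range_add_finrank_ker N.mulVecLin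
  rw [finrank_pi] at this
  simpa [Matrix.rank, nu] using this

lemma sub_rank_eq_nu {l : ℕ} (N : Matrix (Fin l) (Fin l) F2) : l - N.rank = nu N := by
  have := rank_add_nu N; omega

lemma card_ker {l : ℕ} (N : Matrix (Fin l) (Fin l) F2) :
    Fintype.card {x : Fin l → F2 // N.mulVec x = 0} = 2 ^ nu N := by
  have e : {x : Fin l → F2 // N.mulVec x = 0} ≃ LinearMap.ker N.mulVecLin :=
    Equiv.subtypeEquivRight (by intro x; simp [LinearMap.mem_ker])
  classical
  haveI : Fintype (LinearMap.ker N.mulVecLin) := Fintype.ofEquiv _ e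
  rw [Fintype.card_congr e]
  have := @card_eq_pow_finrank F2 (LinearMap.ker N.mulVecLin) _ _ _ _ _
  rwa [ZMod.card] at this

lemma nu_eq_of_card {l k : ℕ} (N : Matrix (Fin l) (Fin l) F2)
    (h : Fintype.card {x : Fin l → F2 // N.mulVec x = 0} = 2 ^ k) : nu N = k := by
  have h2 := card_ker N
  exact Nat.pow_right_injective (le_refl 2) (h2.symm.trans h)

/-- dot product as a bilinear form -/
noncomputable def dotB (l : ℕ) : LinearMap.BilinForm F2 (Fin l → F2) :=
  LinearMap.mk₂ F2 (· ⬝ᵥ ·) (fun x y z => add_dotProduct x y z)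
    (fun c x y => smul_dotProduct c x y) (fun x y z => dotProduct_add x y z)
    (fun c x y => dotProduct_smul c x y)

lemma dotB_apply {l : ℕ} (x y : Fin l → F2) : dotB l x y = x ⬝ᵥ y := rfl

lemma dotB_nondegenerate (l : ℕ) : (dotB l).Nondegenerate := by
  refine ⟨fun x hx => ?_, fun x hx => ?_⟩
  · funext j
    have := hx (Pi.single j 1)
    rw [dotB_apply, dotProduct_single, mul_one] at this
    simp [this]
  · funext j
    have := hx (Pi.single j 1)
    rw [dotB_apply, single_dotProduct, one_mul] at this
    simp [this]

lemma dotB_refl (l : ℕ) : (dotB l).IsRefl := by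
  intro x y h
  rw [dotB_apply] at h ⊢
  rwa [dotProduct_comm]

lemma mulVec_dot_ker {l : ℕ} {N : Matrix (Fin l) (Fin l) F2} (hs : N.IsSymm)
    {k : Fin l → F2} (hk : N.mulVec k = 0) (u : Fin l → F2) :
    (N.mulVec u) ⬝ᵥ k = 0 := by
  rw [dotProduct_comm, dotProduct_mulVec]
  have : k ᵥ* N = N.mulVec k := by
    conv_lhs => rw [← hs.eq]
    rw [vecMul_transpose]
  rw [this, hk, zero_dotProduct]

/-- key duality: if w is orthogonal to the kernel of a symmetric matrix, then
    w is in the range. -/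
lemma exists_solution_of_perp {l : ℕ} {N : Matrix (Fin l) (Fin l) F2} (hs : N.IsSymm)
    {w : Fin l → F2} (h : ∀ k, N.mulVec k = 0 → w ⬝ᵥ k = 0) :
    ∃ u, N.mulVec u = w := by
  set W := LinearMap.ker N.mulVecLin with hW
  set R := LinearMap.range N.mulVecLin with hR
  have hle : R ≤ (dotB l).orthogonal W := by
    rintro y ⟨u, rfl⟩
    intro k hk
    have hk' : N.mulVec k = 0 := hk
    rw [dotB_apply, dotProduct_comm]
    exact mulVec_dot_ker hs hk' u
  have hfr : finrank F2 R + finrank F2 W = l := by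
    have := LinearMap.finrank_range_add_finrank_ker N.mulVecLin
    rw [finrank_pi, Fintype.card_fin] at this
    exact this
  have hfo : finrank F2 ((dotB l).orthogonal W) = l - finrank F2 W := by
    rw [LinearMap.BilinForm.finrank_orthogonal (dotB_nondegenerate l) W,
      finrank_pi, Fintype.card_fin]
  have heq : R = (dotB l).orthogonal W :=
    Submodule.eq_of_le_of_finrank_le hle (by omega)
  have hw : w ∈ (dotB l).orthogonal W := by
    intro k hk
    rw [dotB_apply, dotProduct_comm]
    exact h k hk
  rw [← heq] at hw
  obtain ⟨u, hu⟩ := hw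
  exact ⟨u, hu⟩

lemma dot_welldef {l : ℕ} {N : Matrix (Fin l) (Fin l) F2} (hs : N.IsSymm)
    {u u' v : Fin l → F2} (hu : N.mulVec u = v) (hu' : N.mulVec u' = v) :
    u ⬝ᵥ v = u' ⬝ᵥ v := by
  have hk : N.mulVec (u + u') = 0 := by
    rw [Matrix.mulVec_add, hu, hu']; funext j; exact add_self_f2 _
  have h0 : v ⬝ᵥ (u + u') = 0 := by
    rw [← hu]; exact mulVec_dot_ker hs hk u
  rw [dotProduct_add, dotProduct_comm v u, dotProduct_comm v u'] at h0
  exact eq_of_add_eq_zero_f2 h0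

/-- sign of an element of GF(2) -/
noncomputable def sgn (e : F2) : ℝ := if e = 0 then 1 else -1

lemma sgn_zero : sgn 0 = 1 := rfl
lemma sgn_one : sgn 1 = -1 := rfl

lemma sgn_add (a b : F2) : sgn (a + b) = sgn a * sgn b := by
  rcases two_cases a with ha | ha <;> rcases two_cases b with hb | hb <;>
    subst ha <;> subst hb <;>
    simp only [show ((1 : F2) + 1) = 0 by decide, add_zero, zero_add, sgn_zero, sgn_one] <;>
    norm_num

/-- Phi N v = (-1)^(u ⬝ v) (-2)^(nu N) if N u = v is solvable, else 0. -/
noncomputable def Phi {l : ℕ} (N : Matrix (Fin l) (Fin l) F2) (v : Fin l → F2) : ℝ :=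
  if h : ∃ u, N.mulVec u = v then sgn (Classical.choose h ⬝ᵥ v) * (-2 : ℝ) ^ (nu N) else 0

lemma Phi_eq {l : ℕ} {N : Matrix (Fin l) (Fin l) F2} (hs : N.IsSymm)
    {u v : Fin l → F2} (hu : N.mulVec u = v) :
    Phi N v = sgn (u ⬝ᵥ v) * (-2 : ℝ) ^ (nu N) := by
  have h : ∃ u, N.mulVec u = v := ⟨u, hu⟩
  rw [Phi, dif_pos h, dot_welldef hs (Classical.choose_spec h) hu]

lemma Phi_of_not {l : ℕ} {N : Matrix (Fin l) (Fin l) F2} {v : Fin l → F2}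
    (h : ¬∃ u, N.mulVec u = v) : Phi N v = 0 := by
  rw [Phi, dif_neg h]

lemma Phi_zero {l : ℕ} {N : Matrix (Fin l) (Fin l) F2} (hs : N.IsSymm) :
    Phi N 0 = (-2 : ℝ) ^ (nu N) := by
  rw [Phi_eq hs (Matrix.mulVec_zero N), dotProduct_zero, sgn_zero, one_mul]



section Border

variable {m : ℕ}

/-- the matrix `B` with its `(i,i)` entry replaced by `ε` -/
def upd (B : Matrix (Fin (m+1)) (Fin (m+1)) F2) (i : Fin (m+1)) (ε : F2) :
    Matrix (Fin (m+1)) (Fin (m+1)) F2 :=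
  Matrix.of fun a b => if a = i ∧ b = i then ε else B a b

/-- principal submatrix deleting index `i` -/
def pmat (B : Matrix (Fin (m+1)) (Fin (m+1)) F2) (i : Fin (m+1)) :
    Matrix (Fin m) (Fin m) F2 :=
  B.submatrix i.succAbove i.succAbove

/-- border column of `B` at `i` (off-diagonal part) -/
def bvec (B : Matrix (Fin (m+1)) (Fin (m+1)) F2) (i : Fin (m+1)) : Fin m → F2 :=
  fun j => B (i.succAbove j) i

variable (B : Matrix (Fin (m+1)) (Fin (m+1)) F2) (i : Fin (m+1))

lemma upd_apply_same (ε : F2) : upd B i ε i i = ε := by simp [upd]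

lemma upd_apply_sA_left (ε : F2) (j : Fin m) (b : Fin (m+1)) :
    upd B i ε (i.succAbove j) b = B (i.succAbove j) b := by
  simp [upd, Fin.succAbove_ne i j]

lemma upd_apply_sA_right (ε : F2) (a : Fin (m+1)) (j : Fin m) :
    upd B i ε a (i.succAbove j) = B a (i.succAbove j) := by
  simp [upd, Fin.succAbove_ne i j]

lemma pmat_symm (hs : B.IsSymm) : (pmat B i).IsSymm := by
  refine Matrix.IsSymm.ext fun a b => ?_
  simp only [pmat, Matrix.submatrix_apply]
  exact hs.apply _ _

lemma insert_comp (x : Fin (m+1) → F2) : i.insertNth (x i) (x ∘ i.succAbove) = x := by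
  funext a
  rcases eq_or_ne a i with rfl | hne
  · rw [Fin.insertNth_apply_same]
  · obtain ⟨j, rfl⟩ := Fin.exists_succAbove_eq hne
    rw [Fin.insertNth_apply_succAbove]; rfl

lemma comp_insert (t : F2) (x₁ : Fin m → F2) :
    (i.insertNth t x₁) ∘ i.succAbove = x₁ := by
  funext j; exact Fin.insertNth_apply_succAbove (α := fun _ => F2) i t x₁ j

lemma dot_split (u v : Fin (m+1) → F2) :
    u ⬝ᵥ v = (u ∘ i.succAbove) ⬝ᵥ (v ∘ i.succAbove) + u i * v i := by
  rw [dotProduct, Fin.sum_univ_succAbove (fun k => u k * v k) i, add_comm]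
  rfl

/-- decomposition of the linear system `upd B i ε *ᵥ x = v` -/
lemma mulVec_upd_eq_iff (hs : B.IsSymm) (ε : F2) (x v : Fin (m+1) → F2) :
    (upd B i ε).mulVec x = v ↔
      (pmat B i).mulVec (x ∘ i.succAbove) + (x i) • bvec B i = v ∘ i.succAbove ∧
      (bvec B i) ⬝ᵥ (x ∘ i.succAbove) + ε * x i = v i := by
  have hcomp_i : ((upd B i ε).mulVec x) i = (bvec B i) ⬝ᵥ (x ∘ i.succAbove) + ε * x i := by
    rw [Matrix.mulVec, dotProduct, Fin.sum_univ_succAbove (fun k => upd B i ε i k * x k) i]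
    rw [upd_apply_same, add_comm]
    congr 1
    apply Finset.sum_congr rfl
    intro j _
    rw [upd_apply_sA_right]
    have : B i (i.succAbove j) = B (i.succAbove j) i := (hs.apply _ _).symm
    rw [this]
    rfl
  have hcomp_s : ∀ j, ((upd B i ε).mulVec x) (i.succAbove j)
      = ((pmat B i).mulVec (x ∘ i.succAbove)) j + x i * bvec B i j := by
    intro j
    rw [Matrix.mulVec, dotProduct,
      Fin.sum_univ_succAbove (fun k => upd B i ε (i.succAbove j) k * x k) i]
    rw [upd_apply_sA_left]
    rw [add_comm, mul_comm]
    congr 1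
    · apply Finset.sum_congr rfl
      intro j' _
      rw [upd_apply_sA_left]
      rfl
  constructor
  · intro h
    constructor
    · funext j
      have := congrFun h (i.succAbove j)
      rw [hcomp_s j] at this
      simpa [mul_comm] using this
    · have := congrFun h i
      rwa [hcomp_i] at this
  · rintro ⟨h1, h2⟩
    funext a
    rcases eq_or_ne a i with rfl | hne
    · rw [hcomp_i]; exact h2
    · obtain ⟨j, rfl⟩ := Fin.exists_succAbove_eq hne
      rw [hcomp_s j]
      have := congrFun h1 j
      simpa [mul_comm] using this

lemma vadd_self (y : Fin m → F2) : y + y = 0 := funext fun _ => add_self_f2 _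

lemma pair_sum (g : F2 → ℝ) (γ : F2) : g 0 + g 1 = g γ + g (γ + 1) := by
  rcases two_cases γ with rfl | rfl
  · rw [zero_add]
  · rw [show (1 : F2) + 1 = 0 by decide]; ring

lemma upd_solve_insert (hs : B.IsSymm) (ε t : F2) (u₁ : Fin m → F2) (v : Fin (m+1) → F2) :
    (upd B i ε).mulVec (i.insertNth t u₁) = v ↔
      (pmat B i).mulVec u₁ + t • bvec B i = v ∘ i.succAbove ∧
      (bvec B i) ⬝ᵥ u₁ + ε * t = v i := by
  rw [mulVec_upd_eq_iff B i hs, comp_insert, Fin.insertNth_apply_same]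

lemma bvec_perp (hs : B.IsSymm) {uw : Fin m → F2} (huw : (pmat B i).mulVec uw = bvec B i)
    {k : Fin m → F2} (hk : (pmat B i).mulVec k = 0) : (bvec B i) ⬝ᵥ k = 0 := by
  rw [← huw]; exact mulVec_dot_ker (pmat_symm B i hs) hk uw

/-- sign identity: if N₁ z = v₁ then w ⬝ z = uw ⬝ v₁. -/
lemma dot_bvec_sol (hs : B.IsSymm) {uw : Fin m → F2} (huw : (pmat B i).mulVec uw = bvec B i)
    {z v₁ : Fin m → F2} (hz : (pmat B i).mulVec z = v₁) :
    (bvec B i) ⬝ᵥ z = uw ⬝ᵥ v₁ := by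
  rw [← huw, dotProduct_comm, dotProduct_mulVec]
  have : z ᵥ* (pmat B i) = (pmat B i).mulVec z := by
    conv_lhs => rw [← (pmat_symm B i hs).eq]
    rw [vecMul_transpose]
  rw [this, hz, dotProduct_comm]

/-- kernel of upd at ε = uw ⬝ w : gains a dimension -/
lemma nu_upd_mem_same (hs : B.IsSymm) {uw : Fin m → F2} (huw : (pmat B i).mulVec uw = bvec B i) :
    nu (upd B i (uw ⬝ᵥ bvec B i)) = nu (pmat B i) + 1 := by
  set γ := uw ⬝ᵥ bvec B i with hγ
  set N₁ := pmat B i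
  set w := bvec B i
  apply nu_eq_of_card
  have e : {x : Fin (m+1) → F2 // (upd B i γ).mulVec x = 0} ≃
      {k : Fin m → F2 // N₁.mulVec k = 0} × F2 := by
    refine ⟨fun x => (⟨x.1 ∘ i.succAbove + (x.1 i) • uw, ?_⟩, x.1 i),
      fun p => ⟨i.insertNth p.2 (p.1.1 + p.2 • uw), ?_⟩, ?_, ?_⟩
    · obtain ⟨h1, _⟩ := (mulVec_upd_eq_iff B i hs γ x.1 0).mp x.2
      rw [Matrix.mulVec_add, Matrix.mulVec_smul, huw]
      have h1' : N₁.mulVec (x.1 ∘ i.succAbove) + x.1 i • w = 0 := by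
        rw [h1]; rfl
      exact h1'
    · rw [upd_solve_insert B i hs]
      obtain ⟨k, hk⟩ := p.1
      constructor
      · show N₁.mulVec (k + p.2 • uw) + p.2 • w = (0 : Fin (m+1) → F2) ∘ i.succAbove
        rw [Matrix.mulVec_add, Matrix.mulVec_smul, huw, hk, zero_add, vadd_self]
        rfl
      · show w ⬝ᵥ (k + p.2 • uw) + γ * p.2 = (0 : Fin (m+1) → F2) i
        rw [dotProduct_add, bvec_perp B i hs huw hk, zero_add, dotProduct_smul,
          smul_eq_mul, dotProduct_comm w uw, ← hγ, mul_comm]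
        show γ * p.2 + γ * p.2 = 0
        exact add_self_f2 _
    · rintro ⟨x, hx⟩
      apply Subtype.ext
      dsimp only
      rw [add_assoc, vadd_self, add_zero, insert_comp]
    · rintro ⟨⟨k, hk⟩, t⟩
      refine Prod.ext (Subtype.ext ?_) ?_ <;> dsimp only
      · rw [comp_insert, Fin.insertNth_apply_same, add_assoc, vadd_self, add_zero]
      · rw [Fin.insertNth_apply_same]
  rw [Fintype.card_congr e, Fintype.card_prod, card_ker]
  have : Fintype.card F2 = 2 := by rw [ZMod.card]
  rw [this, pow_succ]

/-- forcing: at ε = uw ⬝ w + 1, kernel elements have x i = 0 -/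
lemma force0 (hs : B.IsSymm) {uw : Fin m → F2} (huw : (pmat B i).mulVec uw = bvec B i)
    {x : Fin (m+1) → F2} (hx : (upd B i (uw ⬝ᵥ bvec B i + 1)).mulVec x = 0) :
    x i = 0 ∧ (pmat B i).mulVec (x ∘ i.succAbove) = 0 := by
  set γ := uw ⬝ᵥ bvec B i with hγ
  set N₁ := pmat B i
  set w := bvec B i
  obtain ⟨h1, h2⟩ := (mulVec_upd_eq_iff B i hs _ x 0).mp hx
  have h1' : N₁.mulVec (x ∘ i.succAbove) + x i • w = 0 := by rw [h1]; rfl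
  have h2' : w ⬝ᵥ (x ∘ i.succAbove) + (γ + 1) * x i = 0 := by rw [h2]; rfl
  rcases two_cases (x i) with h0 | h0
  · rw [h0, zero_smul, add_zero] at h1'
    exact ⟨h0, h1'⟩
  · exfalso
    rw [h0, one_smul] at h1'
    have hsol : N₁.mulVec (x ∘ i.succAbove) = w := by
      have := congrArg (fun y => y + w) h1'
      simpa [add_assoc, vadd_self] using this
    have hdot : w ⬝ᵥ (x ∘ i.succAbove) = γ := by
      rw [dot_bvec_sol B i hs huw hsol]
    rw [h0, mul_one, hdot] at h2'
    revert h2'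
    rcases two_cases γ with h | h <;> rw [h] <;> decide
  
lemma nu_upd_mem_other (hs : B.IsSymm) {uw : Fin m → F2} (huw : (pmat B i).mulVec uw = bvec B i) :
    nu (upd B i (uw ⬝ᵥ bvec B i + 1)) = nu (pmat B i) := by
  set γ := uw ⬝ᵥ bvec B i with hγ
  set N₁ := pmat B i
  set w := bvec B i
  apply nu_eq_of_card
  have e : {x : Fin (m+1) → F2 // (upd B i (γ+1)).mulVec x = 0} ≃
      {k : Fin m → F2 // N₁.mulVec k = 0} := by
    refine ⟨fun x => ⟨x.1 ∘ i.succAbove, (force0 B i hs huw x.2).2⟩,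
      fun k => ⟨i.insertNth 0 k.1, ?_⟩, ?_, ?_⟩
    · rw [upd_solve_insert B i hs]
      constructor
      · show N₁.mulVec k.1 + (0 : F2) • w = (0 : Fin (m+1) → F2) ∘ i.succAbove
        rw [k.2, zero_smul, add_zero]; rfl
      · show w ⬝ᵥ k.1 + (γ + 1) * 0 = (0 : Fin (m+1) → F2) i
        rw [bvec_perp B i hs huw k.2, mul_zero, add_zero]; rfl
    · intro x
      apply Subtype.ext
      show i.insertNth 0 (x.1 ∘ i.succAbove) = x.1
      rw [← (force0 B i hs huw x.2).1, insert_comp]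
    · intro k
      apply Subtype.ext
      show (i.insertNth (0:F2) k.1) ∘ i.succAbove = k.1
      rw [comp_insert]
  rw [Fintype.card_congr e, card_ker]

/-- if w is not in the column space, there is a kernel vector not orthogonal to w -/
lemma exists_k0 (hs : B.IsSymm) (hw : ¬∃ u, (pmat B i).mulVec u = bvec B i) :
    ∃ k₀, (pmat B i).mulVec k₀ = 0 ∧ (bvec B i) ⬝ᵥ k₀ = 1 := by
  by_contra hcon
  push_neg at hcon
  apply hw
  apply exists_solution_of_perp (pmat_symm B i hs)
  intro k hk
  rcases two_cases ((bvec B i) ⬝ᵥ k) with h | h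
  · exact h
  · exact absurd h (hcon k hk)

lemma nu_upd_notmem (hs : B.IsSymm) (hw : ¬∃ u, (pmat B i).mulVec u = bvec B i) (ε : F2) :
    1 ≤ nu (pmat B i) ∧ nu (upd B i ε) = nu (pmat B i) - 1 := by
  set N₁ := pmat B i
  set w := bvec B i
  obtain ⟨k₀, hk₀, hwk₀⟩ := exists_k0 B i hs hw
  -- forcing : x i = 0 for kernel of upd
  have hforce : ∀ x : Fin (m+1) → F2, (upd B i ε).mulVec x = 0 →
      x i = 0 ∧ N₁.mulVec (x ∘ i.succAbove) = 0 ∧ w ⬝ᵥ (x ∘ i.succAbove) = 0 := by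
    intro x hx
    obtain ⟨h1, h2⟩ := (mulVec_upd_eq_iff B i hs _ x 0).mp hx
    have h1' : N₁.mulVec (x ∘ i.succAbove) + x i • w = 0 := by rw [h1]; rfl
    have h2' : w ⬝ᵥ (x ∘ i.succAbove) + ε * x i = 0 := by rw [h2]; rfl
    rcases two_cases (x i) with h0 | h0
    · rw [h0, zero_smul, add_zero] at h1'
      rw [h0, mul_zero, add_zero] at h2'
      exact ⟨h0, h1', h2'⟩
    · exfalso
      rw [h0, one_smul] at h1'
      apply hw
      refine ⟨x ∘ i.succAbove, ?_⟩
      have := congrArg (fun y => y + w) h1'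
      simpa [add_assoc, vadd_self] using this
  have e : {x : Fin (m+1) → F2 // (upd B i ε).mulVec x = 0} ≃
      {k : Fin m → F2 // N₁.mulVec k = 0 ∧ w ⬝ᵥ k = 0} := by
    refine ⟨fun x => ⟨x.1 ∘ i.succAbove, (hforce x.1 x.2).2⟩,
      fun k => ⟨i.insertNth 0 k.1, ?_⟩, ?_, ?_⟩
    · rw [upd_solve_insert B i hs]
      constructor
      · show N₁.mulVec k.1 + (0 : F2) • w = (0 : Fin (m+1) → F2) ∘ i.succAbove
        rw [k.2.1, zero_smul, add_zero]; rfl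
      · show w ⬝ᵥ k.1 + ε * 0 = (0 : Fin (m+1) → F2) i
        rw [k.2.2, mul_zero, add_zero]; rfl
    · intro x
      apply Subtype.ext
      show i.insertNth 0 (x.1 ∘ i.succAbove) = x.1
      rw [← (hforce x.1 x.2).1, insert_comp]
    · intro k
      apply Subtype.ext
      show (i.insertNth (0:F2) k.1) ∘ i.succAbove = k.1
      rw [comp_insert]
  -- split the kernel of N₁ by the value of w ⬝ᵥ ·
  have esplit : {k : Fin m → F2 // N₁.mulVec k = 0 ∧ w ⬝ᵥ k = 0} ⊕
      {k : Fin m → F2 // N₁.mulVec k = 0 ∧ w ⬝ᵥ k = 1} ≃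
      {k : Fin m → F2 // N₁.mulVec k = 0} := by
    refine ⟨fun p => Sum.elim (fun k => ⟨k.1, k.2.1⟩) (fun k => ⟨k.1, k.2.1⟩) p,
      fun k => if h : w ⬝ᵥ k.1 = 0 then Sum.inl ⟨k.1, k.2, h⟩
        else Sum.inr ⟨k.1, k.2, (two_cases _).resolve_left h⟩, ?_, ?_⟩
    · rintro (⟨k, hk, hwk⟩ | ⟨k, hk, hwk⟩)
      · dsimp only [Sum.elim_inl]
        rw [dif_pos hwk]
      · dsimp only [Sum.elim_inr]
        rw [dif_neg (by rw [hwk]; decide)]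
    · rintro ⟨k, hk⟩
      dsimp only
      by_cases h : w ⬝ᵥ k = 0
      · rw [dif_pos h]
        rfl
      · rw [dif_neg h]
        rfl
  have etrans : {k : Fin m → F2 // N₁.mulVec k = 0 ∧ w ⬝ᵥ k = 0} ≃
      {k : Fin m → F2 // N₁.mulVec k = 0 ∧ w ⬝ᵥ k = 1} := by
    refine ⟨fun k => ⟨k.1 + k₀, ?_, ?_⟩, fun k => ⟨k.1 + k₀, ?_, ?_⟩, ?_, ?_⟩
    · rw [Matrix.mulVec_add, k.2.1, hk₀, add_zero]
    · rw [dotProduct_add, k.2.2, hwk₀, zero_add]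
    · rw [Matrix.mulVec_add, k.2.1, hk₀, add_zero]
    · rw [dotProduct_add, k.2.2, hwk₀]; decide
    · intro k; apply Subtype.ext
      show k.1 + k₀ + k₀ = k.1
      rw [add_assoc, vadd_self, add_zero]
    · intro k; apply Subtype.ext
      show k.1 + k₀ + k₀ = k.1
      rw [add_assoc, vadd_self, add_zero]
  have hcards : Fintype.card {k : Fin m → F2 // N₁.mulVec k = 0 ∧ w ⬝ᵥ k = 0} * 2
      = 2 ^ nu N₁ := by
    rw [← card_ker (N := N₁), ← Fintype.card_congr esplit, Fintype.card_sum,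
      ← Fintype.card_congr etrans, mul_two]
  have hpos : 1 ≤ nu N₁ := by
    by_contra hn
    have h0 : nu N₁ = 0 := by omega
    rw [h0] at hcards
    omega
  refine ⟨hpos, ?_⟩
  apply nu_eq_of_card
  rw [Fintype.card_congr e]
  have h2 : 2 ^ nu N₁ = 2 ^ (nu N₁ - 1) * 2 := by
    rw [← pow_succ]
    congr 1
    omega
  omega

lemma upd_symm (hs : B.IsSymm) (ε : F2) : (upd B i ε).IsSymm := by
  refine Matrix.IsSymm.ext fun a b => ?_
  show (if b = i ∧ a = i then ε else B b a) = (if a = i ∧ b = i then ε else B a b)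
  by_cases h1 : a = i <;> by_cases h2 : b = i <;>
    simp [h1, h2, hs.apply]

lemma red_b (hs : B.IsSymm) :
    (-2:ℝ) ^ (nu (upd B i 0)) - (-2:ℝ) ^ (nu (upd B i 1))
      = -3 * Phi (pmat B i) (bvec B i) := by
  by_cases hw : ∃ uw, (pmat B i).mulVec uw = bvec B i
  · obtain ⟨uw, huw⟩ := hw
    have hsame := nu_upd_mem_same B i hs huw
    have hother := nu_upd_mem_other B i hs huw
    have hPhi : Phi (pmat B i) (bvec B i)
        = sgn (uw ⬝ᵥ bvec B i) * (-2:ℝ) ^ (nu (pmat B i)) :=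
      Phi_eq (pmat_symm B i hs) huw
    rcases two_cases (uw ⬝ᵥ bvec B i) with hγ | hγ <;> rw [hγ] at hsame hother hPhi
    · rw [show (0:F2) + 1 = 1 by decide] at hother
      rw [hsame, hother, hPhi, sgn_zero, pow_succ]
      ring
    · rw [show (1:F2) + 1 = 0 by decide] at hother
      rw [hsame, hother, hPhi, sgn_one, pow_succ]
      ring
  · have h0 := nu_upd_notmem B i hs hw 0
    have h1 := nu_upd_notmem B i hs hw 1
    rw [h0.2, h1.2, Phi_of_not hw]
    ring

lemma red_a (hs : B.IsSymm) (v : Fin (m+1) → F2) :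
    Phi (upd B i 0) v + Phi (upd B i 1) v = - Phi (pmat B i) (v ∘ i.succAbove) := by
  have hs₁ : (pmat B i).IsSymm := pmat_symm B i hs
  by_cases hw : ∃ uw, (pmat B i).mulVec uw = bvec B i
  · obtain ⟨uw, huw⟩ := hw
    have hsame := nu_upd_mem_same B i hs huw
    have hother := nu_upd_mem_other B i hs huw
    have key : (-2:ℝ) ^ (nu (upd B i 0)) + (-2:ℝ) ^ (nu (upd B i 1))
        = -(-2:ℝ) ^ (nu (pmat B i)) := by
      rcases two_cases (uw ⬝ᵥ bvec B i) with hγ | hγ <;> rw [hγ] at hsame hother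
      · rw [show (0:F2) + 1 = 1 by decide] at hother
        rw [hsame, hother, pow_succ]; ring
      · rw [show (1:F2) + 1 = 0 by decide] at hother
        rw [hsame, hother, pow_succ]; ring
    by_cases hv : ∃ u₀, (pmat B i).mulVec u₀ = v ∘ i.succAbove
    · obtain ⟨u₀, hu₀⟩ := hv
      have hPhiN : Phi (pmat B i) (v ∘ i.succAbove)
          = sgn (u₀ ⬝ᵥ (v ∘ i.succAbove)) * (-2:ℝ) ^ (nu (pmat B i)) := Phi_eq hs₁ hu₀
      have hαval : (bvec B i) ⬝ᵥ u₀ = uw ⬝ᵥ (v ∘ i.succAbove) :=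
        dot_bvec_sol B i hs huw hu₀
      rcases two_cases ((bvec B i) ⬝ᵥ u₀ + v i) with hba | hba
      · -- compatible case: both solvable with t = 0
        have hsol : ∀ ε : F2, (upd B i ε).mulVec (i.insertNth 0 u₀) = v := by
          intro ε
          rw [upd_solve_insert B i hs]
          refine ⟨by rw [zero_smul, add_zero]; exact hu₀, ?_⟩
          rw [mul_zero, add_zero]
          exact eq_of_add_eq_zero_f2 hba
        have hd : (i.insertNth (0:F2) u₀) ⬝ᵥ v = u₀ ⬝ᵥ (v ∘ i.succAbove) := by
          rw [dot_split i, comp_insert, Fin.insertNth_apply_same, zero_mul, add_zero]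
        rw [Phi_eq (upd_symm B i hs 0) (hsol 0), Phi_eq (upd_symm B i hs 1) (hsol 1),
          hd, hPhiN, ← mul_add, key]
        ring
      · -- incompatible case: only ε = γ+1 solvable, with t = 1
        have hnot : ¬ ∃ u, (upd B i (uw ⬝ᵥ bvec B i)).mulVec u = v := by
          rintro ⟨u, hu⟩
          obtain ⟨h1, h2⟩ := (mulVec_upd_eq_iff B i hs _ u v).mp hu
          have hz : (pmat B i).mulVec (u ∘ i.succAbove + u i • uw) = v ∘ i.succAbove := by
            rw [Matrix.mulVec_add, Matrix.mulVec_smul, huw]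
            exact h1
          have hzd : (bvec B i) ⬝ᵥ (u ∘ i.succAbove + u i • uw)
              = uw ⬝ᵥ (v ∘ i.succAbove) := dot_bvec_sol B i hs huw hz
          rw [dotProduct_add, dotProduct_smul, smul_eq_mul,
            dotProduct_comm (bvec B i) uw] at hzd
          rw [hαval] at hba
          exact (by decide : ∀ a g c t b : F2,
            a + t * g = c → a + g * t = b → c + b = 1 → False) _ _ _ _ _ hzd h2 hba
        have hsol : (upd B i (uw ⬝ᵥ bvec B i + 1)).mulVec (i.insertNth 1 (u₀ + uw)) = v := by
          rw [upd_solve_insert B i hs]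
          constructor
          · rw [Matrix.mulVec_add, hu₀, huw, one_smul, add_assoc, vadd_self, add_zero]
          · rw [dotProduct_add, mul_one, dotProduct_comm (bvec B i) uw, hαval]
            rw [hαval] at hba
            exact (by decide : ∀ c g b : F2, c + b = 1 → c + g + (g + 1) = b) _ _ _ hba
        have hd : (i.insertNth (1:F2) (u₀ + uw)) ⬝ᵥ v = u₀ ⬝ᵥ (v ∘ i.succAbove) + 1 := by
          rw [dot_split i, comp_insert, Fin.insertNth_apply_same, one_mul, add_dotProduct]
          have h1 : uw ⬝ᵥ (v ∘ i.succAbove) + v i = 1 := by rw [← hαval]; exact hba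
          exact (by decide : ∀ s c b : F2, c + b = 1 → s + c + b = s + 1) _ _ _ h1
        have lhs_eq : Phi (upd B i 0) v + Phi (upd B i 1) v
            = Phi (upd B i (uw ⬝ᵥ bvec B i)) v + Phi (upd B i (uw ⬝ᵥ bvec B i + 1)) v :=
          pair_sum (fun ε => Phi (upd B i ε) v) (uw ⬝ᵥ bvec B i)
        rw [lhs_eq, Phi_of_not hnot, Phi_eq (upd_symm B i hs _) hsol, hd, hPhiN,
          sgn_add, sgn_one, hother]
        ring
    · -- v₁ not in the column space, w in the column space : both sides vanish
      have hnot : ∀ ε : F2, ¬ ∃ u, (upd B i ε).mulVec u = v := by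
        intro ε
        rintro ⟨u, hu⟩
        obtain ⟨h1, h2⟩ := (mulVec_upd_eq_iff B i hs _ u v).mp hu
        rcases two_cases (u i) with h0 | h0
        · rw [h0, zero_smul, add_zero] at h1
          exact hv ⟨_, h1⟩
        · rw [h0, one_smul] at h1
          refine hv ⟨u ∘ i.succAbove + uw, ?_⟩
          rw [Matrix.mulVec_add, huw]
          exact h1
      rw [Phi_of_not (hnot 0), Phi_of_not (hnot 1), Phi_of_not hv]
      ring
  · -- w not in the column space
    obtain ⟨k₀, hk₀, hwk₀⟩ := exists_k0 B i hs hw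
    obtain ⟨ν', hν'⟩ : ∃ ν', nu (pmat B i) = ν' + 1 :=
      ⟨nu (pmat B i) - 1, by have := (nu_upd_notmem B i hs hw 0).1; omega⟩
    have hnum : ∀ ε : F2, nu (upd B i ε) = ν' := by
      intro ε
      rw [(nu_upd_notmem B i hs hw ε).2, hν']
      omega
    by_cases hv : ∃ u₀, (pmat B i).mulVec u₀ = v ∘ i.succAbove
    · obtain ⟨u₀, hu₀⟩ := hv
      have hPhiN : Phi (pmat B i) (v ∘ i.succAbove)
          = sgn (u₀ ⬝ᵥ (v ∘ i.succAbove)) * (-2:ℝ) ^ (nu (pmat B i)) := Phi_eq hs₁ hu₀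
      have hk₀v : k₀ ⬝ᵥ (v ∘ i.succAbove) = 0 := by
        rw [← hu₀, dotProduct_comm]
        exact mulVec_dot_ker hs₁ hk₀ u₀
      have hsol : ∀ ε : F2,
          (upd B i ε).mulVec
            (i.insertNth 0 (u₀ + (v i + (bvec B i) ⬝ᵥ u₀) • k₀)) = v := by
        intro ε
        rw [upd_solve_insert B i hs]
        constructor
        · rw [zero_smul, add_zero, Matrix.mulVec_add, Matrix.mulVec_smul, hk₀, smul_zero,
            add_zero]
          exact hu₀
        · rw [mul_zero, add_zero, dotProduct_add, dotProduct_smul, smul_eq_mul,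
            hwk₀, mul_one]
          exact (by decide : ∀ a b : F2, a + (b + a) = b) _ _
      have hd : (i.insertNth (0:F2) (u₀ + (v i + (bvec B i) ⬝ᵥ u₀) • k₀)) ⬝ᵥ v
          = u₀ ⬝ᵥ (v ∘ i.succAbove) := by
        rw [dot_split i, comp_insert, Fin.insertNth_apply_same, zero_mul, add_zero,
          add_dotProduct, smul_dotProduct, smul_eq_mul, hk₀v, mul_zero, add_zero]
      rw [Phi_eq (upd_symm B i hs 0) (hsol 0), Phi_eq (upd_symm B i hs 1) (hsol 1),
        hd, hPhiN, hnum 0, hnum 1, hν', ← mul_add, pow_succ]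
      ring
    · rw [Phi_of_not hv]
      by_cases hv2 : ∃ u₁, (pmat B i).mulVec u₁ = (v ∘ i.succAbove) + bvec B i
      · obtain ⟨u₁, hu₁⟩ := hv2
        have hk₀v : k₀ ⬝ᵥ (v ∘ i.succAbove) = 1 := by
          have h1 : k₀ ⬝ᵥ ((v ∘ i.succAbove) + bvec B i) = 0 := by
            rw [← hu₁, dotProduct_comm]
            exact mulVec_dot_ker hs₁ hk₀ u₁
          rw [dotProduct_add, dotProduct_comm k₀ (bvec B i), hwk₀] at h1
          exact (by decide : ∀ a : F2, a + 1 = 0 → a = 1) _ h1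
        have hsol : ∀ ε : F2,
            (upd B i ε).mulVec
              (i.insertNth 1 (u₁ + (v i + ε + (bvec B i) ⬝ᵥ u₁) • k₀)) = v := by
          intro ε
          rw [upd_solve_insert B i hs]
          constructor
          · rw [Matrix.mulVec_add, Matrix.mulVec_smul, hk₀, smul_zero, add_zero, hu₁,
              one_smul, add_assoc, vadd_self, add_zero]
          · rw [mul_one, dotProduct_add, dotProduct_smul, smul_eq_mul,
              hwk₀, mul_one]
            exact (by decide : ∀ a b ε : F2, a + (b + ε + a) + ε = b) _ _ _
        have hd : ∀ ε : F2,
            (i.insertNth (1:F2) (u₁ + (v i + ε + (bvec B i) ⬝ᵥ u₁) • k₀)) ⬝ᵥ v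
            = (u₁ ⬝ᵥ (v ∘ i.succAbove) + (bvec B i) ⬝ᵥ u₁) + ε := by
          intro ε
          rw [dot_split i, comp_insert, Fin.insertNth_apply_same, one_mul,
            add_dotProduct, smul_dotProduct, smul_eq_mul, hk₀v, mul_one]
          exact (by decide : ∀ s a b ε : F2, s + (b + ε + a) + b = s + a + ε) _ _ _ _
        rw [Phi_eq (upd_symm B i hs 0) (hsol 0), Phi_eq (upd_symm B i hs 1) (hsol 1),
          hd 0, hd 1, hnum 0, hnum 1, add_zero,
          sgn_add (u₁ ⬝ᵥ (v ∘ i.succAbove) + (bvec B i) ⬝ᵥ u₁) 1, sgn_one]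
        ring
      · have hnot : ∀ ε : F2, ¬ ∃ u, (upd B i ε).mulVec u = v := by
          intro ε
          rintro ⟨u, hu⟩
          obtain ⟨h1, h2⟩ := (mulVec_upd_eq_iff B i hs _ u v).mp hu
          rcases two_cases (u i) with h0 | h0
          · rw [h0, zero_smul, add_zero] at h1
            exact hv ⟨_, h1⟩
          · rw [h0, one_smul] at h1
            apply hv2
            refine ⟨u ∘ i.succAbove, ?_⟩
            have := congrArg (fun y => y + bvec B i) h1
            simpa [add_assoc, vadd_self] using this
        rw [Phi_of_not (hnot 0), Phi_of_not (hnot 1)]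
        ring

lemma diag_upd (C : Matrix (Fin (m+1)) (Fin (m+1)) F2) (i : Fin (m+1))
    (f₁ : Fin m → F2) (t : F2) :
    C + Matrix.diagonal (i.insertNth t f₁)
      = upd (C + Matrix.diagonal (i.insertNth 0 f₁)) i (C i i + t) := by
  ext a b
  by_cases ha : a = i
  · by_cases hb : b = i
    · subst ha; subst hb
      rw [upd_apply_same, Matrix.add_apply, Matrix.diagonal_apply_eq,
        Fin.insertNth_apply_same]
    · subst ha
      have h2 : upd (C + Matrix.diagonal (a.insertNth 0 f₁)) a (C a a + t) a b
          = (C + Matrix.diagonal (a.insertNth 0 f₁)) a b := by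
        simp [upd, hb]
      rw [h2, Matrix.add_apply, Matrix.add_apply,
        Matrix.diagonal_apply_ne _ (fun h => hb h.symm),
        Matrix.diagonal_apply_ne _ (fun h => hb h.symm)]
  · obtain ⟨j, rfl⟩ := Fin.exists_succAbove_eq ha
    rw [upd_apply_sA_left, Matrix.add_apply, Matrix.add_apply]
    congr 1
    rcases eq_or_ne (i.succAbove j) b with rfl | hne
    · rw [Matrix.diagonal_apply_eq, Matrix.diagonal_apply_eq,
        Fin.insertNth_apply_succAbove, Fin.insertNth_apply_succAbove]
    · rw [Matrix.diagonal_apply_ne _ hne, Matrix.diagonal_apply_ne _ hne]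

lemma pmat_diag (C : Matrix (Fin (m+1)) (Fin (m+1)) F2) (i : Fin (m+1))
    (f₁ : Fin m → F2) (t : F2) :
    pmat (C + Matrix.diagonal (i.insertNth t f₁)) i = pmat C i + Matrix.diagonal f₁ := by
  ext j j'
  simp only [pmat, Matrix.submatrix_apply, Matrix.add_apply]
  congr 1
  rcases eq_or_ne j j' with rfl | hne
  · rw [Matrix.diagonal_apply_eq, Matrix.diagonal_apply_eq, Fin.insertNth_apply_succAbove]
  · rw [Matrix.diagonal_apply_ne _ (fun h => hne (Fin.succAbove_right_injective h)),
      Matrix.diagonal_apply_ne _ hne]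

lemma bvec_diag (C : Matrix (Fin (m+1)) (Fin (m+1)) F2) (i : Fin (m+1))
    (f₁ : Fin m → F2) (t : F2) :
    bvec (C + Matrix.diagonal (i.insertNth t f₁)) i = bvec C i := by
  funext j
  show C (i.succAbove j) i + Matrix.diagonal (i.insertNth t f₁) (i.succAbove j) i
      = C (i.succAbove j) i
  rw [Matrix.diagonal_apply_ne _ (Fin.succAbove_ne i j), add_zero]

end Border

lemma sum_F2 {M : Type*} [AddCommMonoid M] (g : F2 → M) : ∑ x : F2, g x = g 0 + g 1 := by
  rw [show (Finset.univ : Finset F2) = {0, 1} by decide,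
    Finset.sum_insert (by decide), Finset.sum_singleton]

lemma Phi_dim0 (N : Matrix (Fin 0) (Fin 0) F2) (v : Fin 0 → F2) : Phi N v = 1 := by
  have hsym : N.IsSymm := by
    refine Matrix.IsSymm.ext fun a _ => a.elim0
  have hv : (0 : Fin 0 → F2) = v := funext fun x => x.elim0
  have hnu : nu N = 0 := by
    have h1 : nu N ≤ finrank F2 (Fin 0 → F2) := Submodule.finrank_le _
    rw [finrank_pi, Fintype.card_fin] at h1
    omega
  rw [Phi_eq hsym (show N.mulVec 0 = v by rw [Matrix.mulVec_zero]; exact hv),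
    zero_dotProduct, sgn_zero, hnu, pow_zero, one_mul]

/-- Main induction: the signed sum of `Phi` over all diagonals is `(-1)^m`. -/
lemma Fsum : ∀ (m : ℕ) (C : Matrix (Fin m) (Fin m) F2), C.IsSymm → ∀ (v : Fin m → F2),
    ∑ f : Fin m → F2, Phi (C + Matrix.diagonal f) v = (-1:ℝ)^m := by
  intro m
  induction m with
  | zero =>
    intro C _ v
    rw [show (∑ f : Fin 0 → F2, Phi (C + Matrix.diagonal f) v)
        = ∑ f : Fin 0 → F2, 1 from Finset.sum_congr rfl fun f _ => Phi_dim0 _ _]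
    simp
  | succ m ih =>
    intro C hC v
    set i : Fin (m+1) := 0 with hi
    rw [← Equiv.sum_comp (Fin.insertNthEquiv (fun _ => F2) i)
      (fun f => Phi (C + Matrix.diagonal f) v), Fintype.sum_prod_type, Finset.sum_comm]
    have hA₀sym : ∀ f₁ : Fin m → F2,
        (C + Matrix.diagonal (i.insertNth (0:F2) f₁)).IsSymm :=
      fun f₁ => hC.add (Matrix.isSymm_diagonal _)
    have inner : ∀ f₁ : Fin m → F2,
        (∑ t : F2, Phi (C + Matrix.diagonal ((Fin.insertNthEquiv (fun _ => F2) i) (t, f₁))) v)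
          = - Phi ((pmat C i) + Matrix.diagonal f₁) (v ∘ i.succAbove) := by
      intro f₁
      have h1 : ∀ t : F2,
          Phi (C + Matrix.diagonal ((Fin.insertNthEquiv (fun _ => F2) i) (t, f₁))) v
            = Phi (upd (C + Matrix.diagonal (i.insertNth 0 f₁)) i (C i i + t)) v := by
        intro t
        rw [show (Fin.insertNthEquiv (fun _ => F2) i) (t, f₁) = i.insertNth t f₁ from rfl,
          diag_upd]
      rw [Finset.sum_congr rfl fun t _ => h1 t]
      rw [Fintype.sum_equiv (Equiv.addLeft (C i i))
        (fun t => Phi (upd (C + Matrix.diagonal (i.insertNth 0 f₁)) i (C i i + t)) v)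
        (fun ε => Phi (upd (C + Matrix.diagonal (i.insertNth 0 f₁)) i ε) v)
        (fun t => rfl)]
      rw [sum_F2]
      rw [red_a _ i (hA₀sym f₁) v, pmat_diag]
    rw [Finset.sum_congr rfl fun f₁ _ => inner f₁, Finset.sum_neg_distrib,
      ih (pmat C i) (pmat_symm C i hC) (v ∘ i.succAbove), pow_succ]
    ring

lemma sgn_eq (t : F2) : sgn t = 1 - 2 * (if t = 1 then (1:ℝ) else 0) := by
  rcases two_cases t with rfl | rfl <;>
    simp [sgn, show (0:F2) ≠ 1 by decide] <;> norm_num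

lemma coeff_eq {n : ℕ} (f : Fin n → F2) :
    ((n:ℝ) - 2 * (Fintype.card {i // f i = 1} : ℝ)) = ∑ i, sgn (f i) := by
  rw [Finset.sum_congr rfl fun i _ => sgn_eq (f i), Finset.sum_sub_distrib,
    Finset.sum_const, ← Finset.mul_sum, Finset.sum_boole, Fintype.card_subtype]
  simp [Finset.card_univ]

lemma main_sum (n : ℕ) (M : Matrix (Fin n) (Fin n) F2) (hs : M.IsSymm) :
    ∑ f : Fin n → F2, ((n:ℝ) - 2 * (Fintype.card {i // f i = 1} : ℝ))
        * (-2:ℝ) ^ (nu (M + Matrix.diagonal f))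
      = (-1:ℝ)^n * (3*(n:ℝ) - 6*(Fintype.card {i : Fin n // M i i = 1} : ℝ)) := by
  rw [Finset.sum_congr rfl fun f _ => by rw [coeff_eq f, Finset.sum_mul]]
  rw [Finset.sum_comm]
  cases n with
  | zero => simp
  | succ m =>
    have inner : ∀ i : Fin (m+1),
        (∑ f : Fin (m+1) → F2, sgn (f i) * (-2:ℝ)^(nu (M + Matrix.diagonal f)))
          = sgn (M i i) * (-3)
            * ∑ f₁ : Fin m → F2, Phi (pmat M i + Matrix.diagonal f₁) (bvec M i) := by
      intro i
      rw [← Equiv.sum_comp (Fin.insertNthEquiv (fun _ => F2) i)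
        (fun f => sgn (f i) * (-2:ℝ)^(nu (M + Matrix.diagonal f))),
        Fintype.sum_prod_type, Finset.sum_comm, Finset.mul_sum]
      refine Finset.sum_congr rfl fun f₁ _ => ?_
      have h1 : ∀ t : F2,
          sgn (((Fin.insertNthEquiv (fun _ => F2) i) (t, f₁)) i)
              * (-2:ℝ)^(nu (M + Matrix.diagonal ((Fin.insertNthEquiv (fun _ => F2) i) (t, f₁))))
          = sgn t * (-2:ℝ)^(nu (upd (M + Matrix.diagonal (i.insertNth 0 f₁)) i (M i i + t))) := by
        intro t
        rw [show (Fin.insertNthEquiv (fun _ => F2) i) (t, f₁) = i.insertNth t f₁ from rfl,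
          Fin.insertNth_apply_same, diag_upd]
      rw [Finset.sum_congr rfl fun t _ => h1 t]
      rw [Fintype.sum_equiv (Equiv.addLeft (M i i))
        (fun t => sgn t * (-2:ℝ)^(nu (upd (M + Matrix.diagonal (i.insertNth 0 f₁)) i (M i i + t))))
        (fun ε => sgn (M i i + ε)
          * (-2:ℝ)^(nu (upd (M + Matrix.diagonal (i.insertNth 0 f₁)) i ε)))
        (fun t => by
          have e1 : (Equiv.addLeft (M i i)) t = M i i + t := rfl
          rw [e1]
          rw [← add_assoc, add_self_f2, zero_add])]
      rw [sum_F2, add_zero, sgn_add, sgn_one]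
      have hred := red_b (M + Matrix.diagonal (i.insertNth (0:F2) f₁)) i
        (hs.add (Matrix.isSymm_diagonal _))
      rw [pmat_diag, bvec_diag] at hred
      linear_combination sgn (M i i) * hred
    rw [Finset.sum_congr rfl fun i _ => by
      rw [inner i, Fsum m (pmat M i) (pmat_symm M i hs) (bvec M i)]]
    rw [← Finset.sum_mul, ← Finset.sum_mul, ← coeff_eq (fun i : Fin (m+1) => M i i)]
    push_cast
    ring

lemma summand_deriv (a b c : ℕ) :
    HasDerivAt (fun A : ℝ => A ^ a * A⁻¹ ^ b * (-A ^ 2 - A⁻¹ ^ 2) ^ c)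
      (((a:ℝ) - (b:ℝ)) * (-2:ℝ) ^ c) 1 := by
  have h1 : HasDerivAt (fun A : ℝ => A ^ a) ((a:ℝ) * 1 ^ (a-1)) 1 := hasDerivAt_pow a 1
  have hinv : HasDerivAt (fun A : ℝ => A⁻¹) (-(((1:ℝ)) ^ 2)⁻¹) 1 := hasDerivAt_inv one_ne_zero
  have h2 := hinv.pow b
  have h3 := ((hasDerivAt_pow 2 (1:ℝ)).neg).sub (hinv.pow 2)
  have h4 := h3.pow c
  have h5 := (h1.mul h2).mul h4
  refine h5.congr_deriv ?_
  norm_num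
  ring

end GBaux

/-- Proposition 4: `A ↦ ⟨G⟩(A)` has derivative `(-1)^n (3n - 6ℓ)` at `A = 1`,
where `n` is the number of vertices and `ℓ` the number of loops of `G`.
(This underlies `V_G'(1) = 0` and shows the bracket determines `ℓ`.) -/
theorem reducedBracket_deriv_at_one {n : ℕ} (M : Matrix (Fin n) (Fin n) (ZMod 2))
    (hsym : M.IsSymm) :
    HasDerivAt (fun A : ℝ => gBracketR M A)
      ((-1 : ℝ) ^ n * (3 * (n : ℝ) - 6 * (Fintype.card {i : Fin n // M i i = 1} : ℝ)))
      1 := by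
  classical
  have hexp : (fun A : ℝ => gBracketR M A)
      = fun A : ℝ => ∑ f : Fin n → ZMod 2,
          A ^ (n - Fintype.card {i // f i = 1})
            * A⁻¹ ^ (Fintype.card {i // f i = 1})
            * (-A ^ 2 - A⁻¹ ^ 2) ^ (GBaux.nu (M + Matrix.diagonal f)) := by
    funext A
    unfold gBracketR gBracket
    refine Finset.sum_congr rfl fun f _ => ?_
    have hrank : (Matrix.diagonal f).rank = Fintype.card {i // f i = 1} := by
      rw [Matrix.rank_diagonal]
      exact Fintype.card_congr (Equiv.subtypeEquivRight fun i => by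
        rcases GBaux.two_cases (f i) with h | h <;> rw [h] <;> decide)
    rw [Fintype.card_fin, hrank, GBaux.sub_rank_eq_nu]
  rw [hexp]
  have hder := HasDerivAt.fun_sum (u := Finset.univ) (x := (1:ℝ))
    (A := fun (f : Fin n → ZMod 2) (A : ℝ) =>
      A ^ (n - Fintype.card {i // f i = 1})
        * A⁻¹ ^ (Fintype.card {i // f i = 1})
        * (-A ^ 2 - A⁻¹ ^ 2) ^ (GBaux.nu (M + Matrix.diagonal f)))
    (A' := fun f => (((n - Fintype.card {i // f i = 1} : ℕ):ℝ)
        - (Fintype.card {i // f i = 1} : ℝ))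
        * (-2:ℝ) ^ (GBaux.nu (M + Matrix.diagonal f)))
    (fun f _ => GBaux.summand_deriv _ _ _)
  have hsum_eq : (∑ f : Fin n → ZMod 2,
        (((n - Fintype.card {i // f i = 1} : ℕ):ℝ) - (Fintype.card {i // f i = 1} : ℝ))
          * (-2:ℝ) ^ (GBaux.nu (M + Matrix.diagonal f)))
      = ∑ f : Fin n → ZMod 2,
        ((n:ℝ) - 2 * (Fintype.card {i // f i = 1} : ℝ))
          * (-2:ℝ) ^ (GBaux.nu (M + Matrix.diagonal f)) := by
    refine Finset.sum_congr rfl fun f _ => ?_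
    have hle : Fintype.card {i // f i = 1} ≤ n := by
      simpa using Fintype.card_subtype_le (fun i : Fin n => f i = 1)
    rw [Nat.cast_sub hle]
    ring
  have hval := GBaux.main_sum n M hsym
  rw [← hval, ← hsum_eq]
  exact hder
end

section
/- Let K be a commutative ring and A, B, d ∈ K. Let K_n denote the complete simple looped graph on n vertices (no loops; every two distinct vertices adjacent, so its Boolean adjacency matrix has (i,j) entry 1 for i ≠ j and 0 on the diagonal). Then d·[K_n](A,B,d) = (A+Bd)^n − A^n + A^n·d² if n is odd, and d·[K_n](A,B,d) = (A+Bd)^n − A^n + A^n·d if n is even. -/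
open Matrix BigOperators

/-- The complete (simple, loopless) graph on `n` vertices. -/
def completeM (n : ℕ) : Matrix (Fin n) (Fin n) (ZMod 2) :=
  Matrix.of fun i j => if i = j then 0 else 1

namespace GraphBracketAux

open Finset Module

variable {n : ℕ}

/-- Indicator function of a finset, valued in `ZMod 2`. -/
def ind (s : Finset (Fin n)) : Fin n → ZMod 2 := fun i => if i ∈ s then 1 else 0

/-- Finsets of `Fin n` correspond to functions `Fin n → ZMod 2`. -/
def finsetEquiv (n : ℕ) : Finset (Fin n) ≃ (Fin n → ZMod 2) where
  toFun s := ind s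
  invFun f := Finset.univ.filter (fun i => f i = 1)
  left_inv s := by
    ext i
    by_cases h : i ∈ s <;> simp [ind, h]
  right_inv f := by
    funext i
    rcases (by decide : ∀ a : ZMod 2, a = 0 ∨ a = 1) (f i) with h | h <;>
      simp [ind, h]

lemma rank_diag (s : Finset (Fin n)) : (Matrix.diagonal (ind s)).rank = s.card := by
  rw [Matrix.rank_diagonal, Fintype.card_subtype]
  congr 1
  ext i
  by_cases h : i ∈ s <;> simp [ind, h]

lemma mulVec_eq (f v : Fin n → ZMod 2) (i : Fin n) :
    (completeM n + Matrix.diagonal f).mulVec v i = (∑ j, v j) + (1 + f i) * v i := by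
  have key : ∀ a b : ZMod 2, a * b = b + (1 + a) * b := by decide
  have h : ∀ j, (completeM n + Matrix.diagonal f) i j * v j
      = v j + (if j = i then (1 + f i) * v i else 0) := by
    intro j
    by_cases hj : j = i
    · subst hj
      simp only [Matrix.add_apply, completeM, Matrix.of_apply, Matrix.diagonal_apply_eq,
        if_pos rfl, ite_true, eq_self_iff_true, zero_add]
      exact key _ _
    · simp [completeM, Matrix.add_apply, Matrix.diagonal_apply_ne' f hj, hj, Ne.symm hj]
  simp only [Matrix.mulVec, dotProduct, h, Finset.sum_add_distrib,
    Finset.sum_ite_eq', Finset.mem_univ, if_true]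

/-- Summation as a linear map. -/
def sumLM (n : ℕ) : (Fin n → ZMod 2) →ₗ[ZMod 2] ZMod 2 where
  toFun v := ∑ j, v j
  map_add' x y := by simp [Finset.sum_add_distrib]
  map_smul' c x := by simp [Finset.mul_sum]

/-- The map recording the total sum and the coordinates outside `s`. -/
def Phi (s : Finset (Fin n)) :
    (Fin n → ZMod 2) →ₗ[ZMod 2] ZMod 2 × ({i : Fin n // i ∉ s} → ZMod 2) :=
  (sumLM n).prod (LinearMap.pi fun i => LinearMap.proj i.1)

lemma ker_Phi_eq (s : Finset (Fin n)) (hs : s.Nonempty) :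
    LinearMap.ker (completeM n + Matrix.diagonal (ind s)).mulVecLin
      = LinearMap.ker (Phi s) := by
  obtain ⟨i0, hi0⟩ := hs
  have h11 : (1 + 1 : ZMod 2) = 0 := by decide
  ext v
  simp only [LinearMap.mem_ker, Matrix.mulVecLin_apply, Phi, LinearMap.prod_apply,
    Function.prod, Prod.mk_eq_zero, sumLM, LinearMap.coe_mk, AddHom.coe_mk, LinearMap.pi_apply,
    LinearMap.proj_apply]
  constructor
  · intro hv
    have hv' : ∀ i, (∑ j, v j) + (1 + ind s i) * v i = 0 := by
      intro i
      have := congrFun hv i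
      rwa [mulVec_eq] at this
    have hS : (∑ j, v j) = 0 := by
      have := hv' i0
      simpa [ind, hi0, h11] using this
    refine ⟨hS, ?_⟩
    funext i
    have h2 := hv' i.1
    simp only [ind, if_neg i.2, add_zero, one_mul, hS, zero_add] at h2
    simpa using h2
  · rintro ⟨hS, hout⟩
    funext i
    rw [mulVec_eq, hS, zero_add]
    by_cases hi : i ∈ s
    · simp [ind, hi, h11]
    · have : v i = 0 := congrFun hout ⟨i, hi⟩
      simp [ind, hi, this]

lemma Phi_surj (s : Finset (Fin n)) (hs : s.Nonempty) : Function.Surjective (Phi s) := by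
  obtain ⟨i0, hi0⟩ := hs
  rintro ⟨c, w⟩
  set W : ZMod 2 := ∑ j : {i : Fin n // i ∉ s}, w j with hW
  set v : Fin n → ZMod 2 :=
    fun i => if h : i ∈ s then (if i = i0 then c - W else 0) else w ⟨i, h⟩ with hv
  refine ⟨v, ?_⟩
  have hsum : (∑ j, v j) = c := by
    rw [← Finset.sum_filter_add_sum_filter_not Finset.univ (· ∈ s)]
    have e1 : Finset.univ.filter (· ∈ s) = s := by ext; simp
    have e2 : ∑ j ∈ s, v j = c - W := by
      have : ∀ j ∈ s, v j = if j = i0 then c - W else 0 := by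
        intro j hj; simp [hv, dif_pos hj]
      rw [Finset.sum_congr rfl this, Finset.sum_ite_eq' s i0 (fun _ => c - W), if_pos hi0]
    have e3 : ∑ j ∈ Finset.univ.filter (fun j => ¬ j ∈ s), v j = W := by
      rw [Finset.sum_subtype (Finset.univ.filter (fun j => ¬ j ∈ s))
        (p := fun j => j ∉ s) (by simp) v]
      refine Finset.sum_congr rfl fun j _ => ?_
      simp [hv, dif_neg j.2]
    rw [e1, e2, e3]
    ring
  have hout : (fun i : {i : Fin n // i ∉ s} => v i.1) = w := by
    funext i
    simp [hv, dif_neg i.2]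
  simp only [Phi, LinearMap.prod_apply, Function.prod, sumLM, LinearMap.coe_mk, AddHom.coe_mk,
    LinearMap.pi_apply, LinearMap.proj_apply, Prod.mk.injEq]
  exact ⟨hsum, hout⟩

lemma rank_nullity (M : Matrix (Fin n) (Fin n) (ZMod 2)) :
    M.rank + finrank (ZMod 2) (LinearMap.ker M.mulVecLin) = n := by
  have h := LinearMap.finrank_range_add_finrank_ker M.mulVecLin
  rw [Module.finrank_fintype_fun_eq_card, Fintype.card_fin] at h
  exact h

lemma nullity_nonempty (s : Finset (Fin n)) (hs : s.Nonempty) :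
    n - (completeM n + Matrix.diagonal (ind s)).rank = s.card - 1 := by
  have h := rank_nullity (completeM n + Matrix.diagonal (ind s))
  have hk : finrank (ZMod 2)
      (LinearMap.ker (completeM n + Matrix.diagonal (ind s)).mulVecLin) = s.card - 1 := by
    rw [ker_Phi_eq s hs]
    have h2 := LinearMap.finrank_range_add_finrank_ker (Phi s)
    have h3 : LinearMap.range (Phi s) = ⊤ := LinearMap.range_eq_top.mpr (Phi_surj s hs)
    rw [h3, finrank_top, Module.finrank_fintype_fun_eq_card, Fintype.card_fin,
      Module.finrank_prod, Module.finrank_self, Module.finrank_fintype_fun_eq_card,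
      Fintype.card_subtype_compl, Fintype.card_fin, Fintype.card_coe] at h2
    have hle : s.card ≤ n := by
      simpa using Finset.card_le_card (Finset.subset_univ s)
    have hpos : 1 ≤ s.card := Finset.card_pos.mpr hs
    omega
  have hle : s.card ≤ n := by
    simpa using Finset.card_le_card (Finset.subset_univ s)
  have hpos : 1 ≤ s.card := Finset.card_pos.mpr hs
  omega

lemma ind_empty : ind (∅ : Finset (Fin n)) = 0 := by
  funext i; simp [ind]

lemma nullity_empty :
    n - (completeM n + Matrix.diagonal (ind (∅ : Finset (Fin n)))).rank
      = if Odd n then 1 else 0 := by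
  have h := rank_nullity (completeM n + Matrix.diagonal (ind (∅ : Finset (Fin n))))
  have hmv : ∀ v : Fin n → ZMod 2, ∀ i,
      (completeM n + Matrix.diagonal (ind (∅ : Finset (Fin n)))).mulVec v i
        = (∑ j, v j) + v i := by
    intro v i
    rw [mulVec_eq]
    simp [ind]
  by_cases hodd : Odd n
  · have hcast : ((n : ℕ) : ZMod 2) = 1 := by
      rw [← ZMod.natCast_mod n 2, Nat.odd_iff.mp hodd]
      norm_num
    have hker : LinearMap.ker
        (completeM n + Matrix.diagonal (ind (∅ : Finset (Fin n)))).mulVecLin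
        = Submodule.span (ZMod 2) {(fun _ => 1 : Fin n → ZMod 2)} := by
      ext v
      constructor
      · intro hv
        have hv' : ∀ i, (∑ j, v j) + v i = 0 := by
          intro i
          have := congrFun ((LinearMap.mem_ker).mp hv) i
          rwa [Matrix.mulVecLin_apply, hmv] at this
        have hvi : ∀ i, v i = (∑ j, v j) := by
          intro i
          have := hv' i
          have key : ∀ a b : ZMod 2, a + b = 0 → b = a := by decide
          exact key _ _ this
        rw [Submodule.mem_span_singleton]
        refine ⟨∑ j, v j, ?_⟩
        funext i
        simp [hvi i]
      · intro hv
        rw [Submodule.mem_span_singleton] at hv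
        obtain ⟨a, ha⟩ := hv
        rw [LinearMap.mem_ker, ← ha]
        rw [_root_.map_smul]
        have hone : (completeM n + Matrix.diagonal
            (ind (∅ : Finset (Fin n)))).mulVecLin (fun _ => 1) = 0 := by
          funext i
          rw [Matrix.mulVecLin_apply, hmv]
          simp [hcast]
          decide
        rw [hone, smul_zero]
    rw [if_pos hodd]
    have hne : (fun _ => 1 : Fin n → ZMod 2) ≠ 0 := by
      intro hcon
      have hpos : 0 < n := hodd.pos
      have := congrFun hcon ⟨0, hpos⟩
      simp at this
    have hfr : finrank (ZMod 2) (LinearMap.ker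
        (completeM n + Matrix.diagonal (ind (∅ : Finset (Fin n)))).mulVecLin) = 1 := by
      rw [hker]
      exact finrank_span_singleton hne
    omega
  · have hcast : ((n : ℕ) : ZMod 2) = 0 := by
      rw [← ZMod.natCast_mod n 2, Nat.even_iff.mp (Nat.not_odd_iff_even.mp hodd)]
      norm_num
    have hker : LinearMap.ker
        (completeM n + Matrix.diagonal (ind (∅ : Finset (Fin n)))).mulVecLin = ⊥ := by
      rw [eq_bot_iff]
      intro v hv
      have hv' : ∀ i, (∑ j, v j) + v i = 0 := by
        intro i
        have := congrFun ((LinearMap.mem_ker).mp hv) i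
        rwa [Matrix.mulVecLin_apply, hmv] at this
      have hvi : ∀ i, v i = (∑ j, v j) := by
        intro i
        have := hv' i
        have key : ∀ a b : ZMod 2, a + b = 0 → b = a := by decide
        exact key _ _ this
      have hS : (∑ j, v j) = 0 := by
        have : (∑ j, v j) = ∑ _j : Fin n, (∑ j, v j) :=
          Finset.sum_congr rfl fun j _ => hvi j
        rw [Finset.sum_const, Finset.card_univ, Fintype.card_fin, nsmul_eq_mul,
          hcast, zero_mul] at this
        exact this
      have : v = 0 := by
        funext i
        rw [hvi i, hS]
        rfl
      simp [this]
    rw [if_neg hodd]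
    have hfr : finrank (ZMod 2) (LinearMap.ker
        (completeM n + Matrix.diagonal (ind (∅ : Finset (Fin n)))).mulVecLin) = 0 := by
      rw [hker]
      exact finrank_bot _ _
    omega

end GraphBracketAux

open GraphBracketAux in
/-- Example 1: `d·[K_n] = (A+Bd)^n - A^n + A^n·d²` if `n` is odd, and
`d·[K_n] = (A+Bd)^n - A^n + A^n·d` if `n` is even. -/
theorem graphBracket_complete {K : Type*} [CommRing K] (A B d : K) (n : ℕ) :
    d * gBracket (completeM n) A B d =
      (A + B * d) ^ n - A ^ n + A ^ n * (if Odd n then d ^ 2 else d) := by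
  classical
  have hG : gBracket (completeM n) A B d
      = ∑ s : Finset (Fin n), A ^ (n - s.card) * B ^ s.card
          * d ^ (n - (completeM n + Matrix.diagonal (ind s)).rank) := by
    refine (Fintype.sum_equiv (finsetEquiv n) _ _ fun s => ?_).symm
    simp only [finsetEquiv, Equiv.coe_fn_mk, Fintype.card_fin, rank_diag]
  have hexp : (A + B * d) ^ n = ∑ s : Finset (Fin n), (B * d) ^ s.card * A ^ (n - s.card) := by
    have h := Finset.prod_add (fun _ : Fin n => B * d) (fun _ : Fin n => A) Finset.univ
    simp only [Finset.prod_const, Finset.powerset_univ, Finset.card_univ, Fintype.card_fin] at h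
    rw [add_comm A (B * d), h]
    refine Finset.sum_congr rfl fun s _ => ?_
    rw [Finset.card_sdiff_of_subset (Finset.subset_univ s), Finset.card_univ, Fintype.card_fin]
  have hexp2 : (A + B * d) ^ n
      = A ^ n + ∑ s ∈ Finset.univ.erase (∅ : Finset (Fin n)),
          (B * d) ^ s.card * A ^ (n - s.card) := by
    rw [hexp, ← Finset.add_sum_erase _ _ (Finset.mem_univ (∅ : Finset (Fin n)))]
    simp
  have hterms : ∑ s ∈ Finset.univ.erase (∅ : Finset (Fin n)),
        d * (A ^ (n - s.card) * B ^ s.card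
          * d ^ (n - (completeM n + Matrix.diagonal (ind s)).rank))
      = ∑ s ∈ Finset.univ.erase (∅ : Finset (Fin n)),
          (B * d) ^ s.card * A ^ (n - s.card) := by
    refine Finset.sum_congr rfl fun s hsmem => ?_
    have hs : s.Nonempty :=
      Finset.nonempty_iff_ne_empty.mpr (Finset.mem_erase.mp hsmem).1
    rw [nullity_nonempty s hs]
    have hk : s.card - 1 + 1 = s.card := Nat.succ_pred_eq_of_pos (Finset.card_pos.mpr hs)
    calc d * (A ^ (n - s.card) * B ^ s.card * d ^ (s.card - 1))
        = A ^ (n - s.card) * B ^ s.card * (d ^ (s.card - 1) * d) := by ring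
      _ = A ^ (n - s.card) * B ^ s.card * d ^ s.card := by rw [← pow_succ, hk]
      _ = (B * d) ^ s.card * A ^ (n - s.card) := by rw [mul_pow]; ring
  rw [hG, Finset.mul_sum,
    ← Finset.add_sum_erase _ _ (Finset.mem_univ (∅ : Finset (Fin n))), hterms, hexp2,
    nullity_empty, Finset.card_empty]
  by_cases hodd : Odd n
  · simp only [if_pos hodd, pow_zero, Nat.sub_zero, pow_one, mul_one]
    ring
  · simp only [if_neg hodd, pow_zero, Nat.sub_zero, mul_one]
    ring
end

section
/- Let K be a field, A, B, d ∈ K with A ≠ 0, and n ≥ 1. Then the lollipop graph satisfies [L_n](A,B,d) = (A − A⁻¹B²)^n + A⁻¹·B·∑_{i=0}^{n−1} (A − A⁻¹B²)^i · [P_{n−i}](A,B,d). -/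
set_option maxHeartbeats 1600000

open Matrix BigOperators

/-- The simple path on `k` vertices `0, 1, …, k-1` (vertex `i` adjacent to `j`
iff `|i - j| = 1`), no loops. -/
def pathM (k : ℕ) : Matrix (Fin k) (Fin k) (ZMod 2) :=
  Matrix.of fun i j => if i.1 + 1 = j.1 ∨ j.1 + 1 = i.1 then 1 else 0

/-- The lollipop on `k` vertices: the path `pathM k` with a loop added at the
end vertex `0`. -/
def lolliM (k : ℕ) : Matrix (Fin k) (Fin k) (ZMod 2) :=
  Matrix.of fun i j => if i.1 + 1 = j.1 ∨ j.1 + 1 = i.1 ∨ (i.1 = 0 ∧ j.1 = 0) then 1 else 0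

/-! ### Auxiliary linear-algebra lemmas -/

/-- The product of two submodules is linearly equivalent to the product of the modules. -/
noncomputable def mySubProdEquiv {R M M' : Type*} [Ring R] [AddCommGroup M] [AddCommGroup M']
    [Module R M] [Module R M'] (p : Submodule R M) (q : Submodule R M') :
    (p.prod q) ≃ₗ[R] p × q where
  toFun x := (⟨x.1.1, x.2.1⟩, ⟨x.1.2, x.2.2⟩)
  invFun x := ⟨(x.1.1, x.2.1), ⟨x.1.2, x.2.2⟩⟩
  map_add' _ _ := rfl
  map_smul' _ _ := rfl
  left_inv _ := rfl
  right_inv _ := rfl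

lemma myFinrankProd {R M M' : Type*} [Field R] [AddCommGroup M] [AddCommGroup M']
    [Module R M] [Module R M'] [FiniteDimensional R M] [FiniteDimensional R M']
    (p : Submodule R M) (q : Submodule R M') :
    Module.finrank R (p.prod q) = Module.finrank R p + Module.finrank R q := by
  rw [(mySubProdEquiv p q).finrank_eq, Module.finrank_prod]

lemma myRangeProdMap {R M M₂ M₃ M₄ : Type*} [Ring R] [AddCommGroup M] [AddCommGroup M₂]
    [AddCommGroup M₃] [AddCommGroup M₄] [Module R M] [Module R M₂] [Module R M₃] [Module R M₄]
    (f : M →ₗ[R] M₂) (g : M₃ →ₗ[R] M₄) :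
    LinearMap.range (f.prodMap g) = (LinearMap.range f).prod (LinearMap.range g) := by
  ext x
  constructor
  · rintro ⟨y, rfl⟩
    exact ⟨⟨y.1, rfl⟩, ⟨y.2, rfl⟩⟩
  · rintro ⟨⟨y₁, h₁⟩, ⟨y₂, h₂⟩⟩
    exact ⟨(y₁, y₂), Prod.ext h₁ h₂⟩

/-- The rank of a block-diagonal matrix is the sum of the ranks of the blocks. -/
lemma myRankFromBlocksDiag {K : Type*} [Field K] {l m : Type*} [Fintype l] [Fintype m]
    (X : Matrix l l K) (Y : Matrix m m K) :
    (Matrix.fromBlocks X 0 0 Y).rank = X.rank + Y.rank := by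
  classical
  let e : (l ⊕ m → K) ≃ₗ[K] (l → K) × (m → K) :=
    LinearEquiv.sumArrowLequivProdArrow l m K K
  have key : (Matrix.fromBlocks X 0 0 Y).mulVecLin
      = (e.symm.toLinearMap ∘ₗ (X.mulVecLin.prodMap Y.mulVecLin)) ∘ₗ e.toLinearMap := by
    apply LinearMap.ext
    intro x
    funext i
    cases i with
    | inl i =>
      simp [Matrix.mulVecLin_apply, Matrix.mulVec, dotProduct, Fintype.sum_sum_type, e,
        LinearEquiv.sumArrowLequivProdArrow, Matrix.fromBlocks]
    | inr i =>
      simp [Matrix.mulVecLin_apply, Matrix.mulVec, dotProduct, Fintype.sum_sum_type, e,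
        LinearEquiv.sumArrowLequivProdArrow, Matrix.fromBlocks]
  rw [Matrix.rank, key, LinearMap.range_comp, LinearEquiv.range, Submodule.map_top,
    LinearMap.range_comp, LinearEquiv.finrank_map_eq, myRangeProdMap, myFinrankProd,
    Matrix.rank, Matrix.rank]

/-- Pivoting at an entry `N 0 0 = 1`: the rank drops to the rank of the Schur complement. -/
lemma myPivot {K : Type*} [Field K] {m : ℕ} (N : Matrix (Fin (m+1)) (Fin (m+1)) K)
    (h : N 0 0 = 1) :
    N.rank = 1 + (Matrix.of fun i j : Fin m =>
      N i.succ j.succ - N i.succ 0 * N 0 j.succ).rank := by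
  classical
  let e : Fin 1 ⊕ Fin m ≃ Fin (m+1) := finSumFinEquiv.trans (finCongr (Nat.add_comm 1 m))
  have he0 : e (Sum.inl 0) = 0 := by
    apply Fin.ext
    simp [e, finSumFinEquiv]
  have heS : ∀ i : Fin m, e (Sum.inr i) = i.succ := by
    intro i
    apply Fin.ext
    simp [e, finSumFinEquiv, Nat.add_comm]
  let M' := N.submatrix e e
  have hr : N.rank = M'.rank := (Matrix.rank_submatrix N e e).symm
  have hX : M'.toBlocks₁₁ = 1 := by
    ext i j
    fin_cases i; fin_cases j
    simp [M', Matrix.toBlocks₁₁, he0, h]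
  have hM' : M' = Matrix.fromBlocks 1 M'.toBlocks₁₂ M'.toBlocks₂₁ M'.toBlocks₂₂ := by
    rw [← hX, Matrix.fromBlocks_toBlocks]
  have : Invertible (1 : Matrix (Fin 1) (Fin 1) K) := invertibleOne
  have hdecomp := Matrix.fromBlocks_eq_of_invertible₁₁ (1 : Matrix (Fin 1) (Fin 1) K)
    M'.toBlocks₁₂ M'.toBlocks₂₁ M'.toBlocks₂₂
  rw [hr, hM', hdecomp]
  rw [Matrix.rank_mul_eq_left_of_isUnit_det, Matrix.rank_mul_eq_right_of_isUnit_det]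
  · rw [myRankFromBlocksDiag]
    congr 1
    · simp [Matrix.rank_one]
    · congr 1
      ext i j
      simp only [Matrix.sub_apply, Matrix.of_apply, invOf_one, Matrix.mul_one,
        Matrix.toBlocks₂₂, Matrix.toBlocks₂₁, Matrix.toBlocks₁₂, Matrix.mul_apply,
        Fin.sum_univ_one]
      simp [M', heS, he0]
  · rw [Matrix.det_fromBlocks_zero₁₂]
    simp
  · rw [Matrix.det_fromBlocks_zero₂₁]
    simp

/-! ### Combinatorial lemmas about the specific matrices -/

lemma myWtZero {m : ℕ} (h : Fin m → ZMod 2) :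
    (Matrix.diagonal (Fin.cons (0 : ZMod 2) h)).rank = (Matrix.diagonal h).rank := by
  rw [Matrix.rank_diagonal, Matrix.rank_diagonal, Fintype.card_subtype, Fintype.card_subtype,
    Finset.card_filter, Finset.card_filter, Fin.sum_univ_succ]
  simp [Fin.cons_succ]

lemma myWtOne {m : ℕ} (h : Fin m → ZMod 2) :
    (Matrix.diagonal (Fin.cons (1 : ZMod 2) h)).rank = (Matrix.diagonal h).rank + 1 := by
  rw [Matrix.rank_diagonal, Matrix.rank_diagonal, Fintype.card_subtype, Fintype.card_subtype,
    Finset.card_filter, Finset.card_filter, Fin.sum_univ_succ]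
  simp [Fin.cons_succ, Fin.cons_zero]
  omega

lemma myWtLe {m : ℕ} (h : Fin m → ZMod 2) : (Matrix.diagonal h).rank ≤ m := by
  have := Matrix.rank_le_card_width (Matrix.diagonal h)
  simpa using this

lemma myLolliAdd {m : ℕ} (b : ZMod 2) (h : Fin m → ZMod 2) :
    lolliM (m+1) + Matrix.diagonal (Fin.cons b h)
      = pathM (m+1) + Matrix.diagonal (Fin.cons (b+1) h) := by
  ext i j
  simp only [Matrix.add_apply, Matrix.diagonal_apply, lolliM, pathM, Matrix.of_apply]
  induction i using Fin.cases with
  | zero =>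
    induction j using Fin.cases with
    | zero => simp; ring
    | succ j =>
      simp only [Fin.val_zero, Fin.val_succ, Fin.ext_iff, Fin.cons_succ, Fin.cons_zero]
      split_ifs <;> first | rfl | omega | simp_all
  | succ i =>
    induction j using Fin.cases with
    | zero =>
      simp only [Fin.val_zero, Fin.val_succ, Fin.ext_iff, Fin.cons_succ, Fin.cons_zero]
      split_ifs <;> first | rfl | omega | simp_all
    | succ j =>
      simp only [Fin.val_succ, Fin.ext_iff, Fin.cons_succ]
      split_ifs <;> first | rfl | omega | simp_all

lemma mySchur {m : ℕ} (h : Fin m → ZMod 2) :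
    (Matrix.of fun i j : Fin m =>
        (pathM (m+1) + Matrix.diagonal (Fin.cons 1 h)) i.succ j.succ
          - (pathM (m+1) + Matrix.diagonal (Fin.cons 1 h)) i.succ 0
            * (pathM (m+1) + Matrix.diagonal (Fin.cons 1 h)) 0 j.succ)
      = lolliM m + Matrix.diagonal h := by
  have h2 : ∀ x y : ZMod 2, x - y = x + y := CharTwo.sub_eq_add
  ext i j
  simp only [Matrix.of_apply, Matrix.add_apply, Matrix.diagonal_apply, pathM, lolliM,
    Fin.cons_succ, Fin.cons_zero, Fin.val_succ, Fin.val_zero, Fin.ext_iff, h2]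
  split_ifs <;> (try exact rfl) <;> simp_all <;> first | rfl | omega | decide | ring1

/-! ### Summation lemmas -/

lemma mySumSplit {K : Type*} [AddCommMonoid K] {n : ℕ} (F : (Fin (n+1) → ZMod 2) → K) :
    ∑ f, F f = (∑ h : Fin n → ZMod 2, F (Fin.cons 0 h))
      + ∑ h : Fin n → ZMod 2, F (Fin.cons 1 h) := by
  rw [← Equiv.sum_comp (Fin.consEquiv (fun _ : Fin (n+1) => ZMod 2)) F]
  rw [Fintype.sum_prod_type]
  rw [show (Finset.univ : Finset (ZMod 2)) = {0, 1} by decide]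
  rw [Finset.sum_insert (by decide), Finset.sum_singleton]
  rfl

lemma myGBracketZero {K : Type*} [Field K] (M : Matrix (Fin 0) (Fin 0) (ZMod 2)) (A B d : K) :
    gBracket M A B d = 1 := by
  have h0 : ∀ X : Matrix (Fin 0) (Fin 0) (ZMod 2), X.rank = 0 := fun X =>
    Nat.le_zero.mp (le_trans (Matrix.rank_le_card_width X) (by simp))
  simp [gBracket, h0]

lemma myN00 {m : ℕ} (h : Fin m → ZMod 2) :
    (pathM (m+1) + Matrix.diagonal (Fin.cons 1 h)) 0 0 = 1 := by
  simp [pathM, Matrix.add_apply, Matrix.diagonal_apply, Fin.cons_zero]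

lemma myKeyRank {m : ℕ} (h : Fin m → ZMod 2) :
    (pathM (m+1) + Matrix.diagonal (Fin.cons 1 h)).rank
      = 1 + (lolliM m + Matrix.diagonal h).rank := by
  rw [myPivot _ (myN00 h), mySchur]

/-- The key recursion: `[L_{m+1}] = (A - A⁻¹B²)[L_m] + A⁻¹B[P_{m+1}]`. -/
lemma myGBrec {K : Type*} [Field K] (A B d : K) (hA : A ≠ 0) (m : ℕ) :
    gBracket (lolliM (m+1)) A B d
      = (A - A⁻¹ * B^2) * gBracket (lolliM m) A B d
        + A⁻¹ * B * gBracket (pathM (m+1)) A B d := by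
  have hcons0 : ((0 : ZMod 2) + 1) = 1 := by decide
  have hcons1 : ((1 : ZMod 2) + 1) = 0 := by decide
  have key1 : ∀ h : Fin m → ZMod 2,
      (lolliM (m+1) + Matrix.diagonal (Fin.cons 0 h)).rank
        = 1 + (lolliM m + Matrix.diagonal h).rank := by
    intro h
    rw [myLolliAdd 0 h, hcons0, myKeyRank]
  have key3 : ∀ h : Fin m → ZMod 2,
      (lolliM (m+1) + Matrix.diagonal (Fin.cons 1 h)).rank
        = (pathM (m+1) + Matrix.diagonal (Fin.cons 0 h)).rank := by
    intro h
    rw [myLolliAdd 1 h, hcons1]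
  simp only [gBracket, Fintype.card_fin]
  rw [mySumSplit]
  rw [mySumSplit]
  have e1 : ∑ h : Fin m → ZMod 2,
      A ^ (m + 1 - (Matrix.diagonal (Fin.cons 0 h)).rank)
        * B ^ (Matrix.diagonal (Fin.cons 0 h)).rank
        * d ^ (m + 1 - (lolliM (m+1) + Matrix.diagonal (Fin.cons 0 h)).rank)
      = A * ∑ h : Fin m → ZMod 2,
          A ^ (m - (Matrix.diagonal h).rank) * B ^ (Matrix.diagonal h).rank
            * d ^ (m - (lolliM m + Matrix.diagonal h).rank) := by
    rw [Finset.mul_sum]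
    refine Finset.sum_congr rfl fun h _ => ?_
    rw [myWtZero, key1, show m + 1 - (1 + (lolliM m + Matrix.diagonal h).rank)
        = m - (lolliM m + Matrix.diagonal h).rank by omega,
      show m + 1 - (Matrix.diagonal h).rank = (m - (Matrix.diagonal h).rank) + 1 by
        have := myWtLe h; omega, pow_succ]
    ring
  have e2 : ∑ h : Fin m → ZMod 2,
      A ^ (m + 1 - (Matrix.diagonal (Fin.cons 1 h)).rank)
        * B ^ (Matrix.diagonal (Fin.cons 1 h)).rank
        * d ^ (m + 1 - (lolliM (m+1) + Matrix.diagonal (Fin.cons 1 h)).rank)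
      = A⁻¹ * B * ∑ h : Fin m → ZMod 2,
          A ^ (m + 1 - (Matrix.diagonal (Fin.cons 0 h)).rank)
            * B ^ (Matrix.diagonal (Fin.cons 0 h)).rank
            * d ^ (m + 1 - (pathM (m+1) + Matrix.diagonal (Fin.cons 0 h)).rank) := by
    rw [Finset.mul_sum]
    refine Finset.sum_congr rfl fun h _ => ?_
    have hwle := myWtLe h
    rw [myWtOne, myWtZero, key3,
      show m + 1 - ((Matrix.diagonal h).rank + 1) = m - (Matrix.diagonal h).rank by omega,
      show m + 1 - (Matrix.diagonal h).rank = (m - (Matrix.diagonal h).rank) + 1 by omega,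
      pow_succ, pow_succ]
    field_simp
  have e4 : ∑ h : Fin m → ZMod 2,
      A ^ (m + 1 - (Matrix.diagonal (Fin.cons 1 h)).rank)
        * B ^ (Matrix.diagonal (Fin.cons 1 h)).rank
        * d ^ (m + 1 - (pathM (m+1) + Matrix.diagonal (Fin.cons 1 h)).rank)
      = B * ∑ h : Fin m → ZMod 2,
          A ^ (m - (Matrix.diagonal h).rank) * B ^ (Matrix.diagonal h).rank
            * d ^ (m - (lolliM m + Matrix.diagonal h).rank) := by
    rw [Finset.mul_sum]
    refine Finset.sum_congr rfl fun h _ => ?_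
    have hwle := myWtLe h
    rw [myWtOne, myKeyRank,
      show m + 1 - ((Matrix.diagonal h).rank + 1) = m - (Matrix.diagonal h).rank by omega,
      show m + 1 - (1 + (lolliM m + Matrix.diagonal h).rank)
        = m - (lolliM m + Matrix.diagonal h).rank by omega,
      pow_succ]
    ring
  rw [e1, e2, e4]
  ring

/-- Example 2: `[L_n] = (A - A⁻¹B²)^n + A⁻¹B ∑_{i=0}^{n-1} (A - A⁻¹B²)^i [P_{n-i}]`. -/
theorem graphBracket_lollipop {K : Type*} [Field K] (A B d : K) (hA : A ≠ 0)
    (n : ℕ) (hn : 1 ≤ n) :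
    gBracket (lolliM n) A B d =
      (A - A⁻¹ * B ^ 2) ^ n +
        A⁻¹ * B * ∑ i ∈ Finset.range n,
          (A - A⁻¹ * B ^ 2) ^ i * gBracket (pathM (n - i)) A B d := by
  clear hn
  induction n with
  | zero => simp [myGBracketZero]
  | succ m ih =>
    rw [myGBrec A B d hA m, ih, Finset.sum_range_succ']
    simp only [pow_zero, Nat.sub_zero, one_mul]
    rw [show (∑ k ∈ Finset.range m,
          (A - A⁻¹ * B ^ 2) ^ (k + 1) * gBracket (pathM (m + 1 - (k + 1))) A B d)
        = (A - A⁻¹ * B ^ 2) * ∑ k ∈ Finset.range m,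
            (A - A⁻¹ * B ^ 2) ^ k * gBracket (pathM (m - k)) A B d from by
      rw [Finset.mul_sum]
      refine Finset.sum_congr rfl fun k _ => ?_
      have hk : m + 1 - (k + 1) = m - k := by omega
      rw [hk]; ring]
    ring
end

section
/- Let K be a field, A, B, d ∈ K with A ≠ 0, and n ≥ 4. Then the path brackets satisfy the linear recurrence [P_n](A,B,d) = A⁻¹B²·[P_{n−1}](A,B,d) + (A+B)(2A−B)·[P_{n−2}](A,B,d) − (A²+AB)·(A − A⁻¹B²)²·[P_{n−4}](A,B,d). -/
open Matrix BigOperators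

namespace GBr

def cp : ∀ k, (Fin k → ZMod 2) → ZMod 2 × ZMod 2
  | 0, _ => (1, 0)
  | k+1, g => ((g (Fin.last k)) * (cp k (Fin.init g)).1 + (cp k (Fin.init g)).2,
               (cp k (Fin.init g)).1)

lemma cp_snoc (k : ℕ) (g : Fin k → ZMod 2) (a : ZMod 2) :
    cp (k+1) (Fin.snoc g a) = (a * (cp k g).1 + (cp k g).2, (cp k g).1) := by
  simp [cp]

lemma cp_cases (k : ℕ) (g : Fin k → ZMod 2) :
    cp k g = (0,1) ∨ cp k g = (1,0) ∨ cp k g = (1,1) := by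
  induction k with
  | zero => simp [cp]
  | succ k ih =>
    have h2 : ∀ a : ZMod 2, a = 0 ∨ a = 1 := by decide
    rcases h2 (g (Fin.last k)) with ha | ha <;>
      rcases ih (Fin.init g) with h | h | h <;>
        simp [cp, h, ha, show (1:ZMod 2)+1=0 by decide]

def wt {k : ℕ} (g : Fin k → ZMod 2) : ℕ := (Finset.univ.filter fun i => g i ≠ 0).card

lemma wt_le {k : ℕ} (g : Fin k → ZMod 2) : wt g ≤ k := by
  simpa [wt] using (Finset.card_filter_le Finset.univ fun i => g i ≠ 0)

lemma wt_snoc {k : ℕ} (g : Fin k → ZMod 2) (a : ZMod 2) :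
    wt (Fin.snoc g a) = wt g + if a ≠ 0 then 1 else 0 := by
  simp only [wt, Finset.card_filter]
  rw [Fin.sum_univ_castSucc]
  simp

variable {K : Type*} [Field K]

def mono (A B : K) {k : ℕ} (g : Fin k → ZMod 2) : K := A ^ (k - wt g) * B ^ (wt g)

lemma mono_snoc0 (A B : K) {k : ℕ} (g : Fin k → ZMod 2) :
    mono A B (Fin.snoc g (0 : ZMod 2)) = A * mono A B g := by
  have h := wt_le g
  simp only [mono, wt_snoc]
  norm_num
  rw [show k + 1 - wt g = (k - wt g) + 1 by omega, pow_succ]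
  ring

lemma mono_snoc1 (A B : K) {k : ℕ} (g : Fin k → ZMod 2) :
    mono A B (Fin.snoc g (1 : ZMod 2)) = B * mono A B g := by
  have h := wt_le g
  simp only [mono, wt_snoc]
  norm_num
  rw [show k + 1 - (wt g + 1) = k - wt g by omega, pow_succ]
  ring

def trip (A B : K) (k : ℕ) : K × K × K :=
  (∑ g : Fin k → ZMod 2, if cp k g = (0,1) then mono A B g else 0,
   ∑ g : Fin k → ZMod 2, if cp k g = (1,0) then mono A B g else 0,
   ∑ g : Fin k → ZMod 2, if cp k g = (1,1) then mono A B g else 0)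

lemma sum_split {k : ℕ} (F : (Fin (k+1) → ZMod 2) → K) :
    (∑ g : Fin (k+1) → ZMod 2, F g)
      = ∑ g : Fin k → ZMod 2, (F (Fin.snoc g 0) + F (Fin.snoc g 1)) := by
  rw [← (Fin.snocEquiv (fun _ => ZMod 2)).sum_comp F, Fintype.sum_prod_type]
  rw [show (Finset.univ : Finset (ZMod 2)) = {0, 1} by decide, Finset.sum_insert (by decide),
    Finset.sum_singleton, ← Finset.sum_add_distrib]
  simp [Fin.snocEquiv]

lemma trip_zero (A B : K) : trip A B 0 = (0, 1, 0) := by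
  simp [trip, cp, mono, wt]

lemma trip_succ (A B : K) (k : ℕ) :
    trip A B (k+1) = (A * (trip A B k).2.1 + B * (trip A B k).2.2,
      (A + B) * (trip A B k).1,
      B * (trip A B k).2.1 + A * (trip A B k).2.2) := by
  refine Prod.ext ?_ (Prod.ext ?_ ?_)
  · show (∑ g : Fin (k+1) → ZMod 2, if cp (k+1) g = (0,1) then mono A B g else 0) = _
    rw [sum_split]
    have key : ∀ g : Fin k → ZMod 2,
        ((if cp (k+1) (Fin.snoc g 0) = (0,1) then mono A B (Fin.snoc g 0) else 0)
          + (if cp (k+1) (Fin.snoc g 1) = (0,1) then mono A B (Fin.snoc g 1) else 0))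
        = A * (if cp k g = (1,0) then mono A B g else 0)
          + B * (if cp k g = (1,1) then mono A B g else 0) := by
      intro g
      rcases cp_cases k g with h | h | h <;>
        simp [cp_snoc, h, mono_snoc0, mono_snoc1, Prod.ext_iff, show (1:ZMod 2)+1=0 by decide]
    rw [Finset.sum_congr rfl fun g _ => key g, Finset.sum_add_distrib,
      ← Finset.mul_sum, ← Finset.mul_sum]
    rfl
  · show (∑ g : Fin (k+1) → ZMod 2, if cp (k+1) g = (1,0) then mono A B g else 0) = _
    rw [sum_split]
    have key : ∀ g : Fin k → ZMod 2,
        ((if cp (k+1) (Fin.snoc g 0) = (1,0) then mono A B (Fin.snoc g 0) else 0)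
          + (if cp (k+1) (Fin.snoc g 1) = (1,0) then mono A B (Fin.snoc g 1) else 0))
        = (A + B) * (if cp k g = (0,1) then mono A B g else 0) := by
      intro g
      rcases cp_cases k g with h | h | h <;>
        simp [cp_snoc, h, mono_snoc0, mono_snoc1, Prod.ext_iff, show (1:ZMod 2)+1=0 by decide] <;> ring
    rw [Finset.sum_congr rfl fun g _ => key g, ← Finset.mul_sum]
    rfl
  · show (∑ g : Fin (k+1) → ZMod 2, if cp (k+1) g = (1,1) then mono A B g else 0) = _
    rw [sum_split]
    have key : ∀ g : Fin k → ZMod 2,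
        ((if cp (k+1) (Fin.snoc g 0) = (1,1) then mono A B (Fin.snoc g 0) else 0)
          + (if cp (k+1) (Fin.snoc g 1) = (1,1) then mono A B (Fin.snoc g 1) else 0))
        = B * (if cp k g = (1,0) then mono A B g else 0)
          + A * (if cp k g = (1,1) then mono A B g else 0) := by
      intro g
      rcases cp_cases k g with h | h | h <;>
        simp [cp_snoc, h, mono_snoc0, mono_snoc1, Prod.ext_iff, show (1:ZMod 2)+1=0 by decide]
    rw [Finset.sum_congr rfl fun g _ => key g, Finset.sum_add_distrib,
      ← Finset.mul_sum, ← Finset.mul_sum]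
    rfl

/-- Truncated continuant pair of `f : Fin n → ZMod 2` at level `m`. -/
def q {n : ℕ} (f : Fin n → ZMod 2) (m : ℕ) : ZMod 2 × ZMod 2 :=
  cp m (fun j : Fin m => if h : j.1 < n then f ⟨j.1, h⟩ else 0)

lemma q_zero {n : ℕ} (f : Fin n → ZMod 2) : q f 0 = (1, 0) := rfl

lemma q_succ {n : ℕ} (f : Fin n → ZMod 2) (m : ℕ) (h : m < n) :
    q f (m+1) = (f ⟨m, h⟩ * (q f m).1 + (q f m).2, (q f m).1) := by
  have hinit : Fin.init (fun j : Fin (m+1) => if h : j.1 < n then f ⟨j.1, h⟩ else 0)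
      = fun j : Fin m => if h : j.1 < n then f ⟨j.1, h⟩ else 0 := by
    funext j
    simp [Fin.init]
  simp [q, cp, hinit, h]

lemma q_top {n : ℕ} (f : Fin n → ZMod 2) : q f n = cp n f := by
  have : (fun j : Fin n => if h : j.1 < n then f ⟨j.1, h⟩ else 0) = f := by
    funext j; simp
  rw [q, this]

/-- Candidate kernel vector. -/
def xv {n : ℕ} (f : Fin n → ZMod 2) : Fin n → ZMod 2 := fun i => (q f i.1).1

lemma mulVec_path_diag {n : ℕ} (f z : Fin n → ZMod 2) (i : Fin n) :
    ((pathM n + Matrix.diagonal f).mulVec z) i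
      = (if h : i.1 + 1 < n then z ⟨i.1+1, h⟩ else 0)
        + (if h : 0 < i.1 then z ⟨i.1-1, by omega⟩ else 0) + f i * z i := by
  rw [Matrix.add_mulVec, Pi.add_apply, Matrix.mulVec_diagonal]
  congr 1
  show (∑ j, pathM n i j * z j) = _
  have key : ∀ j : Fin n, pathM n i j * z j
      = (if i.1 + 1 = j.1 then z j else 0) + (if j.1 + 1 = i.1 then z j else 0) := by
    intro j
    by_cases h1 : i.1 + 1 = j.1 <;> by_cases h2 : j.1 + 1 = i.1 <;>
      simp [pathM, h1, h2] <;> omega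
  rw [Finset.sum_congr rfl fun j _ => key j, Finset.sum_add_distrib]
  congr 1
  · by_cases h : i.1 + 1 < n
    · have : ∀ j : Fin n, (i.1 + 1 = j.1) ↔ (j = ⟨i.1+1, h⟩) := by
        intro j; rw [Fin.ext_iff]; constructor <;> (intro hh; simp at hh ⊢; omega)
      simp_rw [this]
      simp [Finset.sum_ite_eq', h]
    · rw [dif_neg h, Finset.sum_eq_zero]
      intro j _
      rw [if_neg]
      omega
  · by_cases h : 0 < i.1
    · have : ∀ j : Fin n, (j.1 + 1 = i.1) ↔ (j = ⟨i.1-1, by omega⟩) := by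
        intro j; rw [Fin.ext_iff]; constructor <;> (intro hh; simp at hh ⊢; omega)
      simp_rw [this]
      simp [Finset.sum_ite_eq', h]
    · rw [dif_neg h, Finset.sum_eq_zero]
      intro j _
      rw [if_neg]
      omega

/-- Any kernel vector is a multiple of `xv`. -/
lemma ker_scal {n : ℕ} (f z : Fin n → ZMod 2)
    (hz : (pathM n + Matrix.diagonal f).mulVec z = 0) (hn : 0 < n) :
    ∀ m (h : m < n), z ⟨m, h⟩ = z ⟨0, hn⟩ * (q f m).1 := by
  intro m
  induction m using Nat.strong_induction_on with
  | _ m ih =>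
    intro h
    match m, h with
    | 0, h => simp [q_zero]
    | 1, h =>
      have h0 := congrFun hz ⟨0, by omega⟩
      rw [mulVec_path_diag] at h0
      simp only [Pi.zero_apply] at h0
      rw [dif_pos (by omega : (0:ℕ) + 1 < n), dif_neg (by omega)] at h0
      rw [q_succ f 0 (by omega), q_zero]
      have hz1 : z ⟨1, by omega⟩ = f ⟨0, hn⟩ * z ⟨0, hn⟩ := by
        have : ∀ a b : ZMod 2, a + 0 + b = 0 → a = b := by decide
        exact this _ _ h0
      rw [hz1]
      ring
    | (m+2), h =>
      have hrow := congrFun hz ⟨m+1, by omega⟩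
      rw [mulVec_path_diag] at hrow
      simp only [Pi.zero_apply] at hrow
      rw [dif_pos (by omega : m + 1 + 1 < n), dif_pos (by omega : 0 < m + 1)] at hrow
      have e1 := ih (m+1) (by omega) (by omega)
      have e2 := ih m (by omega) (by omega)
      have hq1 : (q f (m+1)).2 = (q f m).1 := by rw [q_succ f m (by omega)]
      have hstep : z ⟨m+2, h⟩ = z ⟨m, by omega⟩ + f ⟨m+1, by omega⟩ * z ⟨m+1, by omega⟩ := by
        have : ∀ a b c : ZMod 2, a + b + c = 0 → a = b + c := by decide
        exact this _ _ _ hrow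
      rw [q_succ f (m+1) (by omega), hq1]
      rw [hstep, e1, e2]
      ring

lemma mulVec_xv {n : ℕ} (f : Fin n → ZMod 2) (i : Fin n) :
    ((pathM n + Matrix.diagonal f).mulVec (xv f)) i
      = if i.1 = n - 1 then (cp n f).1 else 0 := by
  have hadd : ∀ a : ZMod 2, a + a = 0 := by decide
  rw [mulVec_path_diag]
  have hxv : ∀ m (h : m < n), xv f ⟨m, h⟩ = (q f m).1 := fun m h => rfl
  by_cases hlast : i.1 = n - 1
  · rw [if_pos hlast, dif_neg (by omega)]
    have hqn : (cp n f).1 = (q f n).1 := by rw [q_top]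
    have hstep := q_succ f (n-1) (by omega : n - 1 < n)
    rw [show n - 1 + 1 = n by omega] at hstep
    rw [hqn, hstep]
    by_cases h0 : 0 < i.1
    · rw [dif_pos h0]
      have : (q f (i.1 - 1)).1 = (q f (n-1)).2 := by
        have h2 := q_succ f (i.1-1) (by omega : i.1 - 1 < n)
        rw [show i.1 - 1 + 1 = n - 1 by omega] at h2
        rw [h2]
      rw [hxv, this, hxv]
      have hv : q f i.1 = q f (n-1) := by rw [hlast]
      have hf : f i = f ⟨n-1, by omega⟩ := by
        congr 1
        exact Fin.ext hlast
      rw [hv, hf]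
      ring
    · rw [dif_neg h0]
      have hi0 : i.1 = 0 := by omega
      have : (q f (n-1)).2 = 0 := by
        rw [show n - 1 = 0 by omega, q_zero]
      rw [this, hxv]
      have hv : q f i.1 = q f (n-1) := by rw [hlast]
      have hf : f i = f ⟨n-1, by omega⟩ := by
        congr 1
        exact Fin.ext hlast
      rw [hv, hf]
      ring
  · rw [if_neg hlast, dif_pos (by omega : i.1 + 1 < n)]
    rw [hxv, hxv]
    rw [q_succ f i.1 (by omega)]
    by_cases h0 : 0 < i.1
    · rw [dif_pos h0, hxv]
      have : (q f (i.1 - 1)).1 = (q f i.1).2 := by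
        have h2 := q_succ f (i.1-1) (by omega : i.1 - 1 < n)
        rw [show i.1 - 1 + 1 = i.1 by omega] at h2
        rw [h2]
      rw [this]
      have hfi : f i = f ⟨i.1, by omega⟩ := by congr 1
      rw [← hfi]
      have : ∀ a b c : ZMod 2, (a * b + c) + c + a * b = 0 := by decide
      exact this _ _ _
    · rw [dif_neg h0]
      have hi0 : i.1 = 0 := by omega
      have hq2 : (q f i.1).2 = 0 := by rw [hi0, q_zero]
      rw [hq2]
      have hfi : f i = f ⟨i.1, by omega⟩ := by congr 1
      rw [← hfi]
      have : ∀ a b : ZMod 2, (a * b + 0) + 0 + a * b = 0 := by decide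
      exact this _ _


lemma rank_mulVecLin {n : ℕ} (M : Matrix (Fin n) (Fin n) (ZMod 2)) :
    M.rank + Module.finrank (ZMod 2) (LinearMap.ker M.mulVecLin) = n := by
  rw [Matrix.rank, LinearMap.finrank_range_add_finrank_ker]
  simp

lemma finrank_ker {n : ℕ} (f : Fin n → ZMod 2) :
    Module.finrank (ZMod 2) (LinearMap.ker (pathM n + Matrix.diagonal f).mulVecLin)
      = if (cp n f).1 = 0 then 1 else 0 := by
  rcases Nat.eq_zero_or_pos n with hn | hn
  · subst hn
    rw [if_neg (by rw [show cp 0 f = (1,0) from rfl]; decide)]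
    have h0 : Module.finrank (ZMod 2) (Fin 0 → ZMod 2) = 0 := by simp
    have hle := Submodule.finrank_le (LinearMap.ker (pathM 0 + Matrix.diagonal f).mulVecLin)
    omega
  · have hzeq : ∀ z : Fin n → ZMod 2, (pathM n + Matrix.diagonal f).mulVec z = 0 →
        z = z ⟨0, hn⟩ • xv f := by
      intro z hz
      funext i
      have h1 := ker_scal f z hz hn i.1 i.2
      simp only [Fin.eta] at h1
      rw [h1]
      simp [xv]
    by_cases hc : (cp n f).1 = 0
    · rw [if_pos hc]
      have hxvker : xv f ∈ LinearMap.ker (pathM n + Matrix.diagonal f).mulVecLin := by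
        rw [LinearMap.mem_ker, Matrix.mulVecLin_apply]
        funext i
        rw [mulVec_xv]
        by_cases h : i.1 = n-1 <;> simp [h, hc]
      have hker : LinearMap.ker (pathM n + Matrix.diagonal f).mulVecLin
          = Submodule.span (ZMod 2) {xv f} := by
        apply le_antisymm
        · intro z hz
          rw [LinearMap.mem_ker, Matrix.mulVecLin_apply] at hz
          rw [hzeq z hz]
          exact Submodule.smul_mem _ _ (Submodule.mem_span_singleton_self _)
        · rw [Submodule.span_le, Set.singleton_subset_iff]
          exact hxvker
      rw [hker, finrank_span_singleton]
      intro h0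
      have h1 : xv f ⟨0, hn⟩ = 1 := rfl
      rw [h0, Pi.zero_apply] at h1
      exact zero_ne_one h1
    · rw [if_neg hc]
      have hbot : LinearMap.ker (pathM n + Matrix.diagonal f).mulVecLin = ⊥ := by
        rw [Submodule.eq_bot_iff]
        intro z hz
        rw [LinearMap.mem_ker, Matrix.mulVecLin_apply] at hz
        have hz2 := hzeq z hz
        have hrow := congrFun hz ⟨n-1, by omega⟩
        rw [hz2, Matrix.mulVec_smul] at hrow
        rw [Pi.smul_apply, Pi.zero_apply, mulVec_xv, if_pos rfl, smul_eq_mul] at hrow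
        have hz0 : z ⟨0, hn⟩ = 0 := by
          have h1 : (cp n f).1 = 1 := by
            rcases (show ∀ a : ZMod 2, a = 0 ∨ a = 1 by decide) ((cp n f).1) with h | h
            · exact absurd h hc
            · exact h
          rw [h1, mul_one] at hrow
          exact hrow
        rw [hz2, hz0, zero_smul]
      rw [hbot]
      simp
lemma nu_path {n : ℕ} (f : Fin n → ZMod 2) :
    n - (pathM n + Matrix.diagonal f).rank = if (cp n f).1 = 0 then 1 else 0 := by
  have h1 := rank_mulVecLin (pathM n + Matrix.diagonal f)
  have h2 := finrank_ker f
  by_cases hc : (cp n f).1 = 0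
  · rw [if_pos hc] at h2 ⊢
    omega
  · rw [if_neg hc] at h2 ⊢
    omega

lemma rank_diag {n : ℕ} (f : Fin n → ZMod 2) : (Matrix.diagonal f).rank = wt f := by
  rw [Matrix.rank_diagonal, Fintype.card_subtype]
  rfl

lemma gb_eq (A B d : K) (k : ℕ) :
    gBracket (pathM k) A B d
      = d * (trip A B k).1 + (trip A B k).2.1 + (trip A B k).2.2 := by
  rw [gBracket]
  have key : ∀ f : Fin k → ZMod 2,
      A ^ (Fintype.card (Fin k) - (Matrix.diagonal f).rank) * B ^ (Matrix.diagonal f).rank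
        * d ^ (Fintype.card (Fin k) - (pathM k + Matrix.diagonal f).rank)
      = d * (if cp k f = (0,1) then mono A B f else 0)
        + ((if cp k f = (1,0) then mono A B f else 0)
        + (if cp k f = (1,1) then mono A B f else 0)) := by
    intro f
    rw [Fintype.card_fin, rank_diag, nu_path]
    rcases cp_cases k f with h | h | h <;> rw [h] <;>
      simp [mono, Prod.ext_iff, show (1:ZMod 2) ≠ 0 by decide, show (0:ZMod 2) ≠ 1 by decide] <;>
      ring
  rw [Finset.sum_congr rfl fun f _ => key f, Finset.sum_add_distrib, Finset.sum_add_distrib,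
    ← Finset.mul_sum]
  conv_rhs => rw [add_assoc]
  rfl

lemma gb_rec (A B d : K) (k : ℕ) :
    gBracket (pathM (k+3)) A B d
      = A * gBracket (pathM (k+2)) A B d + (A^2 + A*B) * gBracket (pathM (k+1)) A B d
        - (A+B)^2*(A-B) * gBracket (pathM k) A B d := by
  rw [gb_eq, gb_eq, gb_eq, gb_eq]
  rw [show k+3 = (k+2)+1 from rfl, trip_succ A B (k+2), show k+2 = (k+1)+1 from rfl,
    trip_succ A B (k+1), trip_succ A B k]
  simp only []
  ring

end GBr

/-- Example 3 (recurrence): for `n ≥ 4`,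
`[P_n] = A⁻¹B²[P_{n-1}] + (A+B)(2A-B)[P_{n-2}] - (A²+AB)(A-A⁻¹B²)²[P_{n-4}]`. -/
theorem graphBracket_path_recurrence {K : Type*} [Field K] (A B d : K) (hA : A ≠ 0)
    (n : ℕ) (hn : 4 ≤ n) :
    gBracket (pathM n) A B d =
      A⁻¹ * B ^ 2 * gBracket (pathM (n - 1)) A B d
      + (A + B) * (2 * A - B) * gBracket (pathM (n - 2)) A B d
      - (A ^ 2 + A * B) * (A - A⁻¹ * B ^ 2) ^ 2 * gBracket (pathM (n - 4)) A B d := by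
  obtain ⟨m, rfl⟩ : ∃ m, n = m + 4 := ⟨n - 4, by omega⟩
  rw [show m + 4 - 1 = m + 3 by omega, show m + 4 - 2 = m + 2 by omega,
    show m + 4 - 4 = m by omega]
  have h1 := GBr.gb_rec A B d (m+1)
  have h2 := GBr.gb_rec A B d m
  rw [show m + 1 + 3 = m + 4 from rfl, show m + 1 + 2 = m + 3 from rfl,
    show m + 1 + 1 = m + 2 from rfl] at h1
  rw [h1, h2]
  field_simp
  ring
end

section
/- For all real numbers A, B, d and every n ≥ 0, the path bracket satisfies [P_n](A,B,d) = ((d+2)/3)·(A+B)^n − ((d−1)/(3·2^n))·ε_n + ((d−1)/(3·2^{n−2}))·A·∑_{j=0}^{⌊(n−1)/2⌋} (4A²−3B²)^j·(−B)^{n−2j−1}·C(n,2j+1) + ((d−1)/(3·2^n))·∑_{j=0}^{⌊(n−1)/2⌋} (4A²−3B²)^j·(−B)^{n−2j}·(3·C(n,2j+1) − C(n,2j)), where ε_n = (4A²−3B²)^{n/2} if n is even and ε_n = 0 if n is odd, and C(n,k) denotes the binomial coefficient. -/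
open Matrix BigOperators

namespace GBPath
open Finset

noncomputable def PQ (A B : ℝ) : ℕ → ℝ × ℝ
  | 0 => (1, 0)
  | n + 1 => (-B * (PQ A B n).1 + (4*A^2-3*B^2) * (PQ A B n).2,
              (PQ A B n).1 - B * (PQ A B n).2)

noncomputable def W (A B : ℝ) : ℕ → ℝ × ℝ × ℝ
  | 0 => (1, 0, 0)
  | n + 1 => ((A+B) * (W A B n).2.1,
              A * (W A B n).1 + B * (W A B n).2.2,
              B * (W A B n).1 + A * (W A B n).2.2)

lemma W_closed (A B : ℝ) (n : ℕ) :
    3 * (W A B n).1 * 2^n = 2^n*(A+B)^n + 2*(PQ A B n).1 - 2*A*(PQ A B n).2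
    ∧ 3 * (W A B n).2.1 * 2^n = 2^n*(A+B)^n - (PQ A B n).1 + (4*A-3*B)*(PQ A B n).2
    ∧ 3 * (W A B n).2.2 * 2^n = 2^n*(A+B)^n - (PQ A B n).1 + (3*B-2*A)*(PQ A B n).2 := by
  induction n with
  | zero => norm_num [W, PQ]
  | succ n ih =>
    obtain ⟨h1, h2, h3⟩ := ih
    refine ⟨?_, ?_, ?_⟩ <;> simp only [W, PQ, pow_succ]
    · linear_combination (2*(A+B)) * h2
    · linear_combination (2*A) * h1 + (2*B) * h3
    · linear_combination (2*B) * h1 + (2*A) * h3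

lemma PQ_eq (A B : ℝ) (n : ℕ) :
    (PQ A B n).1 = ∑ j ∈ range (n/2+1),
        (4*A^2-3*B^2)^j * (-B)^(n-2*j) * (n.choose (2*j) : ℝ)
    ∧ (PQ A B n).2 = ∑ j ∈ range ((n+1)/2),
        (4*A^2-3*B^2)^j * (-B)^(n-2*j-1) * (n.choose (2*j+1) : ℝ) := by
  induction n with
  | zero => simp [PQ]
  | succ n ih =>
    obtain ⟨hP, hQ⟩ := ih
    constructor
    · -- P (n+1)
      rw [Finset.sum_range_succ']
      have key : ∀ j ∈ range ((n+1)/2),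
          (4*A^2-3*B^2)^(j+1) * (-B)^(n+1-2*(j+1)) * ((n+1).choose (2*(j+1)) : ℝ)
          = (4*A^2-3*B^2) * ((4*A^2-3*B^2)^j * (-B)^(n-2*j-1) * (n.choose (2*j+1) : ℝ))
            + (4*A^2-3*B^2)^(j+1) * (-B)^(n-2*j-1) * (n.choose (2*j+2) : ℝ) := by
        intro j hj
        rw [Finset.mem_range] at hj
        have h1 : (n+1).choose (2*(j+1)) = n.choose (2*j+1) + n.choose (2*j+2) := by
          rw [show 2*(j+1) = (2*j+1)+1 by ring]
          exact Nat.choose_succ_succ _ _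
        have h2 : n+1-2*(j+1) = n-2*j-1 := by omega
        rw [h1, h2]
        push_cast
        ring
      rw [Finset.sum_congr rfl key, Finset.sum_add_distrib]
      have e1 : ∑ j ∈ range ((n+1)/2),
          (4*A^2-3*B^2) * ((4*A^2-3*B^2)^j * (-B)^(n-2*j-1) * (n.choose (2*j+1) : ℝ))
          = (4*A^2-3*B^2) * (PQ A B n).2 := by
        rw [hQ, Finset.mul_sum]
      have e2 : ∑ j ∈ range ((n+1)/2),
          (4*A^2-3*B^2)^(j+1) * (-B)^(n-2*j-1) * (n.choose (2*j+2) : ℝ)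
          + (4*A^2-3*B^2)^0 * (-B)^(n+1-2*0) * ((n+1).choose (2*0) : ℝ)
          = -B * (PQ A B n).1 := by
        rw [hP, Finset.mul_sum, Finset.sum_range_succ']
        have trim : ∑ j ∈ range ((n+1)/2),
            (4*A^2-3*B^2)^(j+1) * (-B)^(n-2*j-1) * (n.choose (2*j+2) : ℝ)
            = ∑ j ∈ range (n/2),
            (4*A^2-3*B^2)^(j+1) * (-B)^(n-2*j-1) * (n.choose (2*j+2) : ℝ) := by
          rcases Nat.even_or_odd n with h | h
          · obtain ⟨k, rfl⟩ := h
            rw [show (k+k+1)/2 = (k+k)/2 by omega]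
          · obtain ⟨k, rfl⟩ := h
            rw [show (2*k+1+1)/2 = k+1 by omega, show (2*k+1)/2 = k by omega,
              Finset.sum_range_succ]
            have : (2*k+1).choose (2*k+2) = 0 :=
              Nat.choose_eq_zero_of_lt (by omega)
            simp [this]
        rw [trim]
        have congr2 : ∀ j ∈ range (n/2),
            -B * ((4*A^2-3*B^2)^(j+1) * (-B)^(n-2*(j+1)) * (n.choose (2*(j+1)) : ℝ))
            = (4*A^2-3*B^2)^(j+1) * (-B)^(n-2*j-1) * (n.choose (2*j+2) : ℝ) := by
          intro j hj
          rw [Finset.mem_range] at hj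
          have e : (-B)^(n-2*j-1) = (-B)^(n-2*(j+1)) * (-B) := by
            rw [← pow_succ]
            congr 1
            omega
          rw [e, show 2*(j+1) = 2*j+2 by ring]
          ring
        rw [Finset.sum_congr rfl congr2]
        simp
        ring
      rw [add_assoc, e1, e2]
      simp only [PQ]
      ring
    · -- Q (n+1)
      rw [show (n+1+1)/2 = n/2+1 by omega]
      have key : ∀ j ∈ range (n/2+1),
          (4*A^2-3*B^2)^j * (-B)^(n+1-2*j-1) * ((n+1).choose (2*j+1) : ℝ)
          = (4*A^2-3*B^2)^j * (-B)^(n-2*j) * (n.choose (2*j) : ℝ)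
            + (4*A^2-3*B^2)^j * (-B)^(n-2*j) * (n.choose (2*j+1) : ℝ) := by
        intro j hj
        have h1 : (n+1).choose (2*j+1) = n.choose (2*j) + n.choose (2*j+1) :=
          Nat.choose_succ_succ _ _
        have h2 : n+1-2*j-1 = n-2*j := by omega
        rw [h1, h2]
        push_cast
        ring
      rw [Finset.sum_congr rfl key, Finset.sum_add_distrib, ← hP]
      have trim : ∑ j ∈ range (n/2+1),
          (4*A^2-3*B^2)^j * (-B)^(n-2*j) * (n.choose (2*j+1) : ℝ)
          = ∑ j ∈ range ((n+1)/2),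
          (4*A^2-3*B^2)^j * (-B)^(n-2*j) * (n.choose (2*j+1) : ℝ) := by
        rcases Nat.even_or_odd n with h | h
        · obtain ⟨k, rfl⟩ := h
          rw [show (k+k)/2+1 = k+1 by omega, show (k+k+1)/2 = k by omega,
            Finset.sum_range_succ]
          have : (k+k).choose (2*k+1) = 0 :=
            Nat.choose_eq_zero_of_lt (by omega)
          simp [this]
        · obtain ⟨k, rfl⟩ := h
          rw [show (2*k+1)/2+1 = (2*k+1+1)/2 by omega]
      rw [trim]
      have congr2 : ∀ j ∈ range ((n+1)/2),
          (4*A^2-3*B^2)^j * (-B)^(n-2*j) * (n.choose (2*j+1) : ℝ)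
          = -B * ((4*A^2-3*B^2)^j * (-B)^(n-2*j-1) * (n.choose (2*j+1) : ℝ)) := by
        intro j hj
        rw [Finset.mem_range] at hj
        have e : (-B)^(n-2*j) = (-B)^(n-2*j-1) * (-B) := by
          rw [← pow_succ]
          congr 1
          omega
        rw [e]
        ring
      rw [Finset.sum_congr rfl congr2, ← Finset.mul_sum, ← hQ]
      simp only [PQ]
      ring

/-- transfer state: `(u k, u (k-1))` for the continuant `u`. -/
def stt (g : ℕ → ZMod 2) : ℕ → ZMod 2 × ZMod 2
  | 0 => (1, 0)
  | k+1 => (g k * (stt g k).1 + (stt g k).2, (stt g k).1)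

lemma stt_congr {g g' : ℕ → ZMod 2} : ∀ n, (∀ k, k < n → g k = g' k) → stt g n = stt g' n
  | 0, _ => rfl
  | n+1, h => by
    simp only [stt, stt_congr n (fun k hk => h k (by omega)), h n (by omega)]

def ext {n : ℕ} (f : Fin n → ZMod 2) : ℕ → ZMod 2 :=
  fun k => if h : k < n then f ⟨k, h⟩ else 0

lemma ext_snoc_lt {n : ℕ} (f : Fin n → ZMod 2) (a : ZMod 2) {k : ℕ} (hk : k < n) :
    ext (Fin.snoc f a) k = ext f k := by
  have h1 : k < n + 1 := by omega
  have : (⟨k, h1⟩ : Fin (n+1)) = Fin.castSucc ⟨k, hk⟩ := rfl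
  rw [ext, ext, dif_pos h1, dif_pos hk, this, Fin.snoc_castSucc]

lemma ext_snoc_last {n : ℕ} (f : Fin n → ZMod 2) (a : ZMod 2) :
    ext (Fin.snoc f a) n = a := by
  have h1 : n < n + 1 := by omega
  have : (⟨n, h1⟩ : Fin (n+1)) = Fin.last n := rfl
  rw [ext, dif_pos h1, this, Fin.snoc_last]

lemma stt_ext_snoc {n : ℕ} (f : Fin n → ZMod 2) (a : ZMod 2) :
    stt (ext (Fin.snoc f a)) (n+1)
      = (a * (stt (ext f) n).1 + (stt (ext f) n).2, (stt (ext f) n).1) := by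
  have h := stt_congr n (fun k hk => ext_snoc_lt f a hk)
  simp only [stt, h, ext_snoc_last]

noncomputable def wt (A B : ℝ) {n : ℕ} (f : Fin n → ZMod 2) : ℝ :=
  ∏ i, if f i = 0 then A else B

lemma wt_snoc (A B : ℝ) {n : ℕ} (f : Fin n → ZMod 2) (a : ZMod 2) :
    wt A B (Fin.snoc f a) = wt A B f * (if a = 0 then A else B) := by
  rw [wt, wt, Fin.prod_univ_castSucc]
  simp only [Fin.snoc_castSucc, Fin.snoc_last]

noncomputable def V (A B : ℝ) (n : ℕ) (s : ZMod 2 × ZMod 2) : ℝ :=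
  ∑ f : Fin n → ZMod 2, wt A B f * (if stt (ext f) n = s then 1 else 0)

lemma sumZMod2 (F : ZMod 2 → ℝ) : ∑ x : ZMod 2, F x = F 0 + F 1 := by
  have : (Finset.univ : Finset (ZMod 2)) = {0, 1} := by decide
  rw [this, Finset.sum_insert (by decide), Finset.sum_singleton]

lemma sum_snoc {n : ℕ} (F : (Fin (n+1) → ZMod 2) → ℝ) :
    ∑ f : Fin (n+1) → ZMod 2, F f
      = ∑ f : Fin n → ZMod 2, ∑ a : ZMod 2, F (Fin.snoc f a) := by
  rw [← (Fin.snocEquiv (fun _ => ZMod 2)).sum_comp F, Fintype.sum_prod_type,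
    Finset.sum_comm]
  rfl

lemma V_succ (A B : ℝ) (n : ℕ) (s s0 s1 : ZMod 2 × ZMod 2)
    (h0 : ∀ p : ZMod 2 × ZMod 2, (p.2, p.1) = s ↔ p = s0)
    (h1 : ∀ p : ZMod 2 × ZMod 2, ((p.1 + p.2, p.1) : ZMod 2 × ZMod 2) = s ↔ p = s1) :
    V A B (n+1) s = A * V A B n s0 + B * V A B n s1 := by
  rw [V, sum_snoc]
  have step : ∀ f : Fin n → ZMod 2,
      ∑ a : ZMod 2, wt A B (Fin.snoc f a) * (if stt (ext (Fin.snoc f a)) (n+1) = s then (1:ℝ) else 0)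
      = A * (wt A B f * (if stt (ext f) n = s0 then 1 else 0))
        + B * (wt A B f * (if stt (ext f) n = s1 then 1 else 0)) := by
    intro f
    rw [sumZMod2 (fun a => wt A B (Fin.snoc f a) * (if stt (ext (Fin.snoc f a)) (n+1) = s then (1:ℝ) else 0))]
    rw [wt_snoc, wt_snoc, stt_ext_snoc, stt_ext_snoc]
    set p := stt (ext f) n with hp
    have e0 : (if ((0 * p.1 + p.2, p.1) : ZMod 2 × ZMod 2) = s then (1:ℝ) else 0)
        = if p = s0 then 1 else 0 := by
      rw [zero_mul, zero_add]
      exact if_congr (h0 p) rfl rfl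
    have e1 : (if ((1 * p.1 + p.2, p.1) : ZMod 2 × ZMod 2) = s then (1:ℝ) else 0)
        = if p = s1 then 1 else 0 := by
      rw [one_mul]
      exact if_congr (h1 p) rfl rfl
    rw [e0, e1, if_pos rfl, if_neg (by decide : (1 : ZMod 2) ≠ 0)]
    ring
  rw [Finset.sum_congr rfl (fun f _ => step f), Finset.sum_add_distrib,
    ← Finset.mul_sum, ← Finset.mul_sum, V, V]

lemma V_eq (A B : ℝ) (n : ℕ) :
    V A B n (1,0) = (W A B n).1 ∧ V A B n (0,1) = (W A B n).2.1
    ∧ V A B n (1,1) = (W A B n).2.2 ∧ V A B n (0,0) = 0 := by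
  induction n with
  | zero =>
    refine ⟨?_, ?_, ?_, ?_⟩ <;>
      simp [V, W, wt, stt, Fintype.sum_unique]
  | succ n ih =>
    obtain ⟨i1, i2, i3, i4⟩ := ih
    refine ⟨?_, ?_, ?_, ?_⟩
    · rw [V_succ A B n (1,0) (0,1) (0,1) (by decide) (by decide), i2]
      simp only [W]; ring
    · rw [V_succ A B n (0,1) (1,0) (1,1) (by decide) (by decide), i1, i3]
      simp only [W]
    · rw [V_succ A B n (1,1) (1,1) (1,0) (by decide) (by decide), i3, i1]
      simp only [W]; ring
    · rw [V_succ A B n (0,0) (0,0) (0,0) (by decide) (by decide), i4]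
      ring

lemma sum_wt (A B : ℝ) (n : ℕ) :
    ∑ f : Fin n → ZMod 2, wt A B f = (A+B)^n := by
  induction n with
  | zero => simp [wt, Fintype.sum_unique]
  | succ n ih =>
    rw [sum_snoc (fun f => wt A B f)]
    have : ∀ f : Fin n → ZMod 2, ∑ a : ZMod 2, wt A B (Fin.snoc f a) = wt A B f * (A+B) := by
      intro f
      rw [sumZMod2 (fun a => wt A B (Fin.snoc f a)), wt_snoc, wt_snoc,
        if_pos rfl, if_neg (by decide : (1 : ZMod 2) ≠ 0)]
      ring
    rw [Finset.sum_congr rfl (fun f _ => this f), ← Finset.sum_mul, ih, pow_succ]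

lemma key_sum (A B d : ℝ) (n : ℕ) :
    ∑ f : Fin n → ZMod 2, wt A B f * (if (stt (ext f) n).1 = 0 then d else 1)
      = (A+B)^n + (d-1) * (W A B n).2.1 := by
  obtain ⟨-, h2, -, h4⟩ := V_eq A B n
  have hcase : ∀ p : ZMod 2 × ZMod 2, p = (0,0) ∨ p = (0,1) ∨ p = (1,0) ∨ p = (1,1) := by
    decide
  have expand : ∀ f : Fin n → ZMod 2,
      wt A B f * (if (stt (ext f) n).1 = 0 then d else 1)
      = wt A B f + (d-1) * (wt A B f * (if stt (ext f) n = ((0:ZMod 2),(1:ZMod 2)) then 1 else 0))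
        + (d-1) * (wt A B f * (if stt (ext f) n = ((0:ZMod 2),(0:ZMod 2)) then 1 else 0)) := by
    intro f
    rcases hcase (stt (ext f) n) with h | h | h | h <;> rw [h] <;>
      norm_num [Prod.ext_iff, (by decide : (1:ZMod 2) ≠ 0)] <;> ring
  rw [Finset.sum_congr rfl (fun f _ => expand f), Finset.sum_add_distrib,
    Finset.sum_add_distrib, ← Finset.mul_sum, ← Finset.mul_sum, sum_wt]
  rw [show (∑ f : Fin n → ZMod 2, wt A B f * (if stt (ext f) n = ((0:ZMod 2),(1:ZMod 2)) then 1 else 0)) = V A B n (0,1) from rfl]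
  rw [show (∑ f : Fin n → ZMod 2, wt A B f * (if stt (ext f) n = ((0:ZMod 2),(0:ZMod 2)) then 1 else 0)) = V A B n (0,0) from rfl]
  rw [h2, h4]
  ring

end GBPath


namespace GBPath2
open Matrix BigOperators Finset GBPath

lemma ext_at {n : ℕ} (f : Fin n → ZMod 2) (i : Fin n) : ext f i.1 = f i :=
  dif_pos i.2

lemma stt_one (g : ℕ → ZMod 2) : (stt g 1).1 = g 0 := by
  simp [stt]

lemma stt_fst_rec (g : ℕ → ZMod 2) (k : ℕ) :
    (stt g (k+2)).1 = g (k+1) * (stt g (k+1)).1 + (stt g k).1 := rfl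

lemma sum_ite_eq_dite {n : ℕ} (x : Fin n → ZMod 2) (m : ℕ) :
    (∑ j : Fin n, if m = j.1 then x j else 0) = if h : m < n then x ⟨m, h⟩ else 0 := by
  split_ifs with h
  · rw [Finset.sum_eq_single (⟨m, h⟩ : Fin n)]
    · rw [if_pos rfl]
    · intro j _ hj
      rw [if_neg]
      intro e
      exact hj (Fin.ext e.symm)
    · intro habs
      exact absurd (Finset.mem_univ _) habs
  · apply Finset.sum_eq_zero
    intro j _
    rw [if_neg]
    intro e
    exact h (e ▸ j.2)

lemma mulVec_eq {n : ℕ} (f : Fin n → ZMod 2) (x : Fin n → ZMod 2) (i : Fin n) :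
    (pathM n + Matrix.diagonal f).mulVec x i
      = (if h : i.1 + 1 < n then x ⟨i.1 + 1, h⟩ else 0) + f i * x i
        + (if h : 0 < i.1 then x ⟨i.1 - 1, by omega⟩ else 0) := by
  rw [Matrix.add_mulVec, Pi.add_apply, Matrix.mulVec_diagonal]
  have base : (pathM n).mulVec x i = ∑ j : Fin n, pathM n i j * x j := rfl
  have split : ∀ j : Fin n, pathM n i j * x j
      = (if i.1 + 1 = j.1 then x j else 0) + (if j.1 + 1 = i.1 then x j else 0) := by
    intro j
    show (if i.1 + 1 = j.1 ∨ j.1 + 1 = i.1 then (1 : ZMod 2) else 0) * x j = _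
    by_cases h1 : i.1 + 1 = j.1 <;> by_cases h2 : j.1 + 1 = i.1
    · omega
    · simp [h1, h2]
    · simp [h1, h2]
    · simp [h1, h2]
  rw [base, Finset.sum_congr rfl (fun j _ => split j), Finset.sum_add_distrib]
  rw [sum_ite_eq_dite x (i.1+1)]
  have hs2 : (∑ j : Fin n, if j.1 + 1 = i.1 then x j else 0)
      = (if h : 0 < i.1 then x ⟨i.1 - 1, by omega⟩ else 0) := by
    by_cases h : 0 < i.1
    · rw [dif_pos h]
      have h2 : i.1 - 1 < n := by omega
      have hs := sum_ite_eq_dite x (i.1-1)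
      rw [dif_pos h2] at hs
      rw [← hs]
      exact Finset.sum_congr rfl (fun j _ => if_congr (by omega) rfl rfl)
    · rw [dif_neg h]
      exact Finset.sum_eq_zero (fun j _ => if_neg (by omega))
  rw [hs2]
  exact add_right_comm _ _ _

lemma ker_scalar {n : ℕ} (hn : 0 < n) (f x : Fin n → ZMod 2)
    (hx : ∀ i : Fin n, (pathM n + Matrix.diagonal f).mulVec x i = 0) :
    (∀ k (hk : k < n), x ⟨k, hk⟩ = x ⟨0, hn⟩ * (stt (ext f) k).1)
      ∧ x ⟨0, hn⟩ * (stt (ext f) n).1 = 0 := by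
  have add3 : ∀ a b c : ZMod 2, a + b + c = 0 → a = c + b := by decide
  have main : ∀ k (hk : k < n), x ⟨k, hk⟩ = x ⟨0, hn⟩ * (stt (ext f) k).1 := by
    intro k
    induction k using Nat.strong_induction_on with
    | _ k IH =>
      match k with
      | 0 =>
        intro hk
        rw [show (stt (ext f) 0).1 = 1 from rfl, mul_one]
      | 1 =>
        intro hk
        have h0 := hx ⟨0, hn⟩
        rw [mulVec_eq, dif_neg (by omega : ¬ (0:ℕ) < 0),
          dif_pos (show 0 + 1 < n from hk)] at h0
        have h0' : x ⟨1, hk⟩ + f ⟨0, hn⟩ * x ⟨0, hn⟩ + 0 = 0 := h0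
        have e := add3 _ _ _ h0'
        rw [zero_add] at e
        have hx0 : ext f 0 = f ⟨0, hn⟩ := dif_pos hn
        rw [stt_one, hx0]
        exact e.trans (mul_comm _ _)
      | (m+2) =>
        intro hk
        have hrow := hx ⟨m+1, by omega⟩
        rw [mulVec_eq, dif_pos (show (m+1) + 1 < n from hk),
          dif_pos (show 0 < m+1 by omega)] at hrow
        have hm1 : m + 1 < n := by omega
        have hm : m < n := by omega
        have hrow' : x ⟨m+2, hk⟩ + f ⟨m+1, hm1⟩ * x ⟨m+1, hm1⟩ + x ⟨m, hm⟩ = 0 := hrow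
        rw [IH (m+1) (by omega) hm1, IH m (by omega) hm] at hrow'
        have e := add3 _ _ _ hrow'
        have hext : ext f (m+1) = f ⟨m+1, hm1⟩ := dif_pos hm1
        rw [e, stt_fst_rec, hext]
        ring
  refine ⟨main, ?_⟩
  match n, hn, f, x, hx, main with
  | 1, hn, f, x, hx, main =>
    have h0 := hx ⟨0, hn⟩
    rw [mulVec_eq, dif_neg (by omega : ¬ (0:ℕ) < 0), dif_neg (by omega : ¬ 0 + 1 < 1)] at h0
    have h0' : (0 : ZMod 2) + f ⟨0, hn⟩ * x ⟨0, hn⟩ + 0 = 0 := h0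
    rw [zero_add, add_zero] at h0'
    have hx0 : ext f 0 = f ⟨0, hn⟩ := dif_pos hn
    rw [stt_one, hx0, mul_comm]
    exact h0'
  | (m+2), hn, f, x, hx, main =>
    have hrow := hx ⟨m+1, by omega⟩
    rw [mulVec_eq, dif_neg (by omega : ¬ (m+1) + 1 < m+2),
      dif_pos (by omega : 0 < m+1)] at hrow
    have hm1 : m + 1 < m + 2 := by omega
    have hm : m < m + 2 := by omega
    have hrow' : (0 : ZMod 2) + f ⟨m+1, hm1⟩ * x ⟨m+1, hm1⟩ + x ⟨m, hm⟩ = 0 := hrow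
    rw [main (m+1) hm1, main m hm] at hrow'
    have hext : ext f (m+1) = f ⟨m+1, hm1⟩ := dif_pos hm1
    rw [stt_fst_rec, hext]
    have add3' : ∀ w a u v : ZMod 2, 0 + a * (w * u) + w * v = 0 → w * (a * u + v) = 0 := by
      decide
    exact add3' _ _ _ _ hrow'

end GBPath2

namespace GBPath2
open Matrix BigOperators Finset GBPath Module

lemma v_mem {n : ℕ} (f : Fin n → ZMod 2)
    (h : (stt (ext f) n).1 = 0) (i : Fin n) :
    (pathM n + Matrix.diagonal f).mulVec (fun j => (stt (ext f) j.1).1) i = 0 := by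
  rw [mulVec_eq]
  set g := ext f with hg
  have hii : g i.1 = f i := ext_at f i
  by_cases h1 : i.1 + 1 < n <;> by_cases h2 : 0 < i.1
  · rw [dif_pos h1, dif_pos h2]
    obtain ⟨m, hm⟩ : ∃ m, i.1 = m + 1 := ⟨i.1 - 1, by omega⟩
    show (stt g (i.1+1)).1 + f i * (stt g i.1).1 + (stt g (i.1-1)).1 = 0
    rw [hm] at hii ⊢
    rw [Nat.add_sub_cancel, show m+1+1 = m+2 from rfl, stt_fst_rec, ← hii]
    exact (by decide : ∀ a b c : ZMod 2, (a*b + c) + a*b + c = 0) _ _ _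
  · rw [dif_pos h1, dif_neg h2]
    have h0 : i.1 = 0 := by omega
    show (stt g (i.1+1)).1 + f i * (stt g i.1).1 + 0 = 0
    rw [h0] at hii ⊢
    rw [stt_one, show (stt g 0).1 = 1 from rfl, ← hii]
    exact (by decide : ∀ a : ZMod 2, a + a * 1 + 0 = 0) _
  · rw [dif_neg h1, dif_pos h2]
    obtain ⟨m, hm⟩ : ∃ m, i.1 = m + 1 := ⟨i.1 - 1, by omega⟩
    have hn2 : n = m + 2 := by omega
    show (0 : ZMod 2) + f i * (stt g i.1).1 + (stt g (i.1-1)).1 = 0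
    rw [hm] at hii ⊢
    rw [Nat.add_sub_cancel, ← hii]
    rw [hn2, stt_fst_rec] at h
    exact (by decide : ∀ a b : ZMod 2, a + b = 0 → 0 + a + b = 0) _ _ h
  · rw [dif_neg h1, dif_neg h2]
    have h0 : i.1 = 0 := by omega
    have hn1 : n = 1 := by omega
    show (0 : ZMod 2) + f i * (stt g i.1).1 + 0 = 0
    rw [h0] at hii ⊢
    rw [show (stt g 0).1 = 1 from rfl, ← hii]
    rw [hn1, stt_one] at h
    rw [h]
    decide

lemma finrank_ker_eq {n : ℕ} (f : Fin n → ZMod 2) :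
    finrank (ZMod 2) (LinearMap.ker (pathM n + Matrix.diagonal f).mulVecLin)
      = if (stt (ext f) n).1 = 0 then 1 else 0 := by
  rcases Nat.eq_zero_or_pos n with rfl | hn
  · rw [if_neg (show ¬ (stt (ext f) 0).1 = 0 from by
      rw [show (stt (ext f) 0).1 = 1 from rfl]; decide)]
    have h1 : finrank (ZMod 2) (Fin 0 → ZMod 2) = 0 := by
      rw [finrank_fintype_fun_eq_card, Fintype.card_fin]
    have hle := Submodule.finrank_le (LinearMap.ker (pathM 0 + Matrix.diagonal f).mulVecLin)
    omega
  · by_cases h : (stt (ext f) n).1 = 0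
    · rw [if_pos h]
      set v : Fin n → ZMod 2 := fun j => (stt (ext f) j.1).1 with hv
      have hv0 : v ≠ 0 := by
        intro e
        have h00 := congrFun e ⟨0, hn⟩
        rw [hv] at h00
        exact (by decide : ¬ ((1 : ZMod 2) = 0)) h00
      have hker : LinearMap.ker (pathM n + Matrix.diagonal f).mulVecLin
          = Submodule.span (ZMod 2) {v} := by
        apply le_antisymm
        · intro x hx
          rw [LinearMap.mem_ker] at hx
          have hx' : ∀ i, (pathM n + Matrix.diagonal f).mulVec x i = 0 := by
            intro i
            rw [← Matrix.mulVecLin_apply]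
            exact congrFun hx i
          obtain ⟨main, -⟩ := ker_scalar hn f x hx'
          rw [Submodule.mem_span_singleton]
          refine ⟨x ⟨0, hn⟩, funext fun i => ?_⟩
          rw [Pi.smul_apply, smul_eq_mul, hv]
          exact (main i.1 i.2).symm
        · rw [Submodule.span_le, Set.singleton_subset_iff, SetLike.mem_coe,
            LinearMap.mem_ker]
          apply funext
          intro i
          rw [Matrix.mulVecLin_apply]
          exact v_mem f h i
      rw [hker, finrank_span_singleton hv0]
    · rw [if_neg h]
      have hker : LinearMap.ker (pathM n + Matrix.diagonal f).mulVecLin = ⊥ := by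
        rw [LinearMap.ker_eq_bot']
        intro x hx
        have hx' : ∀ i, (pathM n + Matrix.diagonal f).mulVec x i = 0 := by
          intro i
          rw [← Matrix.mulVecLin_apply]
          exact congrFun hx i
        obtain ⟨main, hlast⟩ := ker_scalar hn f x hx'
        have hx0 : x ⟨0, hn⟩ = 0 := by
          rcases mul_eq_zero.mp hlast with h' | h'
          · exact h'
          · exact absurd h' h
        funext i
        rw [show x i = x ⟨i.1, i.2⟩ from rfl, main i.1 i.2, hx0, zero_mul]
        rfl
      rw [hker, finrank_bot]

lemma nullity_eq {n : ℕ} (f : Fin n → ZMod 2) :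
    n - (pathM n + Matrix.diagonal f).rank = if (stt (ext f) n).1 = 0 then 1 else 0 := by
  have hrn := LinearMap.finrank_range_add_finrank_ker (pathM n + Matrix.diagonal f).mulVecLin
  rw [finrank_fintype_fun_eq_card, Fintype.card_fin] at hrn
  have hker := finrank_ker_eq f
  have hrank : (pathM n + Matrix.diagonal f).rank
      = finrank (ZMod 2) (LinearMap.range (pathM n + Matrix.diagonal f).mulVecLin) := rfl
  rw [hrank, ← hker]
  omega

lemma wt_eq (A B : ℝ) {n : ℕ} (f : Fin n → ZMod 2) :
    A ^ (Fintype.card (Fin n) - (Matrix.diagonal f).rank) * B ^ (Matrix.diagonal f).rank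
      = wt A B f := by
  rw [Matrix.rank_diagonal, Fintype.card_fin, wt, Finset.prod_ite, Finset.prod_const,
    Finset.prod_const]
  have hsub : Fintype.card {i // f i ≠ 0} = (Finset.univ.filter (fun i => ¬ f i = 0)).card :=
    Fintype.card_subtype _
  have hzero : (Finset.univ.filter (fun i => f i = 0)).card
      + (Finset.univ.filter (fun i => ¬ f i = 0)).card = n := by
    rw [Finset.card_filter_add_card_filter_not, Finset.card_univ, Fintype.card_fin]
  rw [hsub, show n - (Finset.univ.filter (fun i => ¬ f i = 0)).card
      = (Finset.univ.filter (fun i => f i = 0)).card by omega]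

lemma gBracket_eq (A B d : ℝ) (n : ℕ) :
    gBracket (pathM n) A B d = (A+B)^n + (d-1) * (W A B n).2.1 := by
  rw [gBracket, ← key_sum A B d n]
  apply Finset.sum_congr rfl
  intro f _
  rw [wt_eq]
  congr 1
  rw [Fintype.card_fin, nullity_eq f]
  split_ifs with h
  · exact pow_one d
  · exact pow_zero d

end GBPath2

/-- The closed formula for the bracket of the path `P_n`. -/
theorem graphBracket_path_closed_form (A B d : ℝ) (n : ℕ) :
    gBracket (pathM n) A B d =
      (d + 2) / 3 * (A + B) ^ n
      - (d - 1) / (3 * 2 ^ n) *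
          (if Even n then (4 * A ^ 2 - 3 * B ^ 2) ^ (n / 2) else 0)
      + (d - 1) / (3 * (2 : ℝ) ^ ((n : ℤ) - 2)) * A *
          ∑ j ∈ Finset.range ((n + 1) / 2),
            (4 * A ^ 2 - 3 * B ^ 2) ^ j * (-B) ^ (n - 2 * j - 1)
              * (n.choose (2 * j + 1) : ℝ)
      + (d - 1) / (3 * 2 ^ n) *
          ∑ j ∈ Finset.range ((n + 1) / 2),
            (4 * A ^ 2 - 3 * B ^ 2) ^ j * (-B) ^ (n - 2 * j)
              * (3 * (n.choose (2 * j + 1) : ℝ) - (n.choose (2 * j) : ℝ)) := by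
  rw [GBPath2.gBracket_eq A B d n]
  obtain ⟨hP, hQ⟩ := GBPath.PQ_eq A B n
  obtain ⟨-, hW2, -⟩ := GBPath.W_closed A B n
  set P := (GBPath.PQ A B n).1 with hPdef
  set Q := (GBPath.PQ A B n).2 with hQdef
  set E := (if Even n then (4 * A ^ 2 - 3 * B ^ 2) ^ (n / 2) else (0:ℝ)) with hE
  have h2n : (2:ℝ)^n ≠ 0 := pow_ne_zero _ two_ne_zero
  have hzpow : (2:ℝ)^((n:ℤ)-2) = 2^n / 4 := by
    rw [zpow_sub₀ (two_ne_zero), zpow_natCast]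
    norm_num
  have hS3 : ∑ j ∈ Finset.range ((n + 1) / 2),
        (4 * A ^ 2 - 3 * B ^ 2) ^ j * (-B) ^ (n - 2 * j)
          * (3 * (n.choose (2 * j + 1) : ℝ) - (n.choose (2 * j) : ℝ))
      = -3*B*Q - (P - E) := by
    have e1 : ∀ j ∈ Finset.range ((n+1)/2),
        (4*A^2-3*B^2)^j * (-B)^(n-2*j) * (3*(n.choose (2*j+1):ℝ) - (n.choose (2*j):ℝ))
        = (-3*B) * ((4*A^2-3*B^2)^j * (-B)^(n-2*j-1) * (n.choose (2*j+1):ℝ))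
          - (4*A^2-3*B^2)^j * (-B)^(n-2*j) * (n.choose (2*j):ℝ) := by
      intro j hj
      rw [Finset.mem_range] at hj
      have e : (-B)^(n-2*j) = (-B)^(n-2*j-1) * (-B) := by
        rw [← pow_succ]
        congr 1
        omega
      rw [e]
      ring
    rw [Finset.sum_congr rfl e1, Finset.sum_sub_distrib, ← Finset.mul_sum, ← hQ]
    have e2 : ∑ j ∈ Finset.range ((n+1)/2),
        (4*A^2-3*B^2)^j * (-B)^(n-2*j) * (n.choose (2*j):ℝ) = P - E := by
      rcases Nat.even_or_odd n with he | ho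
      · obtain ⟨k, rfl⟩ := he
        rw [hP, hE, if_pos ⟨k, rfl⟩, show (k+k)/2+1 = k+1 by omega,
          show (k+k+1)/2 = k by omega, Finset.sum_range_succ,
          show k+k-2*k = 0 by omega, pow_zero, show 2*k = k+k by ring,
          Nat.choose_self, show (k+k)/2 = k by omega]
        push_cast
        ring
      · obtain ⟨k, rfl⟩ := ho
        rw [hP, hE, if_neg (by simp [Nat.even_iff, Nat.odd_iff.mp ⟨k, rfl⟩]),
          show (2*k+1+1)/2 = (2*k+1)/2+1 by omega, sub_zero]
    rw [e2]
  rw [hS3, hzpow]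
  have hw : (GBPath.W A B n).2.1 = (2^n*(A+B)^n - P + (4*A-3*B)*Q) / (3*2^n) := by
    field_simp
    linear_combination hW2
  rw [hw, ← hQ]
  field_simp
  ring
end
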